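/- arXiv:0902.4784 — 7 statements merged into one kernel-verified Lean document; each statement's English description precedes it below -/
import Mathlib

section
/- Let ψ : [0, ∞) → ℝ satisfy ψ(0) = 0, and suppose that for some T > 0, β > 0 and a constant C_T ≥ 0 one has |ψ(u) − ψ(v)| ≤ C_T |u − v|^β for all 0 ≤ u, v ≤ T. Then for all γ > 0 and t > 0, sup_{0 ≤ v ≤ T} | t ∫₀^v e^{γ t (s − v)} ψ(s) ds − ψ(v)/γ | ≤ t^{−β} · (C_T / γ^{1+β}) · [Γ(β+1) + sup_{s ≥ 0} s^β e^{−s}], where Γ denotes Euler's Gamma function. -/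
open MeasureTheory Real

/-- If `ψ : [0,∞) → ℝ` satisfies `ψ 0 = 0` and is Hölder of order `β` with
constant `C_T` on `[0,T]`, then for all `γ, t > 0` and all `v ∈ [0,T]`,
`|t ∫₀^v e^{γ t (s−v)} ψ s ds − ψ v / γ| ≤ t^{−β} (C_T/γ^{1+β}) (Γ(β+1) + sup_{s ≥ 0} s^β e^{−s})`. -/
theorem stmt0 (ψ : ℝ → ℝ) (T β C_T : ℝ) (hT : 0 < T) (hβ : 0 < β) (hC : 0 ≤ C_T)
    (hψ0 : ψ 0 = 0)
    (hHolder : ∀ u ∈ Set.Icc (0:ℝ) T, ∀ v ∈ Set.Icc (0:ℝ) T,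
      |ψ u - ψ v| ≤ C_T * |u - v| ^ β)
    (γ t : ℝ) (hγ : 0 < γ) (ht : 0 < t) :
    ∀ v ∈ Set.Icc (0:ℝ) T,
      |t * (∫ s in (0:ℝ)..v, Real.exp (γ * t * (s - v)) * ψ s) - ψ v / γ| ≤
        t ^ (-β) * (C_T / γ ^ (1 + β)) *
          (Real.Gamma (β + 1) + ⨆ s : Set.Ici (0:ℝ), (s : ℝ) ^ β * Real.exp (-(s : ℝ))) := by
  intro v hv
  obtain ⟨hv0, hvT⟩ := hv
  set k := γ * t with hk
  have hk0 : 0 < k := mul_pos hγ ht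
  set M := ⨆ s : Set.Ici (0:ℝ), (s : ℝ) ^ β * Real.exp (-(s : ℝ)) with hMdef
  -- boundedness of s^β e^{-s}
  have hbdd : BddAbove (Set.range fun s : Set.Ici (0:ℝ) => (s : ℝ) ^ β * Real.exp (-(s : ℝ))) := by
    refine ⟨1 + Nat.factorial (Nat.ceil β) , ?_⟩
    rintro x ⟨⟨s, hs⟩, rfl⟩
    simp only [Set.mem_Ici] at hs
    show s ^ β * Real.exp (-s) ≤ 1 + (Nat.factorial (Nat.ceil β) : ℝ)
    rcases le_or_gt s 1 with h1 | h1
    · have h2 : s ^ β ≤ 1 := Real.rpow_le_one hs h1 hβ.le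
      have h3 : Real.exp (-s) ≤ 1 := Real.exp_le_one_iff.2 (by linarith)
      have : (0:ℝ) ≤ (Nat.factorial (Nat.ceil β) : ℝ) := Nat.cast_nonneg _
      nlinarith [Real.exp_pos (-s), Real.rpow_nonneg hs β]
    · have h2 : s ^ β ≤ s ^ (Nat.ceil β : ℕ) := by
        rw [← Real.rpow_natCast s (Nat.ceil β)]
        exact Real.rpow_le_rpow_of_exponent_le h1.le (Nat.le_ceil β)
      have h3 : s ^ (Nat.ceil β : ℕ) ≤ (Nat.factorial (Nat.ceil β) : ℝ) * Real.exp s := by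
        have := Real.pow_div_factorial_le_exp s (by linarith : (0:ℝ) ≤ s) (Nat.ceil β)
        have hf : (0:ℝ) < (Nat.factorial (Nat.ceil β) : ℝ) := by positivity
        calc s ^ (Nat.ceil β : ℕ) = s ^ (Nat.ceil β : ℕ) / (Nat.factorial (Nat.ceil β) : ℝ) * (Nat.factorial (Nat.ceil β) : ℝ) := by
              field_simp
          _ ≤ Real.exp s * (Nat.factorial (Nat.ceil β) : ℝ) := by
              exact mul_le_mul_of_nonneg_right this hf.le
          _ = (Nat.factorial (Nat.ceil β) : ℝ) * Real.exp s := by ring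
      have h4 : s ^ β * Real.exp (-s) ≤ (Nat.factorial (Nat.ceil β) : ℝ) * Real.exp s * Real.exp (-s) := by
        exact mul_le_mul_of_nonneg_right (h2.trans h3) (Real.exp_pos _).le
      rw [mul_assoc, ← Real.exp_add, add_neg_cancel, Real.exp_zero, mul_one] at h4
      linarith
  have hMle : ∀ s : ℝ, 0 ≤ s → s ^ β * Real.exp (-s) ≤ M :=
    fun s hs => le_ciSup hbdd (⟨s, hs⟩ : Set.Ici (0:ℝ))
  have hM0 : 0 ≤ M := by
    have := hMle 0 le_rfl
    rwa [Real.zero_rpow hβ.ne', zero_mul] at this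
  -- continuity of ψ on [0,T]
  have hcont : ContinuousOn ψ (Set.Icc 0 T) := by
    intro x hx
    have h1 : Filter.Tendsto (fun u => ψ u - ψ x) (nhdsWithin x (Set.Icc 0 T)) (nhds 0) := by
      apply squeeze_zero_norm' (a := fun u => C_T * |u - x| ^ β)
      · filter_upwards [self_mem_nhdsWithin] with u hu
        simpa [Real.norm_eq_abs] using hHolder u hu x hx
      · have h2 : Filter.Tendsto (fun u : ℝ => |u - x|) (nhdsWithin x (Set.Icc 0 T)) (nhds 0) := by
          have hc : Continuous fun u : ℝ => |u - x| := by continuity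
          have h := (hc.tendsto x).mono_left
            (nhdsWithin_le_nhds (s := Set.Icc (0:ℝ) T))
          simpa using h
        have h3 := (Real.continuousAt_rpow_const 0 β (Or.inr hβ.le)).tendsto.comp h2
        rw [Real.zero_rpow hβ.ne'] at h3
        have := h3.const_mul C_T
        simpa using this
    have := h1.add (tendsto_const_nhds (x := ψ x))
    simpa [ContinuousWithinAt] using this
  have hsub : Set.Icc (0:ℝ) v ⊆ Set.Icc 0 T := Set.Icc_subset_Icc le_rfl hvT
  have hcontv : ContinuousOn ψ (Set.Icc 0 v) := hcont.mono hsub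
  -- integrability facts
  have hcexp : Continuous fun s : ℝ => Real.exp (k * (s - v)) := by continuity
  have hint1 : IntervalIntegrable (fun s => Real.exp (k * (s - v)) * ψ s) volume 0 v :=
    ((hcexp.continuousOn).mul hcontv).intervalIntegrable_of_Icc hv0
  have hint2 : IntervalIntegrable (fun s => k * Real.exp (k * (s - v)) * (ψ s - ψ v)) volume 0 v := by
    apply ContinuousOn.intervalIntegrable_of_Icc hv0
    exact ((continuous_const.mul hcexp).continuousOn).mul (hcontv.sub continuousOn_const)
  have hcg : ContinuousOn (fun s : ℝ => k * Real.exp (k * (s - v)) * (C_T * (v - s) ^ β))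
      (Set.Icc 0 v) := by
    apply ((continuous_const.mul hcexp).continuousOn).mul
    apply continuousOn_const.mul
    apply ContinuousOn.rpow_const
    · exact (continuous_const.sub continuous_id).continuousOn
    · intro x _; exact Or.inr hβ.le
  have hintg : IntervalIntegrable (fun s : ℝ => k * Real.exp (k * (s - v)) * (C_T * (v - s) ^ β))
      volume 0 v := hcg.intervalIntegrable_of_Icc hv0
  -- ∫₀^v k e^{k(s-v)} = 1 - e^{-kv}
  have hI1 : (∫ s in (0:ℝ)..v, k * Real.exp (k * (s - v))) = 1 - Real.exp (-(k * v)) := by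
    have hd : ∀ s ∈ Set.uIcc (0:ℝ) v, HasDerivAt (fun s => Real.exp (k * (s - v)))
        (k * Real.exp (k * (s - v))) s := by
      intro s _
      have h := (((hasDerivAt_id s).sub_const v).const_mul k).exp
      simpa [mul_comm] using h
    rw [intervalIntegral.integral_eq_sub_of_hasDerivAt hd
      (((continuous_const.mul hcexp)).intervalIntegrable 0 v)]
    simp [mul_comm, mul_sub]
  -- key identity
  set A := ∫ s in (0:ℝ)..v, Real.exp (k * (s - v)) * ψ s with hA
  have hkey : k * A - ψ v =
      (∫ s in (0:ℝ)..v, k * Real.exp (k * (s - v)) * (ψ s - ψ v)) - Real.exp (-(k * v)) * ψ v := by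
    have e1 : (∫ s in (0:ℝ)..v, k * Real.exp (k * (s - v)) * (ψ s - ψ v))
        = (∫ s in (0:ℝ)..v, k * (Real.exp (k * (s - v)) * ψ s))
          - (∫ s in (0:ℝ)..v, k * Real.exp (k * (s - v))) * ψ v := by
      rw [← intervalIntegral.integral_mul_const, ← intervalIntegral.integral_sub]
      · congr 1; ext s; ring
      · exact hint1.const_mul k
      · exact ((continuous_const.mul hcexp).intervalIntegrable 0 v).mul_const (ψ v)
    rw [e1, intervalIntegral.integral_const_mul, hI1]
    ring
  -- bound the integral term
  have hb1 : |∫ s in (0:ℝ)..v, k * Real.exp (k * (s - v)) * (ψ s - ψ v)|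
      ≤ C_T * k ^ (-β) * Real.Gamma (β + 1) := by
    have step1 : |∫ s in (0:ℝ)..v, k * Real.exp (k * (s - v)) * (ψ s - ψ v)|
        ≤ ∫ s in (0:ℝ)..v, |k * Real.exp (k * (s - v)) * (ψ s - ψ v)| := by
      exact intervalIntegral.abs_integral_le_integral_abs hv0
    have step2 : (∫ s in (0:ℝ)..v, |k * Real.exp (k * (s - v)) * (ψ s - ψ v)|)
        ≤ ∫ s in (0:ℝ)..v, k * Real.exp (k * (s - v)) * (C_T * (v - s) ^ β) := by
      apply intervalIntegral.integral_mono_on hv0 hint2.abs hintg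
      intro s hs
      have hs0 : (0:ℝ) ≤ s := hs.1
      have hsv : s ≤ v := hs.2
      have habs : |ψ s - ψ v| ≤ C_T * (v - s) ^ β := by
        have := hHolder s ⟨hs0, hsv.trans hvT⟩ v ⟨hv0, hvT⟩
        rwa [abs_sub_comm s v, abs_of_nonneg (by linarith : (0:ℝ) ≤ v - s)] at this
      calc |k * Real.exp (k * (s - v)) * (ψ s - ψ v)|
          = k * Real.exp (k * (s - v)) * |ψ s - ψ v| := by
            rw [abs_mul, abs_of_nonneg (by positivity : (0:ℝ) ≤ k * Real.exp (k * (s - v)))]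
        _ ≤ k * Real.exp (k * (s - v)) * (C_T * (v - s) ^ β) := by
            exact mul_le_mul_of_nonneg_left habs (by positivity)
    have step3 : (∫ s in (0:ℝ)..v, k * Real.exp (k * (s - v)) * (C_T * (v - s) ^ β))
        = k * C_T * ∫ u in (0:ℝ)..v, u ^ β * Real.exp (-(k * u)) := by
      have comp : (∫ s in (0:ℝ)..v, (v - s) ^ β * Real.exp (-(k * (v - s))))
          = ∫ u in (0:ℝ)..v, u ^ β * Real.exp (-(k * u)) := by
        have h := intervalIntegral.integral_comp_sub_left (a := 0) (b := v)
          (fun u => u ^ β * Real.exp (-(k * u))) v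
        simpa using h
      rw [show (k * C_T * ∫ u in (0:ℝ)..v, u ^ β * Real.exp (-(k * u)))
            = ∫ s in (0:ℝ)..v, k * C_T * ((v - s) ^ β * Real.exp (-(k * (v - s)))) by
          rw [← comp, ← intervalIntegral.integral_const_mul]]
      congr 1; ext s
      rw [show k * (s - v) = -(k * (v - s)) by ring]
      ring
    have step4 : (∫ u in (0:ℝ)..v, u ^ β * Real.exp (-(k * u)))
        ≤ (1 / k) ^ (β + 1) * Real.Gamma (β + 1) := by
      have hintIoi : IntegrableOn (fun u : ℝ => u ^ β * Real.exp (-(k * u))) (Set.Ioi 0) := by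
        have := integrableOn_rpow_mul_exp_neg_mul_rpow (by linarith : (-1:ℝ) < β) one_pos hk0
        apply this.congr_fun ?_ measurableSet_Ioi
        intro x _
        simp only [Real.rpow_one, neg_mul]
      have hval : (∫ u in Set.Ioi (0:ℝ), u ^ β * Real.exp (-(k * u)))
          = (1 / k) ^ (β + 1) * Real.Gamma (β + 1) := by
        have := integral_rpow_mul_exp_neg_mul_Ioi (by linarith : (0:ℝ) < β + 1) hk0
        simpa using this
      rw [← hval, intervalIntegral.integral_of_le hv0]
      apply setIntegral_mono_set hintIoi
      · refine (ae_restrict_iff' measurableSet_Ioi).2 (Filter.Eventually.of_forall fun u hu => ?_)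
        have : (0:ℝ) < u := hu
        positivity
      · exact (Set.Ioc_subset_Ioi_self).eventuallyLE
    have final : k * C_T * ((1 / k) ^ (β + 1) * Real.Gamma (β + 1))
        = C_T * k ^ (-β) * Real.Gamma (β + 1) := by
      rw [one_div, Real.inv_rpow hk0.le, Real.rpow_add hk0, Real.rpow_one,
        Real.rpow_neg hk0.le]
      have hkβ : k ^ β ≠ 0 := (Real.rpow_pos_of_pos hk0 β).ne'
      field_simp
    calc |∫ s in (0:ℝ)..v, k * Real.exp (k * (s - v)) * (ψ s - ψ v)|
        ≤ ∫ s in (0:ℝ)..v, k * Real.exp (k * (s - v)) * (C_T * (v - s) ^ β) :=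
          step1.trans step2
      _ = k * C_T * ∫ u in (0:ℝ)..v, u ^ β * Real.exp (-(k * u)) := step3
      _ ≤ k * C_T * ((1 / k) ^ (β + 1) * Real.Gamma (β + 1)) := by
          exact mul_le_mul_of_nonneg_left step4 (by positivity)
      _ = C_T * k ^ (-β) * Real.Gamma (β + 1) := final
  -- bound the boundary term
  have hb2 : Real.exp (-(k * v)) * |ψ v| ≤ C_T * k ^ (-β) * M := by
    have hψv : |ψ v| ≤ C_T * v ^ β := by
      have := hHolder v ⟨hv0, hvT⟩ 0 ⟨le_rfl, hT.le⟩
      simpa [hψ0, abs_of_nonneg hv0] using this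
    have h1 : Real.exp (-(k * v)) * |ψ v| ≤ Real.exp (-(k * v)) * (C_T * v ^ β) :=
      mul_le_mul_of_nonneg_left hψv (Real.exp_pos _).le
    have h2 : Real.exp (-(k * v)) * (C_T * v ^ β)
        = C_T * k ^ (-β) * ((k * v) ^ β * Real.exp (-(k * v))) := by
      rw [Real.mul_rpow hk0.le hv0, Real.rpow_neg hk0.le]
      field_simp
    have h3 : (k * v) ^ β * Real.exp (-(k * v)) ≤ M := hMle (k * v) (by positivity)
    calc Real.exp (-(k * v)) * |ψ v| ≤ Real.exp (-(k * v)) * (C_T * v ^ β) := h1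
      _ = C_T * k ^ (-β) * ((k * v) ^ β * Real.exp (-(k * v))) := h2
      _ ≤ C_T * k ^ (-β) * M := mul_le_mul_of_nonneg_left h3 (by positivity)
  -- combine
  have hmain : |k * A - ψ v| ≤ C_T * k ^ (-β) * (Real.Gamma (β + 1) + M) := by
    rw [hkey]
    calc |(∫ s in (0:ℝ)..v, k * Real.exp (k * (s - v)) * (ψ s - ψ v)) - Real.exp (-(k * v)) * ψ v|
        ≤ |∫ s in (0:ℝ)..v, k * Real.exp (k * (s - v)) * (ψ s - ψ v)|
          + |Real.exp (-(k * v)) * ψ v| := abs_sub _ _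
      _ ≤ C_T * k ^ (-β) * Real.Gamma (β + 1) + C_T * k ^ (-β) * M := by
          apply add_le_add hb1
          rw [abs_mul, abs_of_nonneg (Real.exp_pos _).le]
          exact hb2
      _ = C_T * k ^ (-β) * (Real.Gamma (β + 1) + M) := by ring
  -- conclude
  have heq : t * A - ψ v / γ = (k * A - ψ v) / γ := by
    rw [hk]; field_simp
  rw [heq, abs_div, abs_of_pos hγ]
  rw [div_le_iff₀ hγ] at *
  calc |k * A - ψ v| ≤ C_T * k ^ (-β) * (Real.Gamma (β + 1) + M) := hmain
    _ = t ^ (-β) * (C_T / γ ^ (1 + β)) * (Real.Gamma (β + 1) + M) * γ := by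
        rw [hk, Real.mul_rpow hγ.le ht.le, Real.rpow_add hγ, Real.rpow_one,
          Real.rpow_neg hγ.le, Real.rpow_neg ht.le]
        have h1 : γ ^ β ≠ 0 := (Real.rpow_pos_of_pos hγ β).ne'
        have h2 : t ^ β ≠ 0 := (Real.rpow_pos_of_pos ht β).ne'
        field_simp
end

section
/- Let q ∈ ℕ, q ≥ 1, and let r : ℝ → ℝ be an even measurable function such that r^q is locally integrable. Set L(t) = ∫₀^t r(u)^q du for t > 0, and assume that L is slowly varying at infinity (i.e. for every c > 0, L(ct)/L(t) → 1 as t → ∞) and that L(t) → ∞ as t → ∞. Then for all 0 ≤ v₁ < v₂, ∫_{t v₁}^{t v₂} ∫_{t v₁}^{t v₂} r(u₁ − u₂)^q du₁ du₂ = 2 ∫₀^{t(v₂ − v₁)} L(u) du for all t > 0, and ∫_{t v₁}^{t v₂} ∫_{t v₁}^{t v₂} r(u₁ − u₂)^q du₁ du₂ / (t L(t)) → 2(v₂ − v₁) as t → ∞. -/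
open MeasureTheory Filter

private lemma uct_aux (h : ℝ → ℝ) (hm : Measurable h)
    (hpt : ∀ u : ℝ, 0 ≤ u → Tendsto (fun x => h (x + u) - h x) atTop (nhds 0))
    (ε : ℝ) (hε : 0 < ε) :
    ∃ X : ℝ, ∀ x ≥ X, ∀ u ∈ Set.Icc (0:ℝ) 1, |h (x + u) - h x| ≤ ε := by
  by_contra hcon
  push_neg at hcon
  choose x hx u hu hgt using fun n : ℕ => hcon n
  have hxtop : Tendsto x atTop atTop :=
    tendsto_atTop_mono hx tendsto_natCast_atTop_atTop
  set y : ℕ → ℝ := fun n => x n + u n with hy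
  have hytop : Tendsto y atTop atTop := by
    apply tendsto_atTop_mono (fun n => ?_) hxtop
    have := (hu n).1; simp only [hy]; linarith
  set E : ℕ → Set ℝ := fun n =>
    {v ∈ Set.Icc (0:ℝ) 2 | ∀ m, n ≤ m →
      |h (x m + v) - h (x m)| ≤ ε/4 ∧ |h (y m + v) - h (y m)| ≤ ε/4} with hE
  have hEmeas : ∀ n, MeasurableSet (E n) := by
    intro n
    have : E n = Set.Icc (0:ℝ) 2 ∩ ⋂ m, ⋂ (_ : n ≤ m),
        ({v : ℝ | |h (x m + v) - h (x m)| ≤ ε/4} ∩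
         {v : ℝ | |h (y m + v) - h (y m)| ≤ ε/4}) := by
      ext v
      simp only [hE, Set.mem_setOf_eq, Set.mem_inter_iff, Set.mem_iInter, Set.sep_setOf,
        Set.mem_setOf_eq]
    rw [this]
    refine measurableSet_Icc.inter (MeasurableSet.iInter fun m => MeasurableSet.iInter fun _ => ?_)
    exact (measurableSet_le ((hm.comp (measurable_const_add _)).sub measurable_const).abs
        measurable_const).inter
      (measurableSet_le ((hm.comp (measurable_const_add _)).sub measurable_const).abs
        measurable_const)
  have hEmono : Monotone E := fun n n' hnn' v hv =>
    ⟨hv.1, fun m hm' => hv.2 m (le_trans hnn' hm')⟩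
  have hEunion : ⋃ n, E n = Set.Icc (0:ℝ) 2 := by
    apply Set.Subset.antisymm
    · exact Set.iUnion_subset fun n v hv => hv.1
    · intro v hv
      have h1 : ∀ᶠ m in atTop, |h (x m + v) - h (x m)| ≤ ε/4 := by
        have ht := ((hpt v hv.1).comp hxtop).eventually
          (Metric.ball_mem_nhds (0:ℝ) (by positivity : (0:ℝ) < ε/4))
        filter_upwards [ht] with m hm'
        simp only [Function.comp, Metric.mem_ball, Real.dist_eq, sub_zero] at hm'
        exact le_of_lt hm'
      have h2 : ∀ᶠ m in atTop, |h (y m + v) - h (y m)| ≤ ε/4 := by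
        have ht := ((hpt v hv.1).comp hytop).eventually
          (Metric.ball_mem_nhds (0:ℝ) (by positivity : (0:ℝ) < ε/4))
        filter_upwards [ht] with m hm'
        simp only [Function.comp, Metric.mem_ball, Real.dist_eq, sub_zero] at hm'
        exact le_of_lt hm'
      obtain ⟨n, hn⟩ := eventually_atTop.mp (h1.and h2)
      exact Set.mem_iUnion.mpr ⟨n, hv, fun m hm' => hn m hm'⟩
  have hmeastend : Tendsto (fun n => volume (E n)) atTop (nhds (ENNReal.ofReal 2)) := by
    have := tendsto_measure_iUnion_atTop (μ := volume) hEmono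
    rwa [hEunion, Real.volume_Icc, show (2:ℝ) - 0 = 2 by ring] at this
  have hlt : (ENNReal.ofReal (3/2)) < ENNReal.ofReal 2 := by
    rw [ENNReal.ofReal_lt_ofReal_iff (by norm_num)]; norm_num
  obtain ⟨n, hn⟩ := (hmeastend.eventually_const_lt hlt).exists
  set C : Set ℝ := (fun w => w + (- u n)) ⁻¹' E n with hC
  have hCmeas : MeasurableSet C := (hEmeas n).preimage (measurable_add_const _)
  have hCvol : volume C = volume (E n) := measure_preimage_add_right volume _ _
  have hBsub : E n ⊆ Set.Icc (0:ℝ) 3 := fun v hv => ⟨hv.1.1, le_trans hv.1.2 (by norm_num)⟩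
  have hCsub : C ⊆ Set.Icc (0:ℝ) 3 := by
    intro w hw
    have h1 : (0:ℝ) ≤ w + -u n := hw.1.1
    have h2 : w + -u n ≤ 2 := hw.1.2
    have := (hu n).1; have := (hu n).2
    constructor <;> linarith
  have hne : (E n ∩ C).Nonempty := by
    by_contra hemp
    rw [Set.not_nonempty_iff_eq_empty] at hemp
    have hdisj : Disjoint (E n) C := Set.disjoint_iff_inter_eq_empty.mpr hemp
    have hunion : volume (E n ∪ C) = volume (E n) + volume C :=
      measure_union hdisj hCmeas
    have hle : volume (E n ∪ C) ≤ ENNReal.ofReal 3 := by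
      have := measure_mono (μ := volume) (Set.union_subset hBsub hCsub)
      rwa [Real.volume_Icc, show (3:ℝ) - 0 = 3 by ring] at this
    have hgt3 : ENNReal.ofReal 3 < volume (E n) + volume C := by
      rw [hCvol]
      calc ENNReal.ofReal 3 = ENNReal.ofReal (3/2) + ENNReal.ofReal (3/2) := by
            rw [← ENNReal.ofReal_add (by norm_num) (by norm_num)]; norm_num
        _ < volume (E n) + volume (E n) := ENNReal.add_lt_add hn hn
    rw [hunion] at hle
    exact absurd hle (not_le.mpr hgt3)
  obtain ⟨w, hwB, hwC⟩ := hne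
  have e1 : |h (x n + w) - h (x n)| ≤ ε/4 := (hwB.2 n le_rfl).1
  have e2 : |h (y n + (w + -u n)) - h (y n)| ≤ ε/4 := (hwC.2 n le_rfl).2
  have hyw : y n + (w + -u n) = x n + w := by simp only [hy]; ring
  rw [hyw] at e2
  have hfin : |h (x n + u n) - h (x n)| ≤ ε/2 := by
    have t1 : |h (x n + u n) - h (x n)| ≤ |h (x n + u n) - h (x n + w)| + |h (x n + w) - h (x n)| :=
      abs_sub_le _ _ _
    have t2 : |h (x n + u n) - h (x n + w)| = |h (x n + w) - h (y n)| := by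
      rw [abs_sub_comm]
    rw [t2] at t1; linarith [e1, e2, t1]
  have := hgt n
  linarith

private lemma potter_aux (h : ℝ → ℝ) (X ε : ℝ) (hε : 0 ≤ ε)
    (hstep : ∀ x ≥ X, ∀ u ∈ Set.Icc (0:ℝ) 1, |h (x + u) - h x| ≤ ε) :
    ∀ x y : ℝ, X ≤ x → x ≤ y → |h y - h x| ≤ ε * (y - x + 2) := by
  have key : ∀ n : ℕ, ∀ x y : ℝ, X ≤ x → x ≤ y → y ≤ x + (n + 1) →
      |h y - h x| ≤ ε * (n + 1) := by
    intro n
    induction n with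
    | zero =>
      intro x y hXx hxy hyb
      have := hstep x hXx (y - x) ⟨by linarith, by push_cast at hyb; linarith⟩
      simpa using this
    | succ n ih =>
      intro x y hXx hxy hyb
      by_cases hc : y ≤ x + 1
      · have := hstep x hXx (y - x) ⟨by linarith, by linarith⟩
        simp only [add_sub_cancel] at this
        calc |h y - h x| ≤ ε * 1 := by simpa using this
          _ ≤ ε * ((n:ℝ) + 1 + 1) := by nlinarith
          _ = ε * (((n+1:ℕ):ℝ) + 1) := by push_cast; ring
      · push_neg at hc
        have h1 : |h y - h (x + 1)| ≤ ε * (n + 1) := by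
          apply ih (x + 1) y (by linarith) (by linarith)
          push_cast at hyb ⊢; linarith
        have h2 : |h (x + 1) - h x| ≤ ε := by
          have := hstep x hXx 1 ⟨by norm_num, le_rfl⟩
          simpa using this
        calc |h y - h x| ≤ |h y - h (x + 1)| + |h (x + 1) - h x| := abs_sub_le _ _ _
          _ ≤ ε * (n + 1) + ε := add_le_add h1 h2
          _ = ε * (((n+1:ℕ):ℝ) + 1) := by push_cast; ring
  intro x y hXx hxy
  obtain ⟨n, hn⟩ : ∃ n : ℕ, y - x ≤ n := exists_nat_ge (y - x)
  -- use smallest convenient n: just use ⌈y-x⌉₊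
  have hceil : y - x ≤ (⌈y - x⌉₊ : ℝ) := Nat.le_ceil _
  have hceil' : (⌈y - x⌉₊ : ℝ) ≤ (y - x) + 1 := by
    have := Nat.ceil_lt_add_one (by linarith : (0:ℝ) ≤ y - x)
    linarith
  have := key ⌈y - x⌉₊ x y hXx hxy (by linarith)
  calc |h y - h x| ≤ ε * (⌈y - x⌉₊ + 1) := this
    _ ≤ ε * (y - x + 2) := by nlinarith

set_option maxHeartbeats 1000000 in
private lemma karamata_aux (L : ℝ → ℝ) (hLc : Continuous L)
    (hslow : ∀ c > 0, Tendsto (fun t => L (c * t) / L t) atTop (nhds 1))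
    (hinf : Tendsto L atTop atTop) :
    Tendsto (fun t => (∫ u in (0:ℝ)..t, L u) / (t * L t)) atTop (nhds 1) := by
  obtain ⟨M₀, hM₀⟩ := eventually_atTop.mp (hinf.eventually_ge_atTop 1)
  set M := max M₀ 1 with hM
  have hMpos : (0:ℝ) < M := lt_of_lt_of_le one_pos (le_max_right _ _)
  have hLM : ∀ s, M ≤ s → 1 ≤ L s := fun s hs => hM₀ s (le_trans (le_max_left _ _) hs)
  set h : ℝ → ℝ := fun x => Real.log (L (Real.exp x)) with hh
  have hhm : Measurable h := Real.measurable_log.comp (hLc.measurable.comp Real.measurable_exp)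
  have hpt : ∀ u : ℝ, 0 ≤ u → Tendsto (fun x => h (x + u) - h x) atTop (nhds 0) := by
    intro u hu
    have h1 : Tendsto (fun x : ℝ => L (Real.exp u * Real.exp x) / L (Real.exp x)) atTop (nhds 1) :=
      (hslow _ (Real.exp_pos u)).comp Real.tendsto_exp_atTop
    have h2 : Tendsto (fun x : ℝ => Real.log (L (Real.exp u * Real.exp x) / L (Real.exp x)))
        atTop (nhds 0) := by
      have := (Real.continuousAt_log one_ne_zero).tendsto.comp h1
      simpa [Function.comp_def] using this
    apply h2.congr'
    filter_upwards [eventually_ge_atTop (Real.log M)] with x hx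
    have hex : M ≤ Real.exp x := by
      calc M = Real.exp (Real.log M) := (Real.exp_log hMpos).symm
        _ ≤ Real.exp x := Real.exp_le_exp.mpr hx
    have hex2 : M ≤ Real.exp u * Real.exp x := by
      nlinarith [Real.one_le_exp hu, Real.exp_pos x]
    have p1 : (0:ℝ) < L (Real.exp x) := lt_of_lt_of_le one_pos (hLM _ hex)
    have p2 : (0:ℝ) < L (Real.exp u * Real.exp x) := lt_of_lt_of_le one_pos (hLM _ hex2)
    rw [Real.log_div (ne_of_gt p2) (ne_of_gt p1)]
    simp only [hh, Real.exp_add, mul_comm]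
  rw [Metric.tendsto_nhds]
  intro ε hε
  set ε₀ := min ε 1 with hε₀
  have hε₀pos : 0 < ε₀ := lt_min hε one_pos
  have hε₀le : ε₀ ≤ 1 := min_le_right _ _
  have hε₀ε : ε₀ ≤ ε := min_le_left _ _
  set δ := ε₀ / 12 with hδ
  have hδpos : 0 < δ := by positivity
  have hδle : δ ≤ 1/12 := by rw [hδ]; linarith
  obtain ⟨X₁, hX₁⟩ := uct_aux h hhm hpt δ hδpos
  set X := max X₁ (Real.log M) with hX
  have hstep : ∀ x ≥ X, ∀ u ∈ Set.Icc (0:ℝ) 1, |h (x + u) - h x| ≤ δ :=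
    fun x hx => hX₁ x (le_trans (le_max_left _ _) hx)
  have hP := potter_aux h X δ hδpos.le hstep
  set T := Real.exp X with hT
  have hTpos : 0 < T := Real.exp_pos X
  have hTM : M ≤ T := by
    rw [hT]
    calc M = Real.exp (Real.log M) := (Real.exp_log hMpos).symm
      _ ≤ Real.exp X := Real.exp_le_exp.mpr (le_max_right _ _)
  have hLT : ∀ s, T ≤ s → 1 ≤ L s := fun s hs => hLM s (le_trans hTM hs)
  -- Potter bound in terms of L
  have hPL : ∀ s t : ℝ, T ≤ s → s ≤ t →
      |Real.log (L t) - Real.log (L s)| ≤ δ * (Real.log t - Real.log s + 2) := by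
    intro s t hTs hst
    have hs0 : 0 < s := lt_of_lt_of_le hTpos hTs
    have ht0 : 0 < t := lt_of_lt_of_le hs0 hst
    have hXs : X ≤ Real.log s := by
      have := Real.log_le_log hTpos hTs
      rwa [hT, Real.log_exp] at this
    have := hP (Real.log s) (Real.log t) hXs (Real.log_le_log hs0 hst)
    simpa [hh, Real.exp_log hs0, Real.exp_log ht0] using this
  -- two-sided ratio bounds
  have hub : ∀ s t : ℝ, T ≤ s → s ≤ t →
      L s ≤ (Real.exp (2*δ) * (L t * t ^ δ)) * s ^ (-δ) := by
    intro s t hTs hst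
    have hs0 : 0 < s := lt_of_lt_of_le hTpos hTs
    have ht0 : 0 < t := lt_of_lt_of_le hs0 hst
    have pLs : (0:ℝ) < L s := lt_of_lt_of_le one_pos (hLT s hTs)
    have pLt : (0:ℝ) < L t := lt_of_lt_of_le one_pos (hLT t (le_trans hTs hst))
    have hb := (abs_le.mp (hPL s t hTs hst)).1
    have e1 : L s ≤ Real.exp (Real.log (L t) + δ * (Real.log t - Real.log s + 2)) := by
      calc L s = Real.exp (Real.log (L s)) := (Real.exp_log pLs).symm
        _ ≤ _ := Real.exp_le_exp.mpr (by linarith)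
    have e2 : Real.exp (Real.log (L t) + δ * (Real.log t - Real.log s + 2))
        = (Real.exp (2*δ) * (L t * t ^ δ)) * s ^ (-δ) := by
      rw [show Real.log (L t) + δ * (Real.log t - Real.log s + 2)
          = 2*δ + (Real.log (L t) + (Real.log t * δ + Real.log s * (-δ))) by ring,
        Real.exp_add, Real.exp_add, Real.exp_add, Real.exp_log pLt,
        ← Real.rpow_def_of_pos ht0, ← Real.rpow_def_of_pos hs0]
      ring
    linarith [e1, e2.le, e2.ge]
  have hlb : ∀ s t : ℝ, T ≤ s → s ≤ t →
      (Real.exp (-(2*δ)) * (L t * t ^ (-δ))) * s ^ δ ≤ L s := by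
    intro s t hTs hst
    have hs0 : 0 < s := lt_of_lt_of_le hTpos hTs
    have ht0 : 0 < t := lt_of_lt_of_le hs0 hst
    have pLs : (0:ℝ) < L s := lt_of_lt_of_le one_pos (hLT s hTs)
    have pLt : (0:ℝ) < L t := lt_of_lt_of_le one_pos (hLT t (le_trans hTs hst))
    have hb := (abs_le.mp (hPL s t hTs hst)).2
    have e1 : Real.exp (Real.log (L t) - δ * (Real.log t - Real.log s + 2)) ≤ L s := by
      calc Real.exp (Real.log (L t) - δ * (Real.log t - Real.log s + 2))
          ≤ Real.exp (Real.log (L s)) := Real.exp_le_exp.mpr (by linarith)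
        _ = L s := Real.exp_log pLs
    have e2 : Real.exp (Real.log (L t) - δ * (Real.log t - Real.log s + 2))
        = (Real.exp (-(2*δ)) * (L t * t ^ (-δ))) * s ^ δ := by
      rw [show Real.log (L t) - δ * (Real.log t - Real.log s + 2)
          = -(2*δ) + (Real.log (L t) + (Real.log t * (-δ) + Real.log s * δ)) by ring,
        Real.exp_add, Real.exp_add, Real.exp_add, Real.exp_log pLt,
        ← Real.rpow_def_of_pos ht0, ← Real.rpow_def_of_pos hs0]
      ring
    linarith [e1, e2.le, e2.ge]
  -- numeric exp bounds
  have hE'lb : 1 - 2*δ ≤ Real.exp (-(2*δ)) := by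
    have := Real.add_one_le_exp (-(2*δ)); linarith
  have hEE' : Real.exp (2*δ) * Real.exp (-(2*δ)) = 1 := by
    rw [← Real.exp_add]; norm_num
  have hEpos : (0:ℝ) < Real.exp (2*δ) := Real.exp_pos _
  have hE'pos : (0:ℝ) < Real.exp (-(2*δ)) := Real.exp_pos _
  have h2δ : (0:ℝ) < 1 - 2*δ := by linarith
  have k1 : Real.exp (2*δ) * (1 - 2*δ) ≤ 1 := by nlinarith
  have hEup : Real.exp (2*δ) / (1 - δ) ≤ 1 + 5*δ := by
    rw [div_le_iff₀ (by linarith)]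
    nlinarith [k1, h2δ, hδpos, hδle, mul_pos hδpos hδpos,
      mul_nonneg (mul_nonneg hδpos.le hδpos.le) hδpos.le,
      mul_le_mul_of_nonneg_left hδle hδpos.le]
  have hElo : 1 - 3*δ ≤ Real.exp (-(2*δ)) / (1 + δ) := by
    rw [le_div_iff₀ (by linarith)]
    nlinarith [hE'lb, sq_nonneg δ, hδpos]
  have hE'le1 : Real.exp (-(2*δ)) ≤ 1 := by
    have : Real.exp (-(2*δ)) ≤ Real.exp 0 := Real.exp_le_exp.mpr (by linarith)
    simpa using this
  -- the constant part
  set CT := ∫ u in (0:ℝ)..T, L u with hCT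
  set K := |CT| + T ^ (δ+1) with hK
  have hKev : ∀ᶠ t : ℝ in atTop, K / t < δ := by
    have hhh : Tendsto (fun t : ℝ => K / t) atTop (nhds 0) :=
      tendsto_const_nhds.div_atTop tendsto_id
    exact hhh.eventually_lt_const hδpos
  filter_upwards [eventually_ge_atTop T, eventually_ge_atTop (1:ℝ), hKev] with t hTt ht1 hKt
  have ht0 : (0:ℝ) < t := lt_of_lt_of_le one_pos ht1
  have hLt1 : (1:ℝ) ≤ L t := hLT t hTt
  have pLt : (0:ℝ) < L t := lt_of_lt_of_le one_pos hLt1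
  have hPp : (0:ℝ) < t * L t := mul_pos ht0 pLt
  -- integrability
  have intL : ∀ a b : ℝ, IntervalIntegrable L volume a b := fun a b => hLc.intervalIntegrable a b
  have intpow : ∀ e : ℝ, IntervalIntegrable (fun u : ℝ => u ^ e) volume T t := by
    intro e
    apply ContinuousOn.intervalIntegrable
    intro u hu
    have hu0 : 0 < u := by
      rcases Set.mem_uIcc.mp hu with h' | h'
      · linarith [h'.1]
      · linarith [h'.1, hTpos]
    exact (Real.continuousAt_rpow_const u e (Or.inl (ne_of_gt hu0))).continuousWithinAt
  have hTd0 : (0:ℝ) ≤ T ^ (δ+1) := Real.rpow_nonneg hTpos.le _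
  have htdle : t ^ (-δ) ≤ 1 := Real.rpow_le_one_of_one_le_of_nonpos ht1 (by linarith)
  have htd0 : (0:ℝ) ≤ t ^ (-δ) := Real.rpow_nonneg ht0.le _
  have hKlt : K < δ * t := by
    rw [div_lt_iff₀ ht0] at hKt
    linarith
  have hCTlt : |CT| < δ * t := by
    rw [hK] at hKlt
    linarith
  have hTdlt : T ^ (δ+1) < δ * t := by
    rw [hK] at hKlt
    linarith [abs_nonneg CT]
  -- upper bound on the tail integral
  have Iup : ∫ u in T..t, L u ≤ Real.exp (2*δ) / (1 - δ) * (t * L t) := by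
    have step1 : ∫ u in T..t, L u ≤
        ∫ u in T..t, (Real.exp (2*δ) * (L t * t ^ δ)) * u ^ (-δ) := by
      apply intervalIntegral.integral_mono_on hTt (intL T t)
        ((intpow (-δ)).const_mul _)
      intro u hu
      exact hub u t hu.1 hu.2
    have step2 : ∫ u in T..t, (Real.exp (2*δ) * (L t * t ^ δ)) * u ^ (-δ)
        = (Real.exp (2*δ) * (L t * t ^ δ)) * ((t ^ (1-δ) - T ^ (1-δ)) / (1-δ)) := by
      rw [intervalIntegral.integral_const_mul, integral_rpow (Or.inl (by linarith : (-1:ℝ) < -δ)),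
        show (-δ+1 : ℝ) = 1-δ by ring]
    have c0 : (0:ℝ) ≤ Real.exp (2*δ) * (L t * t ^ δ) := by
      have := Real.rpow_nonneg ht0.le δ
      positivity
    have htd : t ^ δ * t ^ (1-δ) = t := by
      rw [← Real.rpow_add ht0]
      norm_num
    have hTnn : (0:ℝ) ≤ T ^ (1-δ) := Real.rpow_nonneg hTpos.le _
    have h1δ : (0:ℝ) < 1-δ := by linarith
    have b1 : (Real.exp (2*δ) * (L t * t ^ δ)) * ((t ^ (1-δ) - T ^ (1-δ)) / (1-δ))
        ≤ (Real.exp (2*δ) * (L t * t ^ δ)) * (t ^ (1-δ) / (1-δ)) := by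
      apply mul_le_mul_of_nonneg_left _ c0
      apply div_le_div_of_nonneg_right (by linarith) h1δ.le
    have b2 : (Real.exp (2*δ) * (L t * t ^ δ)) * (t ^ (1-δ) / (1-δ))
        = Real.exp (2*δ) / (1 - δ) * (t * L t) := by
      have expand : (Real.exp (2*δ) * (L t * t ^ δ)) * (t ^ (1-δ) / (1-δ))
          = (Real.exp (2*δ) * (L t * (t ^ δ * t ^ (1-δ)))) / (1-δ) := by ring
      rw [expand, htd]
      ring
    linarith [step1, step2.le, step2.ge, b1, b2.le, b2.ge]
  -- lower bound on the tail integral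
  have Ilo : Real.exp (-(2*δ)) / (1 + δ) * (t * L t) - L t * T ^ (δ+1)
      ≤ ∫ u in T..t, L u := by
    have step1 : ∫ u in T..t, (Real.exp (-(2*δ)) * (L t * t ^ (-δ))) * u ^ δ
        ≤ ∫ u in T..t, L u := by
      apply intervalIntegral.integral_mono_on hTt ((intpow δ).const_mul _) (intL T t)
      intro u hu
      exact hlb u t hu.1 hu.2
    have step2 : ∫ u in T..t, (Real.exp (-(2*δ)) * (L t * t ^ (-δ))) * u ^ δ
        = (Real.exp (-(2*δ)) * (L t * t ^ (-δ))) * ((t ^ (δ+1) - T ^ (δ+1)) / (δ+1)) := by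
      rw [intervalIntegral.integral_const_mul, integral_rpow (Or.inl (by linarith : (-1:ℝ) < δ))]
    have htd2 : t ^ (-δ) * t ^ (δ+1) = t := by
      rw [← Real.rpow_add ht0]
      norm_num
    have b2 : (Real.exp (-(2*δ)) * (L t * t ^ (-δ))) * ((t ^ (δ+1) - T ^ (δ+1)) / (δ+1))
        = Real.exp (-(2*δ)) / (1 + δ) * (t * L t)
          - Real.exp (-(2*δ)) / (1 + δ) * (L t * (t ^ (-δ) * T ^ (δ+1))) := by
      have expand : (Real.exp (-(2*δ)) * (L t * t ^ (-δ))) * ((t ^ (δ+1) - T ^ (δ+1)) / (δ+1))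
          = (Real.exp (-(2*δ)) * (L t * (t ^ (-δ) * t ^ (δ+1)))) / (δ+1)
            - Real.exp (-(2*δ)) / (1 + δ) * (L t * (t ^ (-δ) * T ^ (δ+1))) := by ring
      rw [expand, htd2]
      ring
    have b3 : Real.exp (-(2*δ)) / (1 + δ) * (L t * (t ^ (-δ) * T ^ (δ+1)))
        ≤ L t * T ^ (δ+1) := by
      have hfrac : Real.exp (-(2*δ)) / (1 + δ) ≤ 1 := by
        rw [div_le_one (by linarith)]
        linarith
      have hfrac0 : (0:ℝ) ≤ Real.exp (-(2*δ)) / (1 + δ) := by positivity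
      have hxy : L t * (t ^ (-δ) * T ^ (δ+1)) ≤ L t * T ^ (δ+1) :=
        mul_le_mul_of_nonneg_left (mul_le_of_le_one_left hTd0 htdle) pLt.le
      have hnn : (0:ℝ) ≤ L t * (t ^ (-δ) * T ^ (δ+1)) := by positivity
      calc Real.exp (-(2*δ)) / (1 + δ) * (L t * (t ^ (-δ) * T ^ (δ+1)))
          ≤ 1 * (L t * (t ^ (-δ) * T ^ (δ+1))) := mul_le_mul_of_nonneg_right hfrac hnn
        _ = L t * (t ^ (-δ) * T ^ (δ+1)) := one_mul _
        _ ≤ L t * T ^ (δ+1) := hxy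
    linarith [step1, step2.le, step2.ge, b2.le, b2.ge, b3]
  -- split the integral
  have hsplit : CT + ∫ u in T..t, L u = ∫ u in (0:ℝ)..t, L u :=
    intervalIntegral.integral_add_adjacent_intervals (intL 0 T) (intL T t)
  -- final assembly
  have hCTle : CT ≤ |CT| := le_abs_self CT
  have hCTge : -|CT| ≤ CT := neg_abs_le CT
  have hδt : δ * t ≤ δ * (t * L t) := by
    have h1 : t ≤ t * L t := le_mul_of_one_le_right ht0.le hLt1
    exact mul_le_mul_of_nonneg_left h1 hδpos.le
  have tail_up : ∫ u in T..t, L u ≤ t * L t + 5 * (δ * (t * L t)) := by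
    calc ∫ u in T..t, L u ≤ Real.exp (2*δ) / (1 - δ) * (t * L t) := Iup
      _ ≤ (1 + 5*δ) * (t * L t) := mul_le_mul_of_nonneg_right hEup hPp.le
      _ = t * L t + 5 * (δ * (t * L t)) := by ring
  have tail_lo : t * L t - 3 * (δ * (t * L t)) - L t * T ^ (δ+1) ≤ ∫ u in T..t, L u := by
    have h1 : (1 - 3*δ) * (t * L t) ≤ Real.exp (-(2*δ)) / (1 + δ) * (t * L t) :=
      mul_le_mul_of_nonneg_right hElo hPp.le
    have h2 : (1 - 3*δ) * (t * L t) = t * L t - 3 * (δ * (t * L t)) := by ring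
    linarith [Ilo]
  have hLTd : L t * T ^ (δ+1) ≤ δ * (t * L t) := by
    calc L t * T ^ (δ+1) ≤ L t * (δ * t) :=
          mul_le_mul_of_nonneg_left hTdlt.le pLt.le
      _ = δ * (t * L t) := by ring
  have h6 : 6*δ < ε := by
    rw [hδ]
    linarith
  have hεP : 6 * (δ * (t * L t)) < ε * (t * L t) := by
    have := mul_lt_mul_of_pos_right h6 hPp
    linarith
  have up_all : (∫ u in (0:ℝ)..t, L u) < t * L t + ε * (t * L t) := by
    linarith [hsplit, tail_up, hCTlt, le_abs_self CT, hδt, hεP]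
  have lo_all : t * L t - ε * (t * L t) < ∫ u in (0:ℝ)..t, L u := by
    linarith [hsplit, tail_lo, hCTlt, neg_abs_le CT, hδt, hLTd, hεP]
  rw [Real.dist_eq, abs_lt]
  constructor
  · have h' : (1:ℝ) - ε < (∫ u in (0:ℝ)..t, L u) / (t * L t) := by
      rw [lt_div_iff₀ hPp]
      linarith [lo_all]
    linarith [h']
  · have h' : (∫ u in (0:ℝ)..t, L u) / (t * L t) < 1 + ε := by
      rw [div_lt_iff₀ hPp]
      linarith [up_all]
    linarith [h']

/-- Let `r` be even and measurable with `r^q` locally integrable, and let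
`L t = ∫₀^t r(u)^q du` be slowly varying at infinity with `L t → ∞`. Then for `0 ≤ v₁ < v₂`,
`∫_{tv₁}^{tv₂} ∫_{tv₁}^{tv₂} r(u₁−u₂)^q du₁ du₂ = 2 ∫₀^{t(v₂−v₁)} L u du` for all `t > 0`, and
the double integral, divided by `t L t`, tends to `2(v₂−v₁)` as `t → ∞`. -/
theorem stmt6 (q : ℕ) (hq : 1 ≤ q) (r : ℝ → ℝ) (hmeas : Measurable r)
    (heven : ∀ u, r (-u) = r u)
    (hloc : LocallyIntegrable (fun u => r u ^ q) volume)
    (L : ℝ → ℝ) (hL : ∀ t, L t = ∫ u in (0:ℝ)..t, r u ^ q)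
    (hslow : ∀ c > 0, Tendsto (fun t => L (c * t) / L t) atTop (nhds 1))
    (hinf : Tendsto L atTop atTop)
    (v₁ v₂ : ℝ) (hv₁ : 0 ≤ v₁) (hv₁₂ : v₁ < v₂) :
    (∀ t > 0,
      (∫ u₁ in t * v₁..t * v₂, ∫ u₂ in t * v₁..t * v₂, r (u₁ - u₂) ^ q) =
        2 * ∫ u in (0:ℝ)..(t * (v₂ - v₁)), L u) ∧
    Tendsto
      (fun t =>
        (∫ u₁ in t * v₁..t * v₂, ∫ u₂ in t * v₁..t * v₂, r (u₁ - u₂) ^ q) / (t * L t))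
      atTop (nhds (2 * (v₂ - v₁))) := by
  set f : ℝ → ℝ := fun u => r u ^ q with hf
  have hfint : ∀ a b : ℝ, IntervalIntegrable f volume a b := fun a b =>
    (hloc.integrableOn_isCompact isCompact_uIcc).intervalIntegrable
  have hLcont : Continuous L := by
    have h0 : Continuous fun t : ℝ => ∫ u in (0:ℝ)..t, f u :=
      intervalIntegral.continuous_primitive hfint 0
    exact h0.congr fun t => (hL t).symm
  have hfeven : ∀ u, f (-u) = f u := fun u => by simp only [hf, heven u]
  have hLodd : ∀ x : ℝ, L (-x) = - L x := by
    intro x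
    have h1 : ∫ u in (0:ℝ)..x, f (-u) = ∫ u in -x..-(0:ℝ), f u :=
      intervalIntegral.integral_comp_neg f
    have h2 : ∫ u in (0:ℝ)..x, f (-u) = ∫ u in (0:ℝ)..x, f u :=
      intervalIntegral.integral_congr fun u _ => hfeven u
    have h3 : ∫ u in -x..-(0:ℝ), f u = - ∫ u in -(0:ℝ)..(-x), f u :=
      intervalIntegral.integral_symm _ _
    have h4 : ∫ u in (0:ℝ)..x, f u = - ∫ u in (0:ℝ)..(-x), f u := by
      rw [← h2, h1, show -(0:ℝ) = (0:ℝ) by norm_num, intervalIntegral.integral_symm]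
    rw [hL, hL]
    linarith [h4]
  -- the identity (part 1)
  have part1 : ∀ t : ℝ,
      (∫ u₁ in t * v₁..t * v₂, ∫ u₂ in t * v₁..t * v₂, f (u₁ - u₂)) =
        2 * ∫ u in (0:ℝ)..(t * (v₂ - v₁)), L u := by
    intro t
    set a := t * v₁ with ha
    set b := t * v₂ with hb
    have inner : ∀ u₁ : ℝ, (∫ u₂ in a..b, f (u₁ - u₂)) = L (u₁ - a) + L (b - u₁) := by
      intro u₁
      rw [intervalIntegral.integral_comp_sub_left f u₁]
      have h5 : ∫ x in (u₁ - b)..(u₁ - a), f x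
          = (∫ x in (0:ℝ)..(u₁ - a), f x) - ∫ x in (0:ℝ)..(u₁ - b), f x :=
        (intervalIntegral.integral_interval_sub_left (hfint 0 (u₁ - a)) (hfint 0 (u₁ - b))).symm
      rw [h5, ← hL, ← hL, show u₁ - b = -(b - u₁) by ring, hLodd]
      ring
    have int1 : IntervalIntegrable (fun u₁ => L (u₁ - a)) volume a b :=
      (hLcont.comp (continuous_id.sub continuous_const)).intervalIntegrable a b
    have int2 : IntervalIntegrable (fun u₁ => L (b - u₁)) volume a b :=
      (hLcont.comp (continuous_const.sub continuous_id)).intervalIntegrable a b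
    calc (∫ u₁ in a..b, ∫ u₂ in a..b, f (u₁ - u₂))
        = ∫ u₁ in a..b, (L (u₁ - a) + L (b - u₁)) :=
          intervalIntegral.integral_congr fun u₁ _ => inner u₁
      _ = (∫ u₁ in a..b, L (u₁ - a)) + ∫ u₁ in a..b, L (b - u₁) :=
          intervalIntegral.integral_add int1 int2
      _ = (∫ u in (a - a)..(b - a), L u) + ∫ u in (b - b)..(b - a), L u := by
          rw [intervalIntegral.integral_comp_sub_right L a,
            intervalIntegral.integral_comp_sub_left L b]
      _ = 2 * ∫ u in (0:ℝ)..(t * (v₂ - v₁)), L u := by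
          rw [sub_self, sub_self, show b - a = t * (v₂ - v₁) by rw [ha, hb]; ring]
          ring
  refine ⟨fun t _ => part1 t, ?_⟩
  -- part 2
  set c := v₂ - v₁ with hc
  have hcpos : 0 < c := by rw [hc]; linarith
  have hkar := karamata_aux L hLcont hslow hinf
  have hcomp : Tendsto (fun t : ℝ => (∫ u in (0:ℝ)..(c * t), L u) / (c * t * L (c * t)))
      atTop (nhds 1) := hkar.comp (tendsto_id.const_mul_atTop hcpos)
  have hratio := hslow c hcpos
  have hLev : ∀ᶠ t : ℝ in atTop, 1 ≤ L t := hinf.eventually_ge_atTop 1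
  have hLcev : ∀ᶠ t : ℝ in atTop, 1 ≤ L (c * t) :=
    (tendsto_id.const_mul_atTop hcpos).eventually hLev
  have hmain : Tendsto (fun t : ℝ => (∫ u in (0:ℝ)..(c * t), L u) / (t * L t))
      atTop (nhds c) := by
    have h2 : Tendsto (fun t : ℝ =>
        c * (((∫ u in (0:ℝ)..(c * t), L u) / (c * t * L (c * t))) * (L (c * t) / L t)))
        atTop (nhds (c * (1 * 1))) := ((hcomp.mul hratio).const_mul c)
    rw [show c * (1 * 1) = c by ring] at h2
    apply h2.congr'
    filter_upwards [hLev, hLcev, eventually_gt_atTop (0:ℝ)] with t h1 h1c ht0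
    have hLt : L t ≠ 0 := by linarith
    have hLct : L (c * t) ≠ 0 := by linarith
    field_simp
  have hfinal := hmain.const_mul 2
  rw [show (2:ℝ) * c = 2 * (v₂ - v₁) by rw [hc]] at hfinal
  apply hfinal.congr'
  filter_upwards [eventually_gt_atTop (0:ℝ)] with t ht0
  rw [part1 t, show t * (v₂ - v₁) = c * t by rw [hc]; ring]
  rw [mul_div_assoc]
end

section
/- Let q ∈ ℕ, q ≥ 1, and let r : ℝ → ℝ be an even measurable function such that r^q is locally integrable. Set L(t) = ∫₀^t r(u)^q du for t > 0, and assume that L is slowly varying at infinity and L(t) → ∞ as t → ∞. Then for all 0 ≤ v₁ < v₂ ≤ v₃ < v₄, ∫_{t v₃}^{t v₄} ∫_{t v₁}^{t v₂} r(u₁ − u₂)^q du₁ du₂ = o(t L(t)) as t → ∞, i.e. the ratio of the double integral to t L(t) tends to 0. -/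
open MeasureTheory Filter Asymptotics Set
open scoped ENNReal NNReal

lemma uct01 (h : ℝ → ℝ) (hm : Measurable h)
    (hs : ∀ u : ℝ, Tendsto (fun x => h (x + u) - h x) atTop (nhds 0))
    {ε : ℝ} (hε : 0 < ε) :
    ∀ᶠ x in atTop, ∀ u ∈ Set.Icc (0:ℝ) 1, |h (x + u) - h x| ≤ ε := by
  by_contra hcon
  rw [Filter.not_eventually] at hcon
  have hseq : ∀ n : ℕ, ∃ x, (n:ℝ) ≤ x ∧ ∃ u, u ∈ Set.Icc (0:ℝ) 1 ∧ ε < |h (x + u) - h x| := by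
    intro n
    rcases frequently_atTop.mp hcon (n:ℝ) with ⟨x, hx, hx2⟩
    push_neg at hx2
    rcases hx2 with ⟨u, hu1, hu2⟩
    exact ⟨x, hx, u, hu1, hu2⟩
  choose x hx u hu hbad using hseq
  have hxt : Tendsto x atTop atTop :=
    tendsto_atTop_mono hx tendsto_natCast_atTop_atTop
  have hxut : Tendsto (fun n => x n + u n) atTop atTop :=
    tendsto_atTop_mono (fun n => le_add_of_nonneg_right (hu n).1) hxt
  set μ : Measure ℝ := volume.restrict (Set.Icc (0:ℝ) 2) with hμ
  haveI : IsFiniteMeasure μ := by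
    constructor
    rw [hμ, Measure.restrict_apply_univ, Real.volume_Icc]
    exact ENNReal.ofReal_lt_top
  set f : ℕ → ℝ → ℝ := fun n s => h (x n + s) - h (x n) with hf
  set f' : ℕ → ℝ → ℝ := fun n s => h (x n + u n + s) - h (x n + u n) with hf'
  have hfm : ∀ n, Measurable (f n) := fun n =>
    (hm.comp (measurable_const.add measurable_id)).sub measurable_const
  have hfm' : ∀ n, Measurable (f' n) := fun n =>
    (hm.comp (measurable_const.add measurable_id)).sub measurable_const
  have htend : ∀ s : ℝ, Tendsto (fun n => f n s) atTop (nhds 0) := fun s =>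
    (hs s).comp hxt
  have htend' : ∀ s : ℝ, Tendsto (fun n => f' n s) atTop (nhds 0) := fun s =>
    (hs s).comp hxut
  have htm : TendstoInMeasure μ f atTop (0 : ℝ → ℝ) :=
    tendstoInMeasure_of_tendsto_ae (fun n => (hfm n).aestronglyMeasurable)
      (ae_of_all _ fun s => by simpa using htend s)
  have htm' : TendstoInMeasure μ f' atTop (0 : ℝ → ℝ) :=
    tendstoInMeasure_of_tendsto_ae (fun n => (hfm' n).aestronglyMeasurable)
      (ae_of_all _ fun s => by simpa using htend' s)
  have h1 : ∀ᶠ n in atTop, μ {s | ε/2 ≤ dist (f n s) 0} < 1/4 :=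
    (tendstoInMeasure_iff_dist.mp htm (ε/2) (by positivity)).eventually_lt_const (by norm_num)
  have h2 : ∀ᶠ n in atTop, μ {s | ε/2 ≤ dist (f' n s) 0} < 1/4 :=
    (tendstoInMeasure_iff_dist.mp htm' (ε/2) (by positivity)).eventually_lt_const (by norm_num)
  rcases (h1.and h2).exists with ⟨n, hn1, hn2⟩
  set B1 : Set ℝ := {s | ε/2 ≤ dist (f n s) 0} with hB1
  set B2 : Set ℝ := {s | ε/2 ≤ dist (f' n s) 0} with hB2
  have hB1m : MeasurableSet B1 :=
    measurableSet_le measurable_const ((hfm n).dist measurable_const)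
  have hB2m : MeasurableSet B2 :=
    measurableSet_le measurable_const ((hfm' n).dist measurable_const)
  have key : ∃ s ∈ Set.Icc (u n) 2, s ∉ B1 ∧ (s - u n) ∉ B2 := by
    by_contra hk
    push_neg at hk
    have hsub : Set.Icc (u n) 2 ⊆ (B1 ∩ Set.Icc 0 2) ∪ ((fun s => s - u n) ⁻¹' (B2 ∩ Set.Icc 0 2)) := by
      intro s hs'
      have h02 : s ∈ Set.Icc (0:ℝ) 2 := ⟨le_trans (hu n).1 hs'.1, hs'.2⟩
      rcases Classical.em (s ∈ B1) with hB | hB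
      · exact Or.inl ⟨hB, h02⟩
      · refine Or.inr ⟨hk s hs' hB, ?_⟩
        show s - u n ∈ Set.Icc (0:ℝ) 2
        rw [Set.mem_Icc]
        constructor
        · linarith [hs'.1]
        · linarith [hs'.2, (hu n).1]
    have hvol : volume (Set.Icc (u n) 2) ≤
        volume (B1 ∩ Set.Icc 0 2) + volume ((fun s => s - u n) ⁻¹' (B2 ∩ Set.Icc 0 2)) :=
      le_trans (measure_mono hsub) (measure_union_le _ _)
    have e1 : volume (B1 ∩ Set.Icc 0 2) = μ B1 := by
      rw [hμ, Measure.restrict_apply hB1m]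
    have e2 : volume ((fun s => s - u n) ⁻¹' (B2 ∩ Set.Icc 0 2)) = μ B2 := by
      have : volume ((fun s => s - u n) ⁻¹' (B2 ∩ Set.Icc 0 2)) = volume (B2 ∩ Set.Icc 0 2) := by
        simp only [sub_eq_add_neg]
        exact measure_preimage_add_right volume (-u n) _
      rw [this, hμ, Measure.restrict_apply hB2m]
    have hlen : (1:ℝ≥0∞) ≤ volume (Set.Icc (u n) 2) := by
      rw [Real.volume_Icc]
      rw [show (1:ℝ≥0∞) = ENNReal.ofReal 1 by simp]
      exact ENNReal.ofReal_le_ofReal (by linarith [(hu n).2])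
    rw [e1, e2] at hvol
    have h44 : μ B1 + μ B2 < 1/4 + 1/4 := ENNReal.add_lt_add hn1 hn2
    have hfalse : (1:ℝ≥0∞) < 1/4 + 1/4 := lt_of_le_of_lt (le_trans hlen hvol) h44
    have hle : (1:ℝ≥0∞)/4 + 1/4 ≤ 1 := by
      rw [one_div]
      have h4 : (4:ℝ≥0∞)⁻¹ ≤ 2⁻¹ := ENNReal.inv_le_inv.mpr (by norm_num)
      calc (4:ℝ≥0∞)⁻¹ + 4⁻¹ ≤ 2⁻¹ + 2⁻¹ := add_le_add h4 h4
      _ = 1 := ENNReal.inv_two_add_inv_two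
    exact absurd hfalse (not_lt.mpr hle)
  rcases key with ⟨s, hs', hsB1, hsB2⟩
  have e1 : |f n s| < ε/2 := by
    have := hsB1
    rw [hB1] at this
    simp only [Set.mem_setOf_eq, Real.dist_0_eq_abs, not_le] at this
    exact this
  have e2 : |f' n (s - u n)| < ε/2 := by
    have := hsB2
    rw [hB2] at this
    simp only [Set.mem_setOf_eq, Real.dist_0_eq_abs, not_le] at this
    exact this
  have harg : x n + u n + (s - u n) = x n + s := by ring
  have hdecomp : h (x n + u n) - h (x n) = f n s - f' n (s - u n) := by
    rw [hf, hf']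
    simp only
    rw [harg]
    ring
  have : |h (x n + u n) - h (x n)| < ε := by
    rw [hdecomp]
    calc |f n s - f' n (s - u n)| ≤ |f n s| + |f' n (s - u n)| := abs_sub _ _
    _ < ε/2 + ε/2 := add_lt_add e1 e2
    _ = ε := by ring
  exact absurd this (not_lt.mpr (le_of_lt (hbad n)))


lemma uct_chain (h : ℝ → ℝ) (hm : Measurable h)
    (hs : ∀ u : ℝ, Tendsto (fun x => h (x + u) - h x) atTop (nhds 0)) :
    ∀ n : ℕ, ∀ ε : ℝ, 0 < ε → ∀ᶠ x in atTop, ∀ u ∈ Set.Icc (0:ℝ) (n:ℝ), |h (x + u) - h x| ≤ ε := by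
  intro n
  induction n with
  | zero =>
    intro ε hε
    filter_upwards with x u hu
    have hu0 : u = 0 := le_antisymm (by simpa using hu.2) hu.1
    simp [hu0]
    linarith
  | succ n ih =>
    intro ε hε
    have A := ih (ε/2) (by positivity)
    have B := uct01 h hm hs (show (0:ℝ) < ε/2 by positivity)
    have B' : ∀ᶠ x : ℝ in atTop, ∀ u ∈ Set.Icc (0:ℝ) 1,
        |h (x + (n:ℝ) + u) - h (x + (n:ℝ))| ≤ ε/2 :=
      (tendsto_atTop_add_const_right atTop (n:ℝ) tendsto_id).eventually B
    filter_upwards [A, B'] with x hA hB u hu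
    rcases le_or_gt u (n:ℝ) with hun | hun
    · have := hA u ⟨hu.1, hun⟩
      linarith
    · have h1 := hA (n:ℝ) ⟨Nat.cast_nonneg n, le_refl _⟩
      have h2 := hB (u - (n:ℝ)) ⟨by linarith, by push_cast at hu ⊢; linarith [hu.2]⟩
      rw [show x + (n:ℝ) + (u - (n:ℝ)) = x + u by ring] at h2
      calc |h (x+u) - h x| ≤ |h (x+u) - h (x + (n:ℝ))| + |h (x + (n:ℝ)) - h x| :=
        abs_sub_le _ _ _
      _ ≤ ε/2 + ε/2 := add_le_add h2 h1
      _ = ε := by ring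

lemma uct_symm (h : ℝ → ℝ) (hm : Measurable h)
    (hs : ∀ u : ℝ, Tendsto (fun x => h (x + u) - h x) atTop (nhds 0))
    (M : ℝ) {ε : ℝ} (hε : 0 < ε) :
    ∀ᶠ x in atTop, ∀ u : ℝ, |u| ≤ M → |h (x + u) - h x| ≤ ε := by
  obtain ⟨n, hn⟩ := exists_nat_ge M
  obtain ⟨X, hX⟩ := eventually_atTop.mp (uct_chain h hm hs n ε hε)
  rw [eventually_atTop]
  refine ⟨X + n, fun x hx u hu => ?_⟩
  obtain ⟨hu1, hu2⟩ := abs_le.mp hu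
  rcases le_or_gt 0 u with h0 | h0
  · exact hX x (by linarith) u ⟨h0, by linarith⟩
  · have h1 := hX (x + u) (by linarith) (-u) ⟨by linarith, by linarith⟩
    rw [show x + u + -u = x by ring] at h1
    rw [abs_sub_comm]
    exact h1

lemma potter_h (h : ℝ → ℝ) (hm : Measurable h)
    (hs : ∀ u : ℝ, Tendsto (fun x => h (x + u) - h x) atTop (nhds 0)) :
    ∃ X : ℝ, ∀ y, X ≤ y → ∀ d : ℝ, 0 ≤ d → |h (y + d) - h y| ≤ (d + 1) * (1/2) := by
  obtain ⟨X, hX⟩ := eventually_atTop.mp (uct01 h hm hs (show (0:ℝ) < 1/2 by norm_num))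
  refine ⟨X, ?_⟩
  have claim : ∀ n : ℕ, ∀ y, X ≤ y → ∀ d : ℝ, (n:ℝ) ≤ d → d ≤ (n:ℝ) + 1 →
      |h (y + d) - h y| ≤ ((n:ℝ) + 1) * (1/2) := by
    intro n
    induction n with
    | zero =>
      intro y hy d h0 h1
      have := hX y hy d ⟨by exact_mod_cast h0, by exact_mod_cast (by simpa using h1)⟩
      push_cast
      linarith
    | succ n ih =>
      intro y hy d h0 h1
      have e1 := hX y hy 1 ⟨zero_le_one, le_refl 1⟩
      have e2 := ih (y+1) (by linarith) (d-1) (by push_cast at h0 ⊢; linarith)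
        (by push_cast at h1 ⊢; linarith)
      rw [show y + 1 + (d - 1) = y + d by ring] at e2
      have e3 := abs_sub_le (h (y+d)) (h (y+1)) (h y)
      push_cast at e2 ⊢
      linarith
  intro y hy d hd
  have h0 := Nat.floor_le hd
  have h1 := (Nat.lt_floor_add_one d).le
  have h2 := claim ⌊d⌋₊ y hy d h0 h1
  have : ((⌊d⌋₊:ℝ) + 1) * (1/2) ≤ (d + 1) * (1/2) := by linarith
  linarith

section Lfacts
variable {L : ℝ → ℝ}

lemma hm_log (hLc : Continuous L) :
    Measurable (fun x => Real.log (L (Real.exp x))) :=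
  Real.measurable_log.comp (hLc.measurable.comp Real.measurable_exp)

lemma hs_log (hslow : ∀ c : ℝ, c > 0 → Tendsto (fun t => L (c * t) / L t) atTop (nhds 1))
    (hinf : Tendsto L atTop atTop) :
    ∀ u : ℝ, Tendsto (fun x => Real.log (L (Real.exp (x + u))) - Real.log (L (Real.exp x)))
      atTop (nhds 0) := by
  intro u
  have h1 : Tendsto (fun t => L (Real.exp u * t) / L t) atTop (nhds 1) :=
    hslow _ (Real.exp_pos u)
  have h2 : Tendsto (fun t => Real.log (L (Real.exp u * t) / L t)) atTop (nhds 0) := by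
    have := (Real.continuousAt_log (by norm_num : (1:ℝ) ≠ 0)).tendsto.comp h1
    simpa [Real.log_one, Function.comp_def] using this
  have h3 : Tendsto (fun x => Real.log (L (Real.exp u * Real.exp x) / L (Real.exp x)))
      atTop (nhds 0) := h2.comp Real.tendsto_exp_atTop
  apply h3.congr'
  have ev1 : ∀ᶠ x : ℝ in atTop, (1:ℝ) ≤ L (Real.exp x) :=
    Real.tendsto_exp_atTop.eventually (hinf.eventually_ge_atTop 1)
  have ev2 : ∀ᶠ x : ℝ in atTop, (1:ℝ) ≤ L (Real.exp (x + u)) :=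
    (tendsto_atTop_add_const_right atTop u tendsto_id).eventually ev1
  filter_upwards [ev1, ev2] with x hx1 hx2
  have e1 : Real.exp u * Real.exp x = Real.exp (x + u) := by
    rw [Real.exp_add]; ring
  rw [e1, Real.log_div (by linarith) (by linarith)]

lemma unif_ratio (hLc : Continuous L)
    (hslow : ∀ c : ℝ, c > 0 → Tendsto (fun t => L (c * t) / L t) atTop (nhds 1))
    (hinf : Tendsto L atTop atTop)
    (a b : ℝ) (ha : 0 < a) (hab : a ≤ b) {ε : ℝ} (hε : 0 < ε) :
    ∀ᶠ t in atTop, 0 < L t ∧ ∀ s, t * a ≤ s → s ≤ t * b → |L s - L t| ≤ ε * L t := by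
  have hε' : 0 < Real.log (1 + ε) := Real.log_pos (by linarith)
  set M := |Real.log a| + |Real.log b| + 1 with hM
  obtain ⟨X, hX⟩ := eventually_atTop.mp
    (uct_symm _ (hm_log hLc) (hs_log hslow hinf) M hε')
  obtain ⟨T₀, hT₀⟩ := eventually_atTop.mp (hinf.eventually_ge_atTop 1)
  rw [eventually_atTop]
  refine ⟨max (max T₀ (T₀ / a)) (max (Real.exp X) 1), fun t ht => ?_⟩
  have ht1 : T₀ ≤ t := le_trans (le_trans (le_max_left _ _) (le_max_left _ _)) ht
  have ht2' : T₀ / a ≤ t := le_trans (le_trans (le_max_right _ _) (le_max_left _ _)) ht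
  have ht3 : Real.exp X ≤ t := le_trans (le_trans (le_max_left _ _) (le_max_right _ _)) ht
  have ht4 : (1:ℝ) ≤ t := le_trans (le_trans (le_max_right _ _) (le_max_right _ _)) ht
  have tpos : 0 < t := by linarith
  have ht2 : T₀ ≤ t * a := by
    rw [div_le_iff₀ ha] at ht2'; linarith [ht2']
  have hLt : 1 ≤ L t := hT₀ t ht1
  refine ⟨by linarith, fun s hs1 hs2 => ?_⟩
  have hspos : 0 < s := lt_of_lt_of_le (by positivity) hs1
  have hLs : 1 ≤ L s := hT₀ s (le_trans ht2 hs1)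
  set u := Real.log s - Real.log t with hu
  have hloga : Real.log a ≤ u := by
    have h' : Real.log (t * a) ≤ Real.log s := Real.log_le_log (by positivity) hs1
    rw [Real.log_mul (ne_of_gt tpos) (ne_of_gt ha)] at h'
    rw [hu]; linarith
  have hlogb : u ≤ Real.log b := by
    have h' : Real.log s ≤ Real.log (t * b) := Real.log_le_log hspos hs2
    rw [Real.log_mul (ne_of_gt tpos) (ne_of_gt (by linarith : (0:ℝ) < b))] at h'
    rw [hu]; linarith
  have hMu : |u| ≤ M := by
    rw [abs_le, hM]
    constructor
    · linarith [neg_abs_le (Real.log a), hloga, abs_nonneg (Real.log b)]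
    · linarith [le_abs_self (Real.log b), hlogb, abs_nonneg (Real.log a)]
  have hXt : X ≤ Real.log t := (Real.le_log_iff_exp_le tpos).mpr ht3
  have key := hX (Real.log t) hXt u hMu
  rw [show Real.log t + u = Real.log s by rw [hu]; ring] at key
  rw [Real.exp_log hspos, Real.exp_log tpos] at key
  obtain ⟨k1, k2⟩ := abs_le.mp key
  have hLspos : (0:ℝ) < L s := by linarith
  have hLtpos : (0:ℝ) < L t := by linarith
  have up : L s ≤ L t * (1 + ε) := by
    have h' : Real.log (L s) ≤ Real.log (L t * (1 + ε)) := by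
      rw [Real.log_mul hLtpos.ne' (by linarith)]
      linarith
    exact (Real.log_le_log_iff hLspos (by positivity)).mp h'
  have lo : L t ≤ L s * (1 + ε) := by
    have h' : Real.log (L t) ≤ Real.log (L s * (1 + ε)) := by
      rw [Real.log_mul hLspos.ne' (by linarith)]
      linarith
    exact (Real.log_le_log_iff hLtpos (by positivity)).mp h'
  rw [abs_le]
  constructor
  · nlinarith [mul_pos hε hLtpos, sq_nonneg ε, mul_pos hLspos hε]
  · nlinarith [mul_pos hε hLtpos]

lemma potterL (hLc : Continuous L)
    (hslow : ∀ c : ℝ, c > 0 → Tendsto (fun t => L (c * t) / L t) atTop (nhds 1))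
    (hinf : Tendsto L atTop atTop) :
    ∃ T₁ : ℝ, 1 ≤ T₁ ∧ (∀ s, T₁ ≤ s → 1 ≤ L s) ∧
      ∀ t s, T₁ ≤ s → s ≤ t → L s ≤ 3 * (L t * (t / s) ^ (2⁻¹:ℝ)) := by
  obtain ⟨X, hX⟩ := potter_h _ (hm_log hLc) (hs_log hslow hinf)
  obtain ⟨T₀, hT₀⟩ := eventually_atTop.mp (hinf.eventually_ge_atTop 1)
  refine ⟨max (max T₀ (Real.exp X)) 1, le_max_right _ _, ?_, ?_⟩
  · intro s hs
    exact hT₀ s (le_trans (le_trans (le_max_left _ _) (le_max_left _ _)) hs)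
  · intro t s hs hst
    have hs1 : (1:ℝ) ≤ s := le_trans (le_max_right _ _) hs
    have hspos : 0 < s := by linarith
    have htpos : 0 < t := by linarith
    have hLs : 1 ≤ L s := hT₀ s (le_trans (le_trans (le_max_left _ _) (le_max_left _ _)) hs)
    have hLt : 1 ≤ L t := hT₀ t (le_trans (le_trans (le_trans (le_max_left _ _) (le_max_left _ _)) hs) hst)
    have hd : (0:ℝ) ≤ Real.log t - Real.log s := by
      linarith [Real.log_le_log hspos hst]
    have hy : X ≤ Real.log s := by
      have : Real.exp X ≤ s := le_trans (le_trans (le_max_right _ _) (le_max_left _ _)) hs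
      exact (Real.le_log_iff_exp_le hspos).mpr this
    have key := hX (Real.log s) hy (Real.log t - Real.log s) hd
    rw [show Real.log s + (Real.log t - Real.log s) = Real.log t by ring] at key
    rw [Real.exp_log hspos, Real.exp_log htpos] at key
    have k1 : Real.log (L s) ≤ Real.log (L t) + (Real.log t - Real.log s + 1) * (1/2) := by
      have := (abs_le.mp key).1
      linarith
    have e1 : L s = Real.exp (Real.log (L s)) := (Real.exp_log (by linarith)).symm
    rw [e1]
    calc Real.exp (Real.log (L s))
        ≤ Real.exp (Real.log (L t) + (Real.log t - Real.log s + 1) * (1/2)) :=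
          Real.exp_le_exp.mpr k1
      _ = L t * Real.exp (Real.log (t / s) * 2⁻¹) * Real.exp (1/2) := by
          rw [Real.log_div (ne_of_gt htpos) (ne_of_gt hspos)]
          rw [show Real.log (L t) + (Real.log t - Real.log s + 1) * (1/2)
            = Real.log (L t) + (Real.log t - Real.log s) * 2⁻¹ + 1/2 by ring]
          rw [Real.exp_add, Real.exp_add, Real.exp_log (by linarith)]
      _ = L t * (t / s) ^ (2⁻¹:ℝ) * Real.exp (1/2) := by
          rw [← Real.rpow_def_of_pos (by positivity)]
      _ ≤ 3 * (L t * (t / s) ^ (2⁻¹:ℝ)) := by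
          have he : Real.exp (1/2) ≤ 3 := by
            calc Real.exp (1/2) ≤ Real.exp 1 := Real.exp_le_exp.mpr (by norm_num)
            _ ≤ 3 := by linarith [Real.exp_one_lt_d9]
          have hpos : (0:ℝ) < L t * (t / s) ^ (2⁻¹:ℝ) := by
            have : (0:ℝ) < (t / s) ^ (2⁻¹:ℝ) := Real.rpow_pos_of_pos (by positivity) _
            positivity
          nlinarith [Real.exp_pos (1/2:ℝ)]

end Lfacts

set_option maxHeartbeats 2000000 in
lemma karamata {L : ℝ → ℝ} (hLc : Continuous L)
    (hslow : ∀ c : ℝ, c > 0 → Tendsto (fun t => L (c * t) / L t) atTop (nhds 1))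
    (hinf : Tendsto L atTop atTop) (c : ℝ) (hc : 0 ≤ c) :
    Tendsto (fun t => (∫ s in (0:ℝ)..(t * c), L s) / (t * L t)) atTop (nhds c) := by
  rcases eq_or_lt_of_le hc with hc0 | hc0
  · simp only [← hc0, mul_zero, intervalIntegral.integral_same, zero_div]
    exact tendsto_const_nhds
  have hLint : ∀ a b : ℝ, IntervalIntegrable L volume a b :=
    fun a b => hLc.intervalIntegrable a b
  obtain ⟨T₁, hT₁1, hT₁L, hpot⟩ := potterL hLc hslow hinf
  set I₁ := ∫ s in (0:ℝ)..T₁, L s with hI₁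
  set C := |I₁| with hC
  rw [Metric.tendsto_atTop]
  intro ε hε
  set δ := min (min c 1) (min ((ε/48)^2) (ε/8)) with hδ
  have hδpos : 0 < δ :=
    lt_min (lt_min hc0 one_pos) (lt_min (by positivity) (by positivity))
  have hδc : δ ≤ c := le_trans (min_le_left _ _) (min_le_left _ _)
  have hδ1 : δ ≤ 1 := le_trans (min_le_left _ _) (min_le_right _ _)
  have hδ2 : δ ≤ (ε/48)^2 := le_trans (min_le_right _ _) (min_le_left _ _)
  have hδ3 : δ ≤ ε/8 := le_trans (min_le_right _ _) (min_le_right _ _)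
  set ε₁ := ε / (8 * (c + 1)) with hε₁def
  have hε₁ : 0 < ε₁ := div_pos hε (by linarith : (0:ℝ) < 8 * (c + 1))
  have E1 := unif_ratio hLc hslow hinf δ c hδpos hδc hε₁
  have EtL : Tendsto (fun t : ℝ => t * L t) atTop atTop :=
    tendsto_id.atTop_mul_atTop₀ hinf
  have E3 : ∀ᶠ t : ℝ in atTop, C + 1 ≤ (ε/8) * (t * L t) :=
    (EtL.const_mul_atTop (show (0:ℝ) < ε/8 by positivity)).eventually_ge_atTop (C + 1)
  have E2 : ∀ᶠ t : ℝ in atTop, T₁ / δ ≤ t ∧ 1 ≤ t :=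
    (eventually_ge_atTop (T₁/δ)).and (eventually_ge_atTop 1)
  obtain ⟨N, hN⟩ := eventually_atTop.mp ((E1.and E3).and E2)
  refine ⟨N, fun t htN => ?_⟩
  obtain ⟨⟨⟨hLtpos, hunift⟩, hE3⟩, hE2a, hE2b⟩ := hN t htN
  have tpos : (0:ℝ) < t := by linarith
  have htLt : 0 < t * L t := mul_pos tpos hLtpos
  have hT₁tδ : T₁ ≤ t * δ := by
    rw [div_le_iff₀ hδpos] at hE2a; linarith
  have htδc : t * δ ≤ t * c := mul_le_mul_of_nonneg_left hδc tpos.le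
  have htδt : t * δ ≤ t := by
    calc t * δ ≤ t * 1 := mul_le_mul_of_nonneg_left hδ1 tpos.le
    _ = t := mul_one t
  have htδ0 : 0 ≤ t * δ := mul_nonneg tpos.le hδpos.le
  have hT₁pos : (0:ℝ) < T₁ := by linarith
  have hsplit : (∫ s in (0:ℝ)..(t*c), L s)
      = I₁ + (∫ s in T₁..(t*δ), L s) + (∫ s in (t*δ)..(t*c), L s) := by
    rw [hI₁, intervalIntegral.integral_add_adjacent_intervals (hLint 0 T₁) (hLint T₁ (t*δ)),
        intervalIntegral.integral_add_adjacent_intervals (hLint 0 (t*δ)) (hLint (t*δ) (t*c))]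
  set I₂ := ∫ s in T₁..(t*δ), L s with hI₂
  set I₃ := ∫ s in (t*δ)..(t*c), L s with hI₃
  have hI₂0 : 0 ≤ I₂ :=
    intervalIntegral.integral_nonneg hT₁tδ (fun u hu => by linarith [hT₁L u hu.1])
  -- upper bound for I₂
  have h0uIcc : (0:ℝ) ∉ Set.uIcc T₁ (t*δ) := by
    rw [Set.uIcc_of_le hT₁tδ]
    intro h0
    linarith [h0.1]
  have hmaj : ∀ s ∈ Set.Icc T₁ (t*δ), L s ≤ (3 * (L t * t ^ (2⁻¹:ℝ))) * s ^ (-(2⁻¹:ℝ)) := by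
    intro s hs
    have hspos : 0 < s := by linarith [hs.1]
    calc L s ≤ 3 * (L t * (t/s) ^ (2⁻¹:ℝ)) := hpot t s hs.1 (le_trans hs.2 htδt)
    _ = (3 * (L t * t ^ (2⁻¹:ℝ))) * s ^ (-(2⁻¹:ℝ)) := by
        rw [Real.div_rpow tpos.le hspos.le, Real.rpow_neg hspos.le]
        ring
  have hint2 : IntervalIntegrable (fun s : ℝ => (3 * (L t * t ^ (2⁻¹:ℝ))) * s ^ (-(2⁻¹:ℝ)))
      volume T₁ (t*δ) :=
    (intervalIntegral.intervalIntegrable_rpow (Or.inr h0uIcc)).const_mul _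
  have hKval : (∫ s in T₁..(t*δ), s ^ (-(2⁻¹:ℝ)))
      = ((t*δ) ^ (-(2⁻¹:ℝ) + 1) - T₁ ^ (-(2⁻¹:ℝ) + 1)) / (-(2⁻¹:ℝ) + 1) :=
    integral_rpow (Or.inl (by norm_num))
  have hmono := intervalIntegral.integral_mono_on hT₁tδ (hLint T₁ (t*δ)) hint2 hmaj
  rw [intervalIntegral.integral_const_mul, hKval] at hmono
  have hexp : (-(2⁻¹:ℝ) + 1) = 2⁻¹ := by norm_num
  rw [hexp] at hmono
  have ht12 : t ^ (2⁻¹:ℝ) * t ^ (2⁻¹:ℝ) = t := by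
    rw [← Real.rpow_add tpos]
    norm_num
  have hδ12 : δ ^ (2⁻¹:ℝ) ≤ ε/48 := by
    have h := Real.rpow_le_rpow hδpos.le hδ2 (by norm_num : (0:ℝ) ≤ 2⁻¹)
    have he : ((ε/48)^2 : ℝ) ^ (2⁻¹:ℝ) = ε/48 := by
      rw [← Real.rpow_natCast (ε/48) 2, ← Real.rpow_mul (by positivity)]
      norm_num
    rwa [he] at h
  have hδ120 : 0 ≤ δ ^ (2⁻¹:ℝ) := Real.rpow_nonneg hδpos.le _
  have hT₁r0 : 0 ≤ T₁ ^ (2⁻¹:ℝ) := Real.rpow_nonneg hT₁pos.le _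
  have ht120 : 0 ≤ t ^ (2⁻¹:ℝ) := Real.rpow_nonneg tpos.le _
  have hI₂le : I₂ ≤ (ε/8) * (t * L t) := by
    have hstep : I₂ ≤ (3 * (L t * t ^ (2⁻¹:ℝ))) * (2 * ((t*δ) ^ (2⁻¹:ℝ))) := by
      have hconst0 : 0 ≤ 3 * (L t * t ^ (2⁻¹:ℝ)) :=
        mul_nonneg (by norm_num) (mul_nonneg hLtpos.le ht120)
      have hKle : ((t*δ) ^ (2⁻¹:ℝ) - T₁ ^ (2⁻¹:ℝ)) / (2⁻¹) ≤ 2 * ((t*δ) ^ (2⁻¹:ℝ)) := by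
        rw [div_le_iff₀ (by norm_num : (0:ℝ) < 2⁻¹)]
        linarith [hT₁r0]
      calc I₂ ≤ (3 * (L t * t ^ (2⁻¹:ℝ))) * (((t*δ) ^ (2⁻¹:ℝ) - T₁ ^ (2⁻¹:ℝ)) / (2⁻¹)) := hmono
      _ ≤ (3 * (L t * t ^ (2⁻¹:ℝ))) * (2 * ((t*δ) ^ (2⁻¹:ℝ))) :=
          mul_le_mul_of_nonneg_left hKle hconst0
    have heq : (3 * (L t * t ^ (2⁻¹:ℝ))) * (2 * ((t*δ) ^ (2⁻¹:ℝ)))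
        = 6 * δ ^ (2⁻¹:ℝ) * (t * L t) := by
      rw [Real.mul_rpow tpos.le hδpos.le]
      linear_combination (6 * δ ^ (2⁻¹:ℝ) * L t) * ht12
    rw [heq] at hstep
    have : 6 * δ ^ (2⁻¹:ℝ) * (t * L t) ≤ (ε/8) * (t * L t) := by
      have h6 : 6 * δ ^ (2⁻¹:ℝ) ≤ ε/8 := by linarith
      exact mul_le_mul_of_nonneg_right h6 htLt.le
    linarith
  -- I₃ estimate
  have hI₃e : |I₃ - (t*c - t*δ) * L t| ≤ ε₁ * L t * (t*c - t*δ) := by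
    have hsub : (∫ s in (t*δ)..(t*c), (L s - L t)) = I₃ - (t*c - t*δ) * L t := by
      rw [intervalIntegral.integral_sub (hLint _ _) intervalIntegrable_const,
          intervalIntegral.integral_const]
      simp [smul_eq_mul]
      exact hI₃.symm
    rw [← hsub]
    have hb : ∀ s ∈ Set.uIoc (t*δ) (t*c), ‖L s - L t‖ ≤ ε₁ * L t := by
      intro s hs
      rw [Set.uIoc_of_le htδc] at hs
      rw [Real.norm_eq_abs]
      exact hunift s hs.1.le hs.2
    have := intervalIntegral.norm_integral_le_of_norm_le_const hb
    rw [Real.norm_eq_abs, abs_of_nonneg (by linarith : (0:ℝ) ≤ t*c - t*δ)] at this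
    linarith
  have hI₃le : |I₃ - (t*c - t*δ) * L t| ≤ (ε/8) * (t * L t) := by
    have h1 : ε₁ * L t * (t*c - t*δ) ≤ (ε/8) * (t * L t) := by
      have hc1 : ε₁ * c ≤ ε/8 := by
        rw [hε₁def, div_mul_eq_mul_div, div_le_div_iff₀ (by linarith : (0:ℝ) < 8*(c+1)) (by norm_num)]
        linarith
      calc ε₁ * L t * (t*c - t*δ) ≤ ε₁ * L t * (t * c) :=
            mul_le_mul_of_nonneg_left (by linarith) (mul_nonneg hε₁.le hLtpos.le)
      _ = (ε₁ * c) * (t * L t) := by ring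
      _ ≤ (ε/8) * (t * L t) := mul_le_mul_of_nonneg_right hc1 htLt.le
    linarith
  have hI₁le : |I₁| ≤ (ε/8) * (t * L t) := by
    rw [← hC]; linarith
  have htδLt : t * δ * L t ≤ (ε/8) * (t * L t) := by
    have h' : δ * (t * L t) ≤ (ε/8) * (t * L t) := mul_le_mul_of_nonneg_right hδ3 htLt.le
    calc t * δ * L t = δ * (t * L t) := by ring
    _ ≤ (ε/8) * (t * L t) := h' 
  -- combine
  rw [Real.dist_eq]
  have hnum : (∫ s in (0:ℝ)..(t*c), L s) / (t * L t) - c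
      = ((∫ s in (0:ℝ)..(t*c), L s) - c * (t * L t)) / (t * L t) := by
    field_simp
  rw [hnum, abs_div, abs_of_pos htLt, div_lt_iff₀ htLt]
  rw [hsplit]
  have hrw : I₁ + I₂ + I₃ - c * (t * L t)
      = (I₁ + I₂ + (I₃ - (t*c - t*δ) * L t)) - t * δ * L t := by ring
  rw [hrw]
  have A3 := abs_sub (I₁ + I₂ + (I₃ - (t*c - t*δ) * L t)) (t * δ * L t)
  have A1 := abs_add_le (I₁ + I₂) (I₃ - (t*c - t*δ) * L t)
  have A2 := abs_add_le I₁ I₂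
  have habsI₂ : |I₂| = I₂ := abs_of_nonneg hI₂0
  have habsδ : |t * δ * L t| = t * δ * L t :=
    abs_of_nonneg (mul_nonneg (mul_nonneg tpos.le hδpos.le) hLtpos.le)
  have hfin : (ε/2) * (t * L t) < ε * (t * L t) := by
    linarith [mul_pos hε htLt]
  rw [habsI₂] at A2
  rw [habsδ] at A3
  linarith only [A3, A1, A2, hI₁le, hI₂le, hI₃le, htδLt, hfin, hI₂0]

/-- Let `r` be even and measurable with `r^q` locally integrable, and let
`L t = ∫₀^t r(u)^q du` be slowly varying at infinity with `L t → ∞`. Then for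
`0 ≤ v₁ < v₂ ≤ v₃ < v₄`,
`∫_{tv₃}^{tv₄} ∫_{tv₁}^{tv₂} r(u₁−u₂)^q du₁ du₂ = o(t L t)` as `t → ∞`. -/
theorem stmt7 (q : ℕ) (hq : 1 ≤ q) (r : ℝ → ℝ) (hmeas : Measurable r)
    (heven : ∀ u, r (-u) = r u)
    (hloc : LocallyIntegrable (fun u => r u ^ q) volume)
    (L : ℝ → ℝ) (hL : ∀ t, L t = ∫ u in (0:ℝ)..t, r u ^ q)
    (hslow : ∀ c > 0, Tendsto (fun t => L (c * t) / L t) atTop (nhds 1))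
    (hinf : Tendsto L atTop atTop)
    (v₁ v₂ v₃ v₄ : ℝ) (hv₁ : 0 ≤ v₁) (hv₁₂ : v₁ < v₂) (hv₂₃ : v₂ ≤ v₃) (hv₃₄ : v₃ < v₄) :
    (fun t => ∫ u₁ in t * v₃..t * v₄, ∫ u₂ in t * v₁..t * v₂, r (u₁ - u₂) ^ q)
      =o[atTop] (fun t => t * L t) := by
  have hgint : ∀ a b : ℝ, IntervalIntegrable (fun u => r u ^ q) volume a b := by
    intro a b
    rw [intervalIntegrable_iff]
    exact (hloc.integrableOn_isCompact isCompact_uIcc).mono_set Set.uIoc_subset_uIcc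
  have hLc : Continuous L := by
    rw [funext hL]
    exact intervalIntegral.continuous_primitive (fun a b => hgint a b) 0
  have hLint : ∀ a b : ℝ, IntervalIntegrable L volume a b :=
    fun a b => hLc.intervalIntegrable a b
  have hLdiff : ∀ x y : ℝ, (∫ s in x..y, r s ^ q) = L y - L x := by
    intro x y
    rw [hL x, hL y]
    exact (intervalIntegral.integral_interval_sub_left (hgint 0 y) (hgint 0 x)).symm
  have hinner : ∀ t u₁ : ℝ, (∫ u₂ in t*v₁..t*v₂, r (u₁ - u₂) ^ q)
      = L (u₁ - t*v₁) - L (u₁ - t*v₂) := by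
    intro t u₁
    have h1 : (∫ u₂ in t*v₁..t*v₂, r (u₁ - u₂) ^ q)
        = ∫ s in u₁ - t*v₂..u₁ - t*v₁, r s ^ q :=
      intervalIntegral.integral_comp_sub_left (fun s => r s ^ q) u₁
    rw [h1, hLdiff]
  have houter : ∀ t : ℝ, (∫ u₁ in t*v₃..t*v₄, ∫ u₂ in t*v₁..t*v₂, r (u₁ - u₂) ^ q)
      = ((∫ s in (0:ℝ)..(t*(v₄ - v₁)), L s) - (∫ s in (0:ℝ)..(t*(v₃ - v₁)), L s))
        - ((∫ s in (0:ℝ)..(t*(v₄ - v₂)), L s) - (∫ s in (0:ℝ)..(t*(v₃ - v₂)), L s)) := by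
    intro t
    have h1 : (∫ u₁ in t*v₃..t*v₄, ∫ u₂ in t*v₁..t*v₂, r (u₁ - u₂) ^ q)
        = ∫ u₁ in t*v₃..t*v₄, (L (u₁ - t*v₁) - L (u₁ - t*v₂)) := by
      apply intervalIntegral.integral_congr
      intro u₁ _
      exact hinner t u₁
    rw [h1]
    have hc1 : IntervalIntegrable (fun u₁ : ℝ => L (u₁ - t*v₁)) volume (t*v₃) (t*v₄) :=
      (hLc.comp (continuous_id.sub continuous_const)).intervalIntegrable _ _
    have hc2 : IntervalIntegrable (fun u₁ : ℝ => L (u₁ - t*v₂)) volume (t*v₃) (t*v₄) :=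
      (hLc.comp (continuous_id.sub continuous_const)).intervalIntegrable _ _
    rw [intervalIntegral.integral_sub hc1 hc2]
    rw [intervalIntegral.integral_comp_sub_right L (t*v₁),
        intervalIntegral.integral_comp_sub_right L (t*v₂)]
    have e : ∀ x y : ℝ, (∫ s in x..y, L s)
        = (∫ s in (0:ℝ)..y, L s) - (∫ s in (0:ℝ)..x, L s) :=
      fun x y => (intervalIntegral.integral_interval_sub_left (hLint 0 y) (hLint 0 x)).symm
    rw [e (t*v₃ - t*v₁) (t*v₄ - t*v₁), e (t*v₃ - t*v₂) (t*v₄ - t*v₂)]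
    rw [show t*v₃ - t*v₁ = t*(v₃ - v₁) by ring, show t*v₄ - t*v₁ = t*(v₄ - v₁) by ring,
        show t*v₃ - t*v₂ = t*(v₃ - v₂) by ring, show t*v₄ - t*v₂ = t*(v₄ - v₂) by ring]
  have hne : ∀ᶠ t : ℝ in atTop, t * L t ≠ 0 := by
    filter_upwards [(tendsto_id.atTop_mul_atTop₀ hinf).eventually_ge_atTop 1] with t ht
    simp only [id_eq] at ht
    intro h0
    rw [h0] at ht
    linarith
  rw [Asymptotics.isLittleO_iff_tendsto'
    (by filter_upwards [hne] with t h1 h2; exact absurd h2 h1)]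
  have hk : ∀ c : ℝ, 0 ≤ c →
      Tendsto (fun t => (∫ s in (0:ℝ)..(t*c), L s)/(t * L t)) atTop (nhds c) :=
    fun c hc => karamata hLc hslow hinf c hc
  have h41 := hk (v₄ - v₁) (by linarith)
  have h31 := hk (v₃ - v₁) (by linarith)
  have h42 := hk (v₄ - v₂) (by linarith)
  have h32 := hk (v₃ - v₂) (by linarith)
  have hcomb := (h41.sub h31).sub (h42.sub h32)
  rw [show ((v₄ - v₁) - (v₃ - v₁)) - ((v₄ - v₂) - (v₃ - v₂)) = 0 by ring] at hcomb
  refine hcomb.congr (fun t => ?_)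
  rw [houter t, sub_div, sub_div, sub_div]
end

section
/- Let q ∈ ℕ, q ≥ 2, and let r : ℝ → ℝ be a measurable function with |r|^q locally integrable. Set L(t) = ∫₀^t r(u)^q du and L_{|·|}(t) = ∫₀^t |r(u)|^q du for t > 0. Assume that L and L_{|·|} are slowly varying at infinity, that L(t) → ∞ as t → ∞, and that limsup_{t→∞} L_{|·|}(t)/L(t) < ∞. Then for every integer m with 1 ≤ m < q and every v > 0, ∫₀^{t v} |r(u)|^m du = o(t^{1 − m/q} L(t)^{m/q}) as t → ∞. -/
open MeasureTheory Filter Asymptotics Set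

lemma holder_aux (q m : ℕ) (hm : 1 ≤ m) (hmq : m < q) (r : ℝ → ℝ)
    (hmeas : Measurable r) {a b : ℝ} (hab : a ≤ b)
    (hint : IntegrableOn (fun u => |r u| ^ q) (Ioc a b) volume) :
    ∫ u in a..b, |r u| ^ m ≤
      (b - a) ^ (1 - (m:ℝ)/q) * (∫ u in a..b, |r u| ^ q) ^ ((m:ℝ)/q) := by
  have hm0 : (0:ℝ) < m := by exact_mod_cast hm
  have hq0 : (0:ℝ) < q := by exact_mod_cast (by omega : 0 < q)
  have hqm : (0:ℝ) < (q:ℝ) - m := by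
    have : (m:ℝ) < q := by exact_mod_cast hmq
    linarith
  set μ := volume.restrict (Ioc a b) with hμ
  haveI : IsFiniteMeasure μ := ⟨by
    rw [hμ, Measure.restrict_apply_univ]; exact measure_Ioc_lt_top⟩
  set p : ℝ := (q:ℝ)/m with hp
  set p' : ℝ := (q:ℝ)/((q:ℝ)-m) with hp'
  have hppos : 0 < p := by positivity
  have hpq : p.HolderConjugate p' := by
    constructor
    · rw [hp, hp', inv_div, inv_div, inv_one, ← add_div, div_eq_one_iff_eq hq0.ne']; ring
    · exact hppos
    · rw [hp']; exact div_pos hq0 hqm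
  have hf_nonneg : 0 ≤ᵐ[μ] fun u => |r u| ^ m := ae_of_all _ fun u => by positivity
  have hg_nonneg : 0 ≤ᵐ[μ] fun _ : ℝ => (1:ℝ) := ae_of_all _ fun u => zero_le_one
  have hkey : ∀ x : ℝ, (|r x| ^ m : ℝ) ^ p = |r x| ^ q := by
    intro x
    rw [← Real.rpow_natCast (|r x|) m, ← Real.rpow_mul (abs_nonneg _)]
    rw [show (m:ℝ) * p = (q:ℝ) by rw [hp]; field_simp]
    rw [Real.rpow_natCast]
  have hfm : MemLp (fun u => |r u| ^ m) (ENNReal.ofReal p) μ := by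
    have A : ENNReal.ofReal p ≠ 0 := by
      rw [Ne, ENNReal.ofReal_eq_zero, not_le]; exact hppos
    have B : ENNReal.ofReal p ≠ ⊤ := ENNReal.ofReal_ne_top
    have hsm : AEStronglyMeasurable (fun u => |r u| ^ m) μ :=
      ((hmeas.abs.pow_const m)).aestronglyMeasurable
    rw [← memLp_norm_rpow_iff hsm A B, ENNReal.div_self A B, memLp_one_iff_integrable]
    refine hint.congr (ae_of_all _ fun x => ?_)
    show |r x| ^ q = ‖|r x| ^ m‖ ^ (ENNReal.ofReal p).toReal
    rw [ENNReal.toReal_ofReal hppos.le, Real.norm_of_nonneg (by positivity), hkey]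
  have hgm : MemLp (fun _ : ℝ => (1:ℝ)) (ENNReal.ofReal p') μ := memLp_const 1
  have H := MeasureTheory.integral_mul_le_Lp_mul_Lq_of_nonneg hpq hf_nonneg hg_nonneg hfm hgm
  simp only [mul_one, Real.one_rpow] at H
  have h1 : ∫ x, (|r x| ^ m : ℝ) ^ p ∂μ = ∫ u in a..b, |r u| ^ q := by
    rw [intervalIntegral.integral_of_le hab]
    exact integral_congr_ae (ae_of_all _ fun x => hkey x)
  have h2 : ∫ _ : ℝ, (1:ℝ) ∂μ = b - a := by
    rw [hμ, setIntegral_const, smul_eq_mul, mul_one, measureReal_def, Real.volume_Ioc,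
      ENNReal.toReal_ofReal (by linarith)]
  rw [h1, h2] at H
  have h3 : 1 / p = (m:ℝ)/q := by rw [hp]; field_simp
  have h4 : 1 / p' = 1 - (m:ℝ)/q := by rw [hp']; field_simp
  rw [h3, h4] at H
  rw [intervalIntegral.integral_of_le hab]
  calc ∫ x in Ioc a b, |r x| ^ m ≤
      (∫ u in a..b, |r u| ^ q) ^ ((m:ℝ)/q) * (b - a) ^ (1 - (m:ℝ)/q) := H
    _ = (b - a) ^ (1 - (m:ℝ)/q) * (∫ u in a..b, |r u| ^ q) ^ ((m:ℝ)/q) := mul_comm _ _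

/-- Let `q ≥ 2`, let `r` be measurable with `|r|^q` locally integrable, and set
`L t = ∫₀^t r(u)^q du`, `L|·| t = ∫₀^t |r u|^q du`. Assume `L` and `L|·|` are slowly varying at
infinity, `L t → ∞`, and `limsup_{t→∞} L|·| t / L t < ∞`. Then, for every integer `1 ≤ m < q`
and every `v > 0`, `∫₀^{tv} |r u|^m du = o(t^{1−m/q} L(t)^{m/q})` as `t → ∞`. -/
theorem stmt9 (q : ℕ) (hq : 2 ≤ q) (r : ℝ → ℝ) (hmeas : Measurable r)
    (hloc : LocallyIntegrable (fun u => |r u| ^ q) volume)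
    (L Labs : ℝ → ℝ)
    (hL : ∀ t, L t = ∫ u in (0:ℝ)..t, r u ^ q)
    (hLabs : ∀ t, Labs t = ∫ u in (0:ℝ)..t, |r u| ^ q)
    (hslowL : ∀ c > 0, Tendsto (fun t => L (c * t) / L t) atTop (nhds 1))
    (hslowLabs : ∀ c > 0, Tendsto (fun t => Labs (c * t) / Labs t) atTop (nhds 1))
    (hinf : Tendsto L atTop atTop)
    (hbdd : IsBoundedUnder (· ≤ ·) atTop (fun t => Labs t / L t))
    (m : ℕ) (hm : 1 ≤ m) (hmq : m < q) (v : ℝ) (hv : 0 < v) :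
    (fun t => ∫ u in (0:ℝ)..(t * v), |r u| ^ m) =o[atTop]
      (fun t => t ^ (1 - (m : ℝ) / q) * L t ^ ((m : ℝ) / q)) := by
  have hm0 : (0:ℝ) < m := by exact_mod_cast hm
  have hq0 : (0:ℝ) < q := by exact_mod_cast (by omega : 0 < q)
  have hmqR : (m:ℝ) < q := by exact_mod_cast hmq
  have hexp1 : 0 < 1 - (m:ℝ)/q := by
    rw [sub_pos, div_lt_one hq0]; exact hmqR
  have hexp2 : 0 < (m:ℝ)/q := div_pos hm0 hq0
  -- integrability facts
  have hIq : ∀ a b : ℝ, IntegrableOn (fun u => |r u| ^ q) (Ioc a b) volume := fun a b =>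
    (hloc.integrableOn_isCompact isCompact_Icc).mono_set Ioc_subset_Icc_self
  have hIm : ∀ a b : ℝ, IntegrableOn (fun u => |r u| ^ m) (Ioc a b) volume := by
    intro a b
    have h1 : IntegrableOn (fun u => 1 + |r u| ^ q) (Ioc a b) volume :=
      (integrableOn_const (hs := measure_Ioc_lt_top.ne)).add (hIq a b)
    refine Integrable.mono' h1 ((hmeas.abs.pow_const m)).aestronglyMeasurable
      (ae_of_all _ fun u => ?_)
    rw [Real.norm_of_nonneg (by positivity)]
    rcases le_total (|r u|) 1 with h | h
    · have h1 : |r u| ^ m ≤ 1 := pow_le_one₀ (abs_nonneg _) h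
      have h2 : (0:ℝ) ≤ |r u| ^ q := by positivity
      linarith
    · have h1 : |r u| ^ m ≤ |r u| ^ q := pow_le_pow_right₀ h hmq.le
      linarith
  have hIr : ∀ a b : ℝ, IntegrableOn (fun u => r u ^ q) (Ioc a b) volume := by
    intro a b
    refine Integrable.mono' (hIq a b) ((hmeas.pow_const q)).aestronglyMeasurable
      (ae_of_all _ fun u => ?_)
    rw [Real.norm_eq_abs, abs_pow]
  have hiim : ∀ a b : ℝ, IntervalIntegrable (fun u => |r u| ^ m) volume a b := fun a b =>
    intervalIntegrable_iff.mpr ((hIm _ _).mono_set (by rw [uIoc]))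
  have hiiq : ∀ a b : ℝ, IntervalIntegrable (fun u => |r u| ^ q) volume a b := fun a b =>
    intervalIntegrable_iff.mpr ((hIq _ _).mono_set (by rw [uIoc]))
  have hiir : ∀ a b : ℝ, IntervalIntegrable (fun u => r u ^ q) volume a b := fun a b =>
    intervalIntegrable_iff.mpr ((hIr _ _).mono_set (by rw [uIoc]))
  -- basic facts about Labs
  have hLabs_nonneg : ∀ t : ℝ, 0 ≤ t → 0 ≤ Labs t := fun t ht => by
    rw [hLabs]; exact intervalIntegral.integral_nonneg ht fun u _ => by positivity
  have hLleLabs : ∀ t : ℝ, 0 ≤ t → L t ≤ Labs t := fun t ht => by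
    rw [hL, hLabs]
    refine intervalIntegral.integral_mono_on ht (hiir 0 t) (hiiq 0 t) fun u _ => ?_
    calc r u ^ q ≤ |r u ^ q| := le_abs_self _
      _ = |r u| ^ q := abs_pow _ _
  -- the bound constant
  obtain ⟨C, hC⟩ := hbdd
  rw [eventually_map] at hC
  set C' : ℝ := max C 1 with hC'def
  have hC'0 : (0:ℝ) < C' := lt_of_lt_of_le one_pos (le_max_right _ _)
  set B1 : ℝ := (2 * C') ^ ((m:ℝ)/q) with hB1def
  have hB1 : 0 < B1 := Real.rpow_pos_of_pos (by positivity) _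
  rw [isLittleO_iff]
  intro δ hδ
  -- choose ε
  set X : ℝ := δ / (2 * B1) with hXdef
  have hX : 0 < X := by positivity
  set ε : ℝ := min v (X ^ ((q:ℝ)/((q:ℝ)-(m:ℝ)))) with hεdef
  have hε : 0 < ε := lt_min hv (Real.rpow_pos_of_pos hX _)
  have hεv : ε ≤ v := min_le_left _ _
  have hεbound : ε ^ (1 - (m:ℝ)/q) * B1 ≤ δ/2 := by
    have h1 : ε ^ (1 - (m:ℝ)/q) ≤ (X ^ ((q:ℝ)/((q:ℝ)-(m:ℝ)))) ^ (1 - (m:ℝ)/q) :=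
      Real.rpow_le_rpow hε.le (min_le_right _ _) hexp1.le
    have hqm0 : (q:ℝ) - (m:ℝ) ≠ 0 := by linarith
    have h2 : (X ^ ((q:ℝ)/((q:ℝ)-(m:ℝ)))) ^ (1 - (m:ℝ)/q) = X := by
      rw [← Real.rpow_mul hX.le,
        show (q:ℝ)/((q:ℝ)-(m:ℝ)) * (1 - (m:ℝ)/q) = 1 by field_simp,
        Real.rpow_one]
    have h3 : X * B1 = δ/2 := by
      rw [hXdef]; field_simp
    calc ε ^ (1 - (m:ℝ)/q) * B1 ≤ X * B1 :=
          mul_le_mul_of_nonneg_right (h1.trans_eq h2) hB1.le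
      _ = δ/2 := h3
  -- choose η
  set Y : ℝ := δ / (2 * v ^ (1 - (m:ℝ)/q)) with hYdef
  have hvp : (0:ℝ) < v ^ (1 - (m:ℝ)/q) := Real.rpow_pos_of_pos hv _
  have hY : 0 < Y := by positivity
  set η : ℝ := Y ^ ((q:ℝ)/(m:ℝ)) / C' with hηdef
  have hη : 0 < η := div_pos (Real.rpow_pos_of_pos hY _) hC'0
  have hηbound : v ^ (1 - (m:ℝ)/q) * (η * C') ^ ((m:ℝ)/q) = δ/2 := by
    have hηC' : η * C' = Y ^ ((q:ℝ)/(m:ℝ)) := div_mul_cancel₀ _ hC'0.ne'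
    rw [hηC', ← Real.rpow_mul hY.le,
      show (q:ℝ)/(m:ℝ) * ((m:ℝ)/q) = 1 by field_simp,
      Real.rpow_one, hYdef]
    field_simp
  -- eventual facts
  have E1 : ∀ᶠ t : ℝ in atTop, (0:ℝ) < t := eventually_gt_atTop 0
  have E2 : ∀ᶠ t in atTop, 0 < L t := hinf.eventually_gt_atTop 0
  have EL : ∀ᶠ t in atTop, 0 < Labs t := (E1.and E2).mono fun t ⟨h1, h2⟩ =>
    lt_of_lt_of_le h2 (hLleLabs t h1.le)
  have E3 : ∀ᶠ t in atTop, Labs t ≤ C' * L t := (hC.and E2).mono fun t ⟨h1, h2⟩ => by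
    have h3 : Labs t ≤ C * L t := (div_le_iff₀ h2).mp h1
    have h4 : C * L t ≤ C' * L t := mul_le_mul_of_nonneg_right (le_max_left _ _) h2.le
    linarith
  have E4 : ∀ᶠ t in atTop, Labs (ε * t) ≤ 2 * Labs t := by
    have h1 := (hslowLabs ε hε).eventually (eventually_le_nhds one_lt_two)
    filter_upwards [h1, EL] with t h1 h2
    exact (div_le_iff₀ h2).mp h1
  have E5 : ∀ᶠ t in atTop, Labs (v * t) - Labs (ε * t) ≤ η * Labs t := by
    have h0 : Tendsto (fun t => Labs (v*t)/Labs t - Labs (ε*t)/Labs t) atTop (nhds 0) := by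
      have h := (hslowLabs v hv).sub (hslowLabs ε hε)
      simpa using h
    have h1 := h0.eventually (eventually_le_nhds hη)
    filter_upwards [h1, EL] with t h1 h2
    have h3 : (Labs (v*t) - Labs (ε*t)) / Labs t ≤ η := by
      rw [sub_div]; exact h1
    exact (div_le_iff₀ h2).mp h3
  filter_upwards [E1, E2, E3, E4, E5] with t ht0 hLt hE3 hE4 hE5
  have hεt0 : (0:ℝ) ≤ ε * t := by positivity
  have hεtv : ε * t ≤ t * v := by
    rw [mul_comm ε t]; exact mul_le_mul_of_nonneg_left hεv ht0.le
  have htv0 : (0:ℝ) ≤ t * v := by positivity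
  have htL1 : 0 < t ^ (1 - (m:ℝ)/q) := Real.rpow_pos_of_pos ht0 _
  have htL2 : 0 < L t ^ ((m:ℝ)/q) := Real.rpow_pos_of_pos hLt _
  have hsplit : ∫ u in (0:ℝ)..(t*v), |r u| ^ m
      = (∫ u in (0:ℝ)..(ε*t), |r u| ^ m) + ∫ u in (ε*t)..(t*v), |r u| ^ m :=
    (intervalIntegral.integral_add_adjacent_intervals (hiim 0 (ε*t)) (hiim (ε*t) (t*v))).symm
  -- piece 1
  have hP1 : ∫ u in (0:ℝ)..(ε*t), |r u| ^ m
      ≤ (δ/2) * (t ^ (1-(m:ℝ)/q) * L t ^ ((m:ℝ)/q)) := by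
    have h1 := holder_aux q m hm hmq r hmeas hεt0 (hIq 0 (ε*t))
    rw [sub_zero, ← hLabs] at h1
    have hLa : 0 ≤ Labs (ε*t) := hLabs_nonneg _ hεt0
    have h2 : Labs (ε*t) ≤ 2*C' * L t := by nlinarith
    have h3 : Labs (ε*t) ^ ((m:ℝ)/q) ≤ (2*C'*L t) ^ ((m:ℝ)/q) :=
      Real.rpow_le_rpow hLa h2 hexp2.le
    have h4 : (ε*t) ^ (1-(m:ℝ)/q) = ε ^ (1-(m:ℝ)/q) * t ^ (1-(m:ℝ)/q) :=
      Real.mul_rpow hε.le ht0.le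
    have h5 : (2*C'*L t) ^ ((m:ℝ)/q) = B1 * L t ^ ((m:ℝ)/q) := by
      rw [hB1def, ← Real.mul_rpow (by positivity) hLt.le]
    calc ∫ u in (0:ℝ)..(ε*t), |r u| ^ m
        ≤ (ε*t) ^ (1-(m:ℝ)/q) * Labs (ε*t) ^ ((m:ℝ)/q) := h1
      _ ≤ (ε*t) ^ (1-(m:ℝ)/q) * (2*C'*L t) ^ ((m:ℝ)/q) :=
          mul_le_mul_of_nonneg_left h3 (Real.rpow_nonneg hεt0 _)
      _ = (ε ^ (1-(m:ℝ)/q) * B1) * (t ^ (1-(m:ℝ)/q) * L t ^ ((m:ℝ)/q)) := by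
          rw [h4, h5]; ring
      _ ≤ (δ/2) * (t ^ (1-(m:ℝ)/q) * L t ^ ((m:ℝ)/q)) :=
          mul_le_mul_of_nonneg_right hεbound (by positivity)
  -- piece 2
  have hP2 : ∫ u in (ε*t)..(t*v), |r u| ^ m
      ≤ (δ/2) * (t ^ (1-(m:ℝ)/q) * L t ^ ((m:ℝ)/q)) := by
    have h1 := holder_aux q m hm hmq r hmeas hεtv (hIq (ε*t) (t*v))
    have hdiff : ∫ u in (ε*t)..(t*v), |r u| ^ q = Labs (t*v) - Labs (ε*t) := by
      have h := intervalIntegral.integral_add_adjacent_intervals (hiiq 0 (ε*t)) (hiiq (ε*t) (t*v))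
      rw [hLabs (t*v), hLabs (ε*t)]
      linarith
    have hd0 : 0 ≤ Labs (t*v) - Labs (ε*t) := by
      rw [← hdiff]
      exact intervalIntegral.integral_nonneg hεtv fun u _ => by positivity
    have h2 : Labs (t*v) - Labs (ε*t) ≤ η * C' * L t := by
      have h5 : Labs (t*v) = Labs (v*t) := by rw [mul_comm]
      have h6 : η * Labs t ≤ η * (C' * L t) := mul_le_mul_of_nonneg_left hE3 hη.le
      rw [h5]; linarith [hE5]
    have h3 : (Labs (t*v) - Labs (ε*t)) ^ ((m:ℝ)/q) ≤ (η*C'*L t) ^ ((m:ℝ)/q) :=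
      Real.rpow_le_rpow hd0 h2 hexp2.le
    have h4 : (t*v - ε*t) ^ (1-(m:ℝ)/q) ≤ (t*v) ^ (1-(m:ℝ)/q) :=
      Real.rpow_le_rpow (by linarith) (by linarith) hexp1.le
    have h5 : (t*v) ^ (1-(m:ℝ)/q) = t ^ (1-(m:ℝ)/q) * v ^ (1-(m:ℝ)/q) :=
      Real.mul_rpow ht0.le hv.le
    have h6 : (η*C'*L t) ^ ((m:ℝ)/q) = (η*C') ^ ((m:ℝ)/q) * L t ^ ((m:ℝ)/q) :=
      Real.mul_rpow (by positivity) hLt.le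
    calc ∫ u in (ε*t)..(t*v), |r u| ^ m
        ≤ (t*v - ε*t) ^ (1-(m:ℝ)/q) * (∫ u in (ε*t)..(t*v), |r u| ^ q) ^ ((m:ℝ)/q) := h1
      _ = (t*v - ε*t) ^ (1-(m:ℝ)/q) * (Labs (t*v) - Labs (ε*t)) ^ ((m:ℝ)/q) := by rw [hdiff]
      _ ≤ (t*v) ^ (1-(m:ℝ)/q) * (η*C'*L t) ^ ((m:ℝ)/q) :=
          mul_le_mul h4 h3 (Real.rpow_nonneg hd0 _) (Real.rpow_nonneg htv0 _)
      _ = (v ^ (1-(m:ℝ)/q) * (η*C') ^ ((m:ℝ)/q)) * (t ^ (1-(m:ℝ)/q) * L t ^ ((m:ℝ)/q)) := by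
          rw [h5, h6]; ring
      _ = (δ/2) * (t ^ (1-(m:ℝ)/q) * L t ^ ((m:ℝ)/q)) := by rw [hηbound]
  rw [Real.norm_of_nonneg (intervalIntegral.integral_nonneg htv0 fun u _ => by positivity),
    Real.norm_of_nonneg (by positivity : (0:ℝ) ≤ t ^ (1-(m:ℝ)/q) * L t ^ ((m:ℝ)/q))]
  rw [hsplit]
  linarith
end

section
/- Let q ∈ ℕ, q ≥ 1, and let r : ℝ → ℝ be an even continuous function with |r(u)| ≤ 1 for all u, r(u) → 0 as u → ∞. Set L(t) = ∫₀^t r(u)^q du and L_{|·|}(t) = ∫₀^t |r(u)|^q du, and assume that L and L_{|·|} are slowly varying at infinity, that L(t) → ∞ as t → ∞, and that limsup_{t→∞} L_{|·|}(t)/L(t) < ∞. Then for every v > 0, M_t(v) := sup_{m ≥ q+1} ∫₀^{v t} ∫₀^{v t} |r(u₁ − u₂)|^m du₁ du₂ satisfies M_t(v) = o(t L(t)) as t → ∞. -/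
open MeasureTheory Filter Asymptotics

/-- Let `q ≥ 1` and let `r` be even, continuous, bounded by one and tending to
zero at infinity. With `L t = ∫₀^t r(u)^q du` and `L|·| t = ∫₀^t |r u|^q du` both slowly varying
at infinity, `L t → ∞` and `limsup_{t→∞} L|·| t / L t < ∞`, for every `v > 0` the quantity
`M_t(v) = sup_{m ≥ q+1} ∫₀^{vt} ∫₀^{vt} |r(u₁−u₂)|^m du₁ du₂` satisfies `M_t(v) = o(t L t)`
as `t → ∞`. -/
theorem stmt10 (q : ℕ) (hq : 1 ≤ q) (r : ℝ → ℝ) (hcont : Continuous r)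
    (heven : ∀ u, r (-u) = r u) (hbd : ∀ u, |r u| ≤ 1)
    (hzero : Tendsto r atTop (nhds 0))
    (L Labs : ℝ → ℝ)
    (hL : ∀ t, L t = ∫ u in (0:ℝ)..t, r u ^ q)
    (hLabs : ∀ t, Labs t = ∫ u in (0:ℝ)..t, |r u| ^ q)
    (hslowL : ∀ c > 0, Tendsto (fun t => L (c * t) / L t) atTop (nhds 1))
    (hslowLabs : ∀ c > 0, Tendsto (fun t => Labs (c * t) / Labs t) atTop (nhds 1))
    (hinf : Tendsto L atTop atTop)
    (hbdd : IsBoundedUnder (· ≤ ·) atTop (fun t => Labs t / L t))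
    (v : ℝ) (hv : 0 < v) :
    (fun t => ⨆ m : {m : ℕ // q + 1 ≤ m},
        ∫ u₁ in (0:ℝ)..(v * t), ∫ u₂ in (0:ℝ)..(v * t), |r (u₁ - u₂)| ^ (m : ℕ))
      =o[atTop] (fun t => t * L t) := by
  set ρ : ℝ → ℝ := fun s => |r s| ^ (q + 1) with hρ
  have hρcont : Continuous ρ := hcont.abs.pow _
  have hρnn : ∀ s, 0 ≤ ρ s := fun s => pow_nonneg (abs_nonneg _) _
  have hρle1 : ∀ s, ρ s ≤ 1 := fun s => pow_le_one₀ (abs_nonneg _) (hbd s)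
  -- Step 1: the supremum is bounded by T * (2 ∫₀^T ρ)
  have key : ∀ T : ℝ, 0 ≤ T →
      (⨆ m : {m : ℕ // q + 1 ≤ m},
          ∫ u₁ in (0:ℝ)..T, ∫ u₂ in (0:ℝ)..T, |r (u₁ - u₂)| ^ (m : ℕ))
        ≤ T * (2 * ∫ s in (0:ℝ)..T, ρ s) := by
    intro T hT
    have hne : Nonempty {m : ℕ // q + 1 ≤ m} := ⟨⟨q + 1, le_refl _⟩⟩
    apply ciSup_le
    rintro ⟨m, hm⟩
    have hmcont : Continuous (fun s => |r s| ^ m) := hcont.abs.pow m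
    have evensplit : (∫ s in (-T)..T, ρ s) = 2 * ∫ s in (0:ℝ)..T, ρ s := by
      have h1 : (∫ s in (-T)..(0:ℝ), ρ s) = ∫ s in (0:ℝ)..T, ρ s := by
        have h2 : (∫ x in (0:ℝ)..T, ρ (-x)) = ∫ x in (-T)..(-(0:ℝ)), ρ x :=
          intervalIntegral.integral_comp_neg ρ
        have h3 : (∫ x in (0:ℝ)..T, ρ (-x)) = ∫ x in (0:ℝ)..T, ρ x := by
          congr 1; funext x; simp only [hρ, heven x]
        rw [h3] at h2
        rw [neg_zero] at h2
        exact h2.symm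
      have h4 : (∫ s in (-T)..(0:ℝ), ρ s) + (∫ s in (0:ℝ)..T, ρ s) = ∫ s in (-T)..T, ρ s :=
        intervalIntegral.integral_add_adjacent_intervals
          (hρcont.intervalIntegrable _ _) (hρcont.intervalIntegrable _ _)
      rw [← h4, h1]; ring
    have hinner : ∀ u₁ ∈ Set.Icc (0:ℝ) T,
        (∫ u₂ in (0:ℝ)..T, |r (u₁ - u₂)| ^ m) ≤ 2 * ∫ s in (0:ℝ)..T, ρ s := by
      intro u₁ hu₁
      have e1 : (∫ u₂ in (0:ℝ)..T, |r (u₁ - u₂)| ^ m)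
          = ∫ s in (u₁ - T)..(u₁ - 0), |r s| ^ m :=
        intervalIntegral.integral_comp_sub_left (fun s => |r s| ^ m) u₁
      rw [sub_zero] at e1
      rw [e1]
      have h2 : (∫ s in (u₁ - T)..u₁, |r s| ^ m) ≤ ∫ s in (u₁ - T)..u₁, ρ s :=
        intervalIntegral.integral_mono_on (by linarith [hu₁.2, hu₁.1])
          (hmcont.intervalIntegrable _ _) (hρcont.intervalIntegrable _ _)
          (fun x _ => pow_le_pow_of_le_one (abs_nonneg _) (hbd x) hm)
      have h3 : (∫ s in (u₁ - T)..u₁, ρ s) ≤ ∫ s in (-T)..T, ρ s :=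
        intervalIntegral.integral_mono_interval (by linarith [hu₁.1]) (by linarith)
          hu₁.2 (Filter.Eventually.of_forall hρnn) (hρcont.intervalIntegrable _ _)
      calc (∫ s in (u₁ - T)..u₁, |r s| ^ m) ≤ ∫ s in (u₁ - T)..u₁, ρ s := h2
        _ ≤ ∫ s in (-T)..T, ρ s := h3
        _ = 2 * ∫ s in (0:ℝ)..T, ρ s := evensplit
    have Hcont : Continuous (fun x : ℝ => ∫ s in (0:ℝ)..x, |r s| ^ m) :=
      intervalIntegral.continuous_primitive (fun a b => hmcont.intervalIntegrable a b) 0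
    have hInnerEq : (fun u₁ => ∫ u₂ in (0:ℝ)..T, |r (u₁ - u₂)| ^ m)
        = fun u₁ => (∫ s in (0:ℝ)..u₁, |r s| ^ m) - ∫ s in (0:ℝ)..(u₁ - T), |r s| ^ m := by
      funext u₁
      rw [intervalIntegral.integral_comp_sub_left (fun s => |r s| ^ m) u₁, sub_zero,
        intervalIntegral.integral_interval_sub_left
          (hmcont.intervalIntegrable _ _) (hmcont.intervalIntegrable _ _)]
    have hInnerInt : IntervalIntegrable
        (fun u₁ => ∫ u₂ in (0:ℝ)..T, |r (u₁ - u₂)| ^ m) volume 0 T := by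
      rw [hInnerEq]
      exact (Hcont.sub (Hcont.comp (continuous_id.sub continuous_const))).intervalIntegrable _ _
    calc (∫ u₁ in (0:ℝ)..T, ∫ u₂ in (0:ℝ)..T, |r (u₁ - u₂)| ^ m)
        ≤ ∫ _u₁ in (0:ℝ)..T, (2 * ∫ s in (0:ℝ)..T, ρ s) :=
          intervalIntegral.integral_mono_on hT hInnerInt intervalIntegrable_const hinner
      _ = T * (2 * ∫ s in (0:ℝ)..T, ρ s) := by
          rw [intervalIntegral.integral_const, smul_eq_mul, sub_zero]
  -- nonnegativity of the supremum
  have fnn : ∀ T : ℝ, 0 ≤ T →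
      0 ≤ ⨆ m : {m : ℕ // q + 1 ≤ m},
          ∫ u₁ in (0:ℝ)..T, ∫ u₂ in (0:ℝ)..T, |r (u₁ - u₂)| ^ (m : ℕ) := by
    intro T hT
    apply Real.iSup_nonneg
    intro m
    exact intervalIntegral.integral_nonneg hT (fun u₁ _ =>
      intervalIntegral.integral_nonneg hT (fun u₂ _ => pow_nonneg (abs_nonneg _) _))
  -- Step 2: 2 ∫₀^{vt} ρ is eventually ≤ ε L t
  obtain ⟨B, hB⟩ := hbdd
  simp only [Filter.eventually_map] at hB
  set B' : ℝ := max B 1 with hB'def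
  have hB'pos : 0 < B' := lt_of_lt_of_le one_pos (le_max_right _ _)
  have main : ∀ ε > 0, ∀ᶠ t in atTop, 2 * (∫ s in (0:ℝ)..(v * t), ρ s) ≤ ε * L t := by
    intro ε hε
    set δ : ℝ := ε / (8 * B') with hδdef
    have hδpos : 0 < δ := div_pos hε (by positivity)
    obtain ⟨N, hN⟩ := Metric.tendsto_atTop.mp hzero δ hδpos
    set U : ℝ := max N 0 with hUdef
    have hU0 : (0:ℝ) ≤ U := le_max_right _ _
    have hrU : ∀ x ≥ U, |r x| ≤ δ := by
      intro x hx
      have := hN x (le_trans (le_max_left _ _) hx)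
      rw [Real.dist_eq, sub_zero] at this
      exact le_of_lt this
    have hvt : Tendsto (fun t : ℝ => v * t) atTop atTop :=
      Tendsto.const_mul_atTop hv tendsto_id
    have E1 : ∀ᶠ t in atTop, U ≤ v * t := hvt.eventually_ge_atTop U
    have E2 : ∀ᶠ t in atTop, 1 ≤ L t := hinf.eventually_ge_atTop 1
    have E4 : ∀ᶠ t in atTop, Labs (v * t) / Labs t ≤ 2 :=
      (hslowLabs v hv).eventually (eventually_le_nhds (by norm_num))
    have E5 : ∀ᶠ t in atTop, 4 * U / ε ≤ L t := hinf.eventually_ge_atTop _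
    have E6 : ∀ᶠ t in atTop, (0:ℝ) ≤ t := eventually_ge_atTop 0
    filter_upwards [E1, E2, hB, E4, E5, E6] with t h1 h2 h3 h4 h5 h6
    have hLpos : 0 < L t := lt_of_lt_of_le one_pos h2
    have hvt0 : 0 ≤ v * t := le_trans hU0 h1
    have hLleLabs : L t ≤ Labs t := by
      rw [hL, hLabs]
      exact intervalIntegral.integral_mono_on h6 ((hcont.pow q).intervalIntegrable _ _)
        ((hcont.abs.pow q).intervalIntegrable _ _)
        (fun x _ => by rw [← abs_pow]; exact le_abs_self _)
    have hLabspos : 0 < Labs t := lt_of_lt_of_le hLpos hLleLabs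
    have hLabsvt : Labs (v * t) ≤ 2 * Labs t := (div_le_iff₀ hLabspos).mp h4
    have hLabsB : Labs t ≤ B' * L t := by
      have hBt : Labs t ≤ B * L t := (div_le_iff₀ hLpos).mp h3
      calc Labs t ≤ B * L t := hBt
        _ ≤ B' * L t := mul_le_mul_of_nonneg_right (le_max_left _ _) hLpos.le
    have hsplit : (∫ s in (0:ℝ)..(v * t), ρ s)
        = (∫ s in (0:ℝ)..U, ρ s) + ∫ s in U..(v * t), ρ s :=
      (intervalIntegral.integral_add_adjacent_intervals (hρcont.intervalIntegrable _ _)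
        (hρcont.intervalIntegrable _ _)).symm
    have hpart1 : (∫ s in (0:ℝ)..U, ρ s) ≤ U := by
      calc (∫ s in (0:ℝ)..U, ρ s) ≤ ∫ _s in (0:ℝ)..U, (1:ℝ) :=
            intervalIntegral.integral_mono_on hU0 (hρcont.intervalIntegrable _ _)
              intervalIntegrable_const (fun x _ => hρle1 x)
        _ = U := by rw [intervalIntegral.integral_const, smul_eq_mul, sub_zero, mul_one]
    have hpart2 : (∫ s in U..(v * t), ρ s) ≤ δ * Labs (v * t) := by
      calc (∫ s in U..(v * t), ρ s) ≤ ∫ s in U..(v * t), δ * |r s| ^ q := by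
            apply intervalIntegral.integral_mono_on h1 (hρcont.intervalIntegrable _ _)
              ((continuous_const.mul (hcont.abs.pow q)).intervalIntegrable _ _)
            intro x hx
            have hrx : ρ x = |r x| ^ q * |r x| := pow_succ _ _
            rw [hrx]
            calc |r x| ^ q * |r x| ≤ |r x| ^ q * δ :=
                mul_le_mul_of_nonneg_left (hrU x hx.1) (pow_nonneg (abs_nonneg _) _)
              _ = δ * |r x| ^ q := mul_comm _ _
        _ = δ * ∫ s in U..(v * t), |r s| ^ q := intervalIntegral.integral_const_mul _ _
        _ ≤ δ * Labs (v * t) := by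
            apply mul_le_mul_of_nonneg_left _ hδpos.le
            rw [hLabs]
            exact intervalIntegral.integral_mono_interval hU0 h1 (le_refl _)
              (Filter.Eventually.of_forall (fun x => pow_nonneg (abs_nonneg _) _))
              ((hcont.abs.pow q).intervalIntegrable _ _)
    have hU5 : U ≤ ε / 4 * L t := by
      calc U = ε / 4 * (4 * U / ε) := by field_simp
        _ ≤ ε / 4 * L t := mul_le_mul_of_nonneg_left h5 (by positivity)
    have hδB : δ * (2 * (B' * L t)) = ε / 4 * L t := by
      rw [hδdef]; field_simp; ring
    have c2 : δ * Labs (v * t) ≤ δ * (2 * (B' * L t)) := by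
      apply mul_le_mul_of_nonneg_left _ hδpos.le
      calc Labs (v * t) ≤ 2 * Labs t := hLabsvt
        _ ≤ 2 * (B' * L t) := by linarith
    have hmain : (∫ s in (0:ℝ)..(v * t), ρ s) ≤ ε / 2 * L t := by
      rw [hsplit]; linarith
    linarith
  -- Final assembly
  rw [isLittleO_iff]
  intro c hc
  have hcv : 0 < c / v := div_pos hc hv
  filter_upwards [main (c / v) hcv, eventually_ge_atTop (0:ℝ), hinf.eventually_ge_atTop 0]
    with t h1 ht hLt
  have hvt0 : 0 ≤ v * t := by positivity
  have hbound := key (v * t) hvt0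
  have hbound2 : (v * t) * (2 * ∫ s in (0:ℝ)..(v * t), ρ s)
      ≤ (v * t) * ((c / v) * L t) := mul_le_mul_of_nonneg_left h1 hvt0
  have heq : (v * t) * ((c / v) * L t) = c * (t * L t) := by
    field_simp
  rw [Real.norm_eq_abs, Real.norm_eq_abs, abs_of_nonneg (fnn _ hvt0),
    abs_of_nonneg (mul_nonneg ht hLt)]
  calc _ ≤ (v * t) * (2 * ∫ s in (0:ℝ)..(v * t), ρ s) := hbound
    _ ≤ (v * t) * ((c / v) * L t) := hbound2
    _ = c * (t * L t) := heq
end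

section
/- Fix H ∈ (0, 1). Then lim_{γ → ∞} ∫₀^∞ e^{−t} ∫₀^γ e^{−s} · (1/2) [ γ^{2H} − (γ − s)^{2H} − |t − γ|^{2H} + |γ − s − t|^{2H} ] ds dt = 0. (Equivalently, for a fractional Brownian motion B^H, E[ (∫₀^∞ e^{−t} B^H_t dt)(∫₀^γ e^{−s}(B^H_γ − B^H_{γ−s}) ds) ] → 0 as γ → ∞.) -/
open MeasureTheory Filter Set Real

private lemma aux_rpow_add_le {q x y : ℝ} (hq0 : 0 ≤ q) (hq1 : q ≤ 1) (hx : 0 ≤ x)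
    (hy : 0 ≤ y) : (x + y) ^ q ≤ x ^ q + y ^ q := by
  have h := NNReal.rpow_add_le_add_rpow x.toNNReal y.toNNReal hq0 hq1
  rw [← Real.toNNReal_add hx hy] at h
  have h' := NNReal.coe_le_coe.2 h
  rwa [NNReal.coe_rpow, NNReal.coe_add, NNReal.coe_rpow, NNReal.coe_rpow,
    Real.coe_toNNReal _ (by positivity), Real.coe_toNNReal _ hx, Real.coe_toNNReal _ hy] at h'

private lemma sub_rpow_le {q a b : ℝ} (hq0 : 0 ≤ q) (hq1 : q ≤ 1) (ha : 0 ≤ a)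
    (hab : a ≤ b) : b ^ q - a ^ q ≤ (b - a) ^ q := by
  have h : b ^ q ≤ a ^ q + (b - a) ^ q := by
    have h2 := aux_rpow_add_le hq0 hq1 ha (by linarith : (0:ℝ) ≤ b - a)
    rwa [show a + (b - a) = b by ring] at h2
  linarith

private lemma abs_rpow_sub_le {q x y : ℝ} (hq0 : 0 ≤ q) (hq1 : q ≤ 1) (hx : 0 ≤ x)
    (hy : 0 ≤ y) : |x ^ q - y ^ q| ≤ |x - y| ^ q := by
  rcases le_total x y with h | h
  · rw [abs_sub_comm, abs_of_nonneg (sub_nonneg.2 (Real.rpow_le_rpow hx h hq0)),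
      abs_sub_comm x y, abs_of_nonneg (sub_nonneg.2 h)]
    exact sub_rpow_le hq0 hq1 hx h
  · rw [abs_of_nonneg (sub_nonneg.2 (Real.rpow_le_rpow hy h hq0)),
      abs_of_nonneg (sub_nonneg.2 h)]
    exact sub_rpow_le hq0 hq1 hy h

private lemma tangent_le {p a b : ℝ} (hp : 1 ≤ p) (ha : 0 ≤ a) (hab : a ≤ b) :
    b ^ p - a ^ p ≤ p * b ^ (p - 1) * (b - a) := by
  rcases eq_or_lt_of_le (ha.trans hab) with hb | hb
  · have hb' : b = 0 := hb.symm
    have ha' : a = 0 := le_antisymm (hab.trans_eq hb') ha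
    subst hb'; subst ha'
    simp [Real.zero_rpow (by linarith : p ≠ 0)]
  · have hu1 : (-1 : ℝ) ≤ (a - b) / b := by
      rw [neg_le, ← neg_div]
      exact div_le_one_of_le₀ (by linarith) hb.le
    have hber := one_add_mul_self_le_rpow_one_add hu1 hp
    have h1u : 1 + (a - b) / b = a / b := by field_simp; ring
    rw [h1u, Real.div_rpow ha hb.le] at hber
    have hbp : (0:ℝ) < b ^ p := Real.rpow_pos_of_pos hb p
    have hsub : b ^ (p - 1) = b ^ p / b := Real.rpow_sub_one hb.ne' p
    rw [hsub]
    have := mul_le_mul_of_nonneg_left hber hbp.le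
    rw [mul_div_cancel₀ _ (by positivity : b ^ p ≠ 0)] at this
    have hexp : b ^ p * (1 + p * ((a - b) / b)) = b ^ p + p * (b ^ p / b) * (a - b) := by
      field_simp
    rw [hexp] at this
    linarith

private lemma tangent_ge {p a b : ℝ} (hp : 1 ≤ p) (ha : 0 ≤ a) (hab : a ≤ b) :
    p * a ^ (p - 1) * (b - a) ≤ b ^ p - a ^ p := by
  rcases eq_or_lt_of_le ha with ha0 | ha0
  · rw [← ha0]
    rcases eq_or_lt_of_le hp with hp1 | hp1
    · rw [← hp1]
      simp [Real.rpow_one]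
    · rw [Real.zero_rpow (by linarith : p - 1 ≠ 0), Real.zero_rpow (by linarith : p ≠ 0)]
      have : (0:ℝ) ≤ b ^ p := Real.rpow_nonneg (ha.trans hab) p
      nlinarith
  · have hu1 : (-1 : ℝ) ≤ (b - a) / a := by
      have : (0:ℝ) ≤ (b - a) / a := div_nonneg (by linarith) ha0.le
      linarith
    have hber := one_add_mul_self_le_rpow_one_add hu1 hp
    have h1u : 1 + (b - a) / a = b / a := by field_simp; ring
    rw [h1u, Real.div_rpow (ha0.le.trans hab) ha0.le] at hber
    have hap : (0:ℝ) < a ^ p := Real.rpow_pos_of_pos ha0 p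
    have hsub : a ^ (p - 1) = a ^ p / a := Real.rpow_sub_one ha0.ne' p
    rw [hsub]
    have := mul_le_mul_of_nonneg_left hber hap.le
    rw [mul_div_cancel₀ _ (by positivity : a ^ p ≠ 0)] at this
    have hexp : a ^ p * (1 + p * ((b - a) / a)) = a ^ p + p * (a ^ p / a) * (b - a) := by
      field_simp
    rw [hexp] at this
    linarith

private lemma tangent_concave {q a b : ℝ} (hq0 : 0 ≤ q) (hq1 : q ≤ 1) (ha : 0 < a)
    (hab : a ≤ b) : b ^ q - a ^ q ≤ q * a ^ (q - 1) * (b - a) := by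
  have hu1 : (-1 : ℝ) ≤ (b - a) / a := by
    have : (0:ℝ) ≤ (b - a) / a := div_nonneg (by linarith) ha.le
    linarith
  have hber := rpow_one_add_le_one_add_mul_self hu1 hq0 hq1
  have h1u : 1 + (b - a) / a = b / a := by field_simp; ring
  rw [h1u, Real.div_rpow (ha.le.trans hab) ha.le] at hber
  have hap : (0:ℝ) < a ^ q := Real.rpow_pos_of_pos ha q
  have hsub : a ^ (q - 1) = a ^ q / a := Real.rpow_sub_one ha.ne' q
  rw [hsub]
  have h2 := mul_le_mul_of_nonneg_left hber hap.le
  rw [mul_div_cancel₀ _ (by positivity : a ^ q ≠ 0)] at h2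
  have hexp : a ^ q * (1 + q * ((b - a) / a)) = a ^ q + q * (a ^ q / a) * (b - a) := by
    field_simp
  rw [hexp] at h2
  linarith

private lemma rpow_le_one_add {q x : ℝ} (hq0 : 0 ≤ q) (hq1 : q ≤ 1) (hx : 0 ≤ x) :
    x ^ q ≤ 1 + x := by
  rcases le_total x 1 with h | h
  · exact (Real.rpow_le_one hx h hq0).trans (by linarith)
  · calc x ^ q ≤ x ^ (1:ℝ) := Real.rpow_le_rpow_of_exponent_le h hq1
    _ = x := Real.rpow_one x
    _ ≤ 1 + x := by linarith

private lemma one_add_le_exp4 {x : ℝ} (hx : 0 ≤ x) : 1 + x ≤ 4 * Real.exp (4⁻¹ * x) := by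
  have h := Real.add_one_le_exp (4⁻¹ * x)
  nlinarith [Real.exp_pos (4⁻¹ * x)]

private lemma lemma2 {q c : ℝ} (hq0 : 0 < q) (hq1 : q < 1) (hc : 0 ≤ c) :
    Tendsto (fun x : ℝ => x ^ q - (x - c) ^ q) atTop (nhds 0) := by
  have hb : Tendsto (fun x : ℝ => q * c * (x - c) ^ (q - 1)) atTop (nhds 0) := by
    have h1 : Tendsto (fun x : ℝ => x ^ (-(1 - q))) atTop (nhds 0) :=
      tendsto_rpow_neg_atTop (by linarith)
    have h2 : Tendsto (fun x : ℝ => x - c) atTop atTop := by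
      have := tendsto_atTop_add_const_right atTop (-c) (tendsto_id (α := ℝ))
      refine this.congr fun x => ?_
      simp [sub_eq_add_neg]
    have h3 := (h1.comp h2).const_mul (q * c)
    rw [mul_zero] at h3
    refine h3.congr fun x => ?_
    simp only [Function.comp_apply]
    rw [show -(1 - q) = q - 1 by ring]
  apply squeeze_zero_norm' _ hb
  filter_upwards [eventually_ge_atTop (c + 1)] with x hx
  have h0 : (0:ℝ) < x - c := by linarith
  have hmono : (x - c) ^ q ≤ x ^ q := Real.rpow_le_rpow h0.le (by linarith) hq0.le
  have hup : x ^ q - (x - c) ^ q ≤ q * (x - c) ^ (q - 1) * c := by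
    have := tangent_concave hq0.le hq1.le h0 (by linarith : x - c ≤ x)
    rwa [sub_sub_cancel] at this
  rw [Real.norm_eq_abs, abs_of_nonneg (by linarith)]
  linarith [hup]

set_option maxHeartbeats 2000000 in
private lemma lemmaM {p γ s t : ℝ} (hp0 : 0 < p) (hp2 : p < 2) (hs : 0 < s) (hsγ : s ≤ γ)
    (ht : 0 < t) :
    |γ ^ p - (γ - s) ^ p - |t - γ| ^ p + |γ - s - t| ^ p| ≤ 6 * ((1 + s) * (1 + s + t) ^ 2) := by
  have hγ0 : (0:ℝ) < γ := hs.trans_le hsγ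
  have hγs : (0:ℝ) ≤ γ - s := by linarith
  have hsq1 : (1:ℝ) ≤ (1 + s + t) ^ 2 := by nlinarith
  rcases le_or_gt p 1 with hp1 | hp1
  · -- p ≤ 1
    have h1a : (γ - s) ^ p ≤ γ ^ p := Real.rpow_le_rpow hγs (by linarith) hp0.le
    have h1b : γ ^ p - (γ - s) ^ p ≤ s ^ p := by
      have := sub_rpow_le hp0.le hp1 hγs (by linarith : γ - s ≤ γ)
      rwa [show γ - (γ - s) = s by ring] at this
    have h2 : abs (|t - γ| ^ p - |γ - s - t| ^ p) ≤ s ^ p := by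
      have hd : abs (|t - γ| - |γ - s - t|) ≤ s := by
        have h3 : |γ - s - t| = |t + s - γ| := by rw [← abs_neg]; ring_nf
        rw [h3]
        have h4 := abs_abs_sub_abs_le_abs_sub (t - γ) (t + s - γ)
        calc abs (|t - γ| - |t + s - γ|) ≤ |(t - γ) - (t + s - γ)| := h4
          _ = s := by rw [show (t - γ) - (t + s - γ) = -s by ring, abs_neg, abs_of_pos hs]
      calc abs (|t - γ| ^ p - |γ - s - t| ^ p) ≤ abs (|t - γ| - |γ - s - t|) ^ p :=
            abs_rpow_sub_le hp0.le hp1 (abs_nonneg _) (abs_nonneg _)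
        _ ≤ s ^ p := Real.rpow_le_rpow (abs_nonneg _) hd hp0.le
    have hsp : s ^ p ≤ 1 + s := rpow_le_one_add hp0.le hp1 hs.le
    have habs := abs_sub_abs_le_abs_sub (|t - γ| ^ p) (|γ - s - t| ^ p)
    have h2' : -(s ^ p) ≤ |t - γ| ^ p - |γ - s - t| ^ p ∧
        |t - γ| ^ p - |γ - s - t| ^ p ≤ s ^ p := abs_le.1 h2
    rw [abs_le]
    constructor <;> nlinarith [h2'.1, h2'.2, Real.rpow_nonneg hs.le p]
  · -- 1 < p
    have hq0 : (0:ℝ) < p - 1 := by linarith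
    have hq1 : p - 1 ≤ 1 := by linarith
    have hpoly : t * (1 + s + t) ≤ (1 + s) * (1 + s + t) ^ 2 := by nlinarith
    have hpoly2 : s * (1 + s + t) ≤ (1 + s) * (1 + s + t) ^ 2 := by nlinarith
    have hpoly3 : (1 + s) * s ≤ (1 + s) * (1 + s + t) ^ 2 := by nlinarith
    rcases le_or_gt (s + t) γ with hc1 | hc1
    · -- s + t ≤ γ
      have habs1 : |t - γ| = γ - t := by rw [abs_of_nonpos (by linarith), neg_sub]
      have habs2 : |γ - s - t| = γ - s - t := abs_of_nonneg (by linarith)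
      rw [habs1, habs2]
      have hAC_u : γ ^ p - (γ - t) ^ p ≤ p * γ ^ (p - 1) * t := by
        have h := tangent_le (a := γ - t) (b := γ) hp1.le (by linarith) (by linarith)
        rwa [show γ - (γ - t) = t by ring] at h
      have hAC_l : p * (γ - t) ^ (p - 1) * t ≤ γ ^ p - (γ - t) ^ p := by
        have h := tangent_ge (a := γ - t) (b := γ) hp1.le (by linarith) (by linarith)
        rwa [show γ - (γ - t) = t by ring] at h
      have hBE_u : (γ - s) ^ p - (γ - s - t) ^ p ≤ p * (γ - s) ^ (p - 1) * t := by
        have h := tangent_le (a := γ - s - t) (b := γ - s) hp1.le (by linarith) (by linarith)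
        rwa [show (γ - s) - (γ - s - t) = t by ring] at h
      have hBE_l : p * (γ - s - t) ^ (p - 1) * t ≤ (γ - s) ^ p - (γ - s - t) ^ p := by
        have h := tangent_ge (a := γ - s - t) (b := γ - s) hp1.le (by linarith) (by linarith)
        rwa [show (γ - s) - (γ - s - t) = t by ring] at h
      have hm1 : (γ - s - t) ^ (p - 1) ≤ (γ - t) ^ (p - 1) :=
        Real.rpow_le_rpow (by linarith) (by linarith) (by linarith)
      have hm2 : (γ - s) ^ (p - 1) ≤ γ ^ (p - 1) :=
        Real.rpow_le_rpow (by linarith) (by linarith) (by linarith)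
      have hq_sub : γ ^ (p - 1) - (γ - s - t) ^ (p - 1) ≤ (s + t) ^ (p - 1) := by
        have h := sub_rpow_le (a := γ - s - t) (b := γ) hq0.le hq1 (by linarith) (by linarith)
        rwa [show γ - (γ - s - t) = s + t by ring] at h
      have hq_bd : (s + t) ^ (p - 1) ≤ 1 + s + t := by
        have h := rpow_le_one_add hq0.le hq1 (by linarith : (0:ℝ) ≤ s + t)
        linarith
      have hpt : (0:ℝ) ≤ p * t := by positivity
      have k1 := mul_le_mul_of_nonneg_left hq_sub hpt
      have k2 := mul_le_mul_of_nonneg_left hq_bd hpt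
      have k3 := mul_le_mul_of_nonneg_left hm1 hpt
      have k4 := mul_le_mul_of_nonneg_left hm2 hpt
      have hfin : p * t * (1 + s + t) ≤ 6 * ((1 + s) * (1 + s + t) ^ 2) := by
        have h2p : 0 ≤ (2 - p) * (t * (1 + s + t)) :=
          mul_nonneg (by linarith) (by positivity)
        nlinarith
      rw [abs_le]
      constructor
      · linarith [k1, k2, k3, k4, hfin, hAC_l, hBE_u]
      · linarith [k1, k2, k3, k4, hfin, hAC_u, hBE_l]
    · rcases le_or_gt t γ with hc2 | hc2
      · -- t ≤ γ < s + t
        have habs1 : |t - γ| = γ - t := by rw [abs_of_nonpos (by linarith), neg_sub]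
        have habs2 : |γ - s - t| = s + t - γ := by
          rw [abs_of_nonpos (by linarith)]; ring
        rw [habs1, habs2]
        have hAB_u : γ ^ p - (γ - s) ^ p ≤ p * γ ^ (p - 1) * s := by
          have h := tangent_le (a := γ - s) (b := γ) hp1.le hγs (by linarith)
          rwa [show γ - (γ - s) = s by ring] at h
        have hAB_l : (0:ℝ) ≤ γ ^ p - (γ - s) ^ p := by
          have h := Real.rpow_le_rpow hγs (by linarith : γ - s ≤ γ) hp0.le
          linarith
        have hsq : s ^ (p - 1) ≤ 1 + s := rpow_le_one_add hq0.le hq1 hs.le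
        have hsp : s ^ (p - 1) * s = s ^ p := by
          rw [Real.rpow_sub_one hs.ne' p]; field_simp
        have hsp_le : s ^ p ≤ (1 + s) * s := by
          rw [← hsp]; exact mul_le_mul_of_nonneg_right hsq hs.le
        have hC_u : (γ - t) ^ p ≤ s ^ p :=
          Real.rpow_le_rpow (by linarith) (by linarith) hp0.le
        have hC_l : (0:ℝ) ≤ (γ - t) ^ p := Real.rpow_nonneg (by linarith) p
        have hE_u : (s + t - γ) ^ p ≤ s ^ p :=
          Real.rpow_le_rpow (by linarith) (by linarith) hp0.le
        have hE_l : (0:ℝ) ≤ (s + t - γ) ^ p := Real.rpow_nonneg (by linarith) p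
        have hγq : γ ^ (p - 1) ≤ 1 + s + t := by
          have h1 : γ ^ (p - 1) ≤ (s + t) ^ (p - 1) :=
            Real.rpow_le_rpow hγ0.le hc1.le (by linarith)
          have h2 := rpow_le_one_add hq0.le hq1 (by linarith : (0:ℝ) ≤ s + t)
          linarith
        have hps : (0:ℝ) ≤ p * s := by positivity
        have k1 := mul_le_mul_of_nonneg_left hγq hps
        have hfin : p * s * (1 + s + t) ≤ 2 * (s * (1 + s + t)) := by
          have h2p : 0 ≤ (2 - p) * (s * (1 + s + t)) :=
            mul_nonneg (by linarith) (by positivity)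
          nlinarith
        rw [abs_le]
        constructor
        · linarith [hAB_l, hC_u, hE_l, hsp_le, hpoly3]
        · linarith [hAB_u, hC_l, hE_u, hsp_le, k1, hfin, hpoly2, hpoly3]
      · -- γ < t
        have habs1 : |t - γ| = t - γ := abs_of_nonneg (by linarith)
        have habs2 : |γ - s - t| = s + t - γ := by
          rw [abs_of_nonpos (by linarith)]; ring
        rw [habs1, habs2]
        have hAB_u : γ ^ p - (γ - s) ^ p ≤ p * γ ^ (p - 1) * s := by
          have h := tangent_le (a := γ - s) (b := γ) hp1.le hγs (by linarith)
          rwa [show γ - (γ - s) = s by ring] at h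
        have hAB_l : (0:ℝ) ≤ γ ^ p - (γ - s) ^ p := by
          have h := Real.rpow_le_rpow hγs (by linarith : γ - s ≤ γ) hp0.le
          linarith
        have hEC_u : (s + t - γ) ^ p - (t - γ) ^ p ≤ p * (s + t - γ) ^ (p - 1) * s := by
          have h := tangent_le (a := t - γ) (b := s + t - γ) hp1.le (by linarith) (by linarith)
          rwa [show (s + t - γ) - (t - γ) = s by ring] at h
        have hEC_l : (0:ℝ) ≤ (s + t - γ) ^ p - (t - γ) ^ p := by
          have h := Real.rpow_le_rpow (by linarith : (0:ℝ) ≤ t - γ)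
            (by linarith : t - γ ≤ s + t - γ) hp0.le
          linarith
        have hγq : γ ^ (p - 1) ≤ 1 + s + t := by
          have h1 : γ ^ (p - 1) ≤ (s + t) ^ (p - 1) :=
            Real.rpow_le_rpow hγ0.le (by linarith) (by linarith)
          have h2 := rpow_le_one_add hq0.le hq1 (by linarith : (0:ℝ) ≤ s + t)
          linarith
        have hstq : (s + t - γ) ^ (p - 1) ≤ 1 + s + t := by
          have h1 : (s + t - γ) ^ (p - 1) ≤ (s + t) ^ (p - 1) :=
            Real.rpow_le_rpow (by linarith) (by linarith) (by linarith)
          have h2 := rpow_le_one_add hq0.le hq1 (by linarith : (0:ℝ) ≤ s + t)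
          linarith
        have hps : (0:ℝ) ≤ p * s := by positivity
        have k1 := mul_le_mul_of_nonneg_left hγq hps
        have k2 := mul_le_mul_of_nonneg_left hstq hps
        have hfin : p * s * (1 + s + t) ≤ 2 * (s * (1 + s + t)) := by
          have h2p : 0 ≤ (2 - p) * (s * (1 + s + t)) :=
            mul_nonneg (by linarith) (by positivity)
          nlinarith
        rw [abs_le]
        constructor
        · linarith [hAB_l, hEC_l, hpoly2]
        · linarith [hAB_u, hEC_u, k1, k2, hfin, hpoly2]

set_option maxHeartbeats 1000000 in
private lemma lemmaP {p s t : ℝ} (hp0 : 0 < p) (hp2 : p < 2) (hs : 0 < s) (ht : 0 < t) :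
    Tendsto (fun γ : ℝ => γ ^ p - (γ - s) ^ p - |t - γ| ^ p + |γ - s - t| ^ p)
      atTop (nhds 0) := by
  have hshift : Tendsto (fun γ : ℝ => γ - s) atTop atTop := by
    have h := tendsto_atTop_add_const_right atTop (-s) (tendsto_id (α := ℝ))
    refine h.congr fun x => ?_
    simp [sub_eq_add_neg]
  rcases lt_trichotomy p 1 with hp1 | hp1 | hp1
  · -- p < 1
    have h1 := lemma2 hp0 hp1 ht.le
    have h2 : Tendsto (fun γ : ℝ => (γ - s) ^ p - (γ - s - t) ^ p) atTop (nhds 0) := by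
      have h := (lemma2 hp0 hp1 ht.le).comp hshift
      exact h
    have h3 := h1.sub h2
    rw [sub_zero] at h3
    apply h3.congr'
    filter_upwards [eventually_ge_atTop (s + t)] with γ hγ
    have habs1 : |t - γ| = γ - t := by rw [abs_of_nonpos (by linarith), neg_sub]
    have habs2 : |γ - s - t| = γ - s - t := abs_of_nonneg (by linarith)
    rw [habs1, habs2]; ring
  · -- p = 1
    subst hp1
    apply (tendsto_const_nhds (x := (0:ℝ))).congr'
    filter_upwards [eventually_ge_atTop (s + t)] with γ hγ
    have habs1 : |t - γ| = γ - t := by rw [abs_of_nonpos (by linarith), neg_sub]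
    have habs2 : |γ - s - t| = γ - s - t := abs_of_nonneg (by linarith)
    rw [habs1, habs2, Real.rpow_one, Real.rpow_one, Real.rpow_one, Real.rpow_one]
    ring
  · -- 1 < p
    have hq0 : (0:ℝ) < p - 1 := by linarith
    have hq1 : p - 1 < 1 := by linarith
    have hbnd : Tendsto (fun γ : ℝ => p * t * (γ ^ (p - 1) - (γ - (s + t)) ^ (p - 1)))
        atTop (nhds 0) := by
      have h := (lemma2 hq0 hq1 (by linarith : (0:ℝ) ≤ s + t)).const_mul (p * t)
      rwa [mul_zero] at h
    apply squeeze_zero_norm' _ hbnd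
    filter_upwards [eventually_ge_atTop (s + t)] with γ hγ
    have habs1 : |t - γ| = γ - t := by rw [abs_of_nonpos (by linarith), neg_sub]
    have habs2 : |γ - s - t| = γ - s - t := abs_of_nonneg (by linarith)
    rw [habs1, habs2, Real.norm_eq_abs]
    have hAC_u : γ ^ p - (γ - t) ^ p ≤ p * γ ^ (p - 1) * t := by
      have h := tangent_le (a := γ - t) (b := γ) hp1.le (by linarith) (by linarith)
      rwa [show γ - (γ - t) = t by ring] at h
    have hAC_l : p * (γ - t) ^ (p - 1) * t ≤ γ ^ p - (γ - t) ^ p := by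
      have h := tangent_ge (a := γ - t) (b := γ) hp1.le (by linarith) (by linarith)
      rwa [show γ - (γ - t) = t by ring] at h
    have hBE_u : (γ - s) ^ p - (γ - s - t) ^ p ≤ p * (γ - s) ^ (p - 1) * t := by
      have h := tangent_le (a := γ - s - t) (b := γ - s) hp1.le (by linarith) (by linarith)
      rwa [show (γ - s) - (γ - s - t) = t by ring] at h
    have hBE_l : p * (γ - s - t) ^ (p - 1) * t ≤ (γ - s) ^ p - (γ - s - t) ^ p := by
      have h := tangent_ge (a := γ - s - t) (b := γ - s) hp1.le (by linarith) (by linarith)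
      rwa [show (γ - s) - (γ - s - t) = t by ring] at h
    have hm1 : (γ - s - t) ^ (p - 1) ≤ (γ - t) ^ (p - 1) :=
      Real.rpow_le_rpow (by linarith) (by linarith) (by linarith)
    have hm2 : (γ - s) ^ (p - 1) ≤ γ ^ (p - 1) :=
      Real.rpow_le_rpow (by linarith) (by linarith) (by linarith)
    have hsub : γ - (s + t) = γ - s - t := by ring
    rw [hsub, abs_le]
    have hpt : (0:ℝ) ≤ p * t := by positivity
    have k3 := mul_le_mul_of_nonneg_left hm1 hpt
    have k4 := mul_le_mul_of_nonneg_left hm2 hpt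
    constructor
    · linarith [hAC_l, hBE_u, k3, k4]
    · linarith [hAC_u, hBE_l]

private lemma f_bound {p γ s t : ℝ} (hp0 : 0 < p) (hp2 : p < 2) (hs : 0 < s) (hsγ : s ≤ γ)
    (ht : 0 < t) :
    |Real.exp (-s) * ((γ ^ p - (γ - s) ^ p - |t - γ| ^ p + |γ - s - t| ^ p) / 2)|
      ≤ 192 * (1 + t) ^ 2 * Real.exp (-4⁻¹ * s) := by
  have hM := lemmaM hp0 hp2 hs hsγ ht
  have hpoly : 3 * ((1 + s) * (1 + s + t) ^ 2) ≤ 192 * (1 + t) ^ 2 * Real.exp (3 * (4⁻¹ * s)) := by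
    have e1 : (1:ℝ) + s ≤ 4 * Real.exp (4⁻¹ * s) := one_add_le_exp4 hs.le
    have e2 : Real.exp (3 * (4⁻¹ * s)) = Real.exp (4⁻¹ * s) ^ (3:ℕ) := by
      rw [← Real.exp_nat_mul]; norm_num
    have h2 : (1:ℝ) + s + t ≤ (1 + s) * (1 + t) := by nlinarith
    have h2sq : ((1:ℝ) + s + t) ^ 2 ≤ ((1 + s) * (1 + t)) ^ 2 := by
      apply pow_le_pow_left₀ (by positivity) h2
    have e1cube : ((1:ℝ) + s) ^ 3 ≤ (4 * Real.exp (4⁻¹ * s)) ^ 3 :=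
      pow_le_pow_left₀ (by positivity) e1 3
    rw [e2]
    nlinarith [Real.exp_pos (4⁻¹ * s), sq_nonneg (1 + t), sq_nonneg (1 + s),
      mul_pos (Real.exp_pos (4⁻¹ * s)) (Real.exp_pos (4⁻¹ * s)),
      mul_le_mul_of_nonneg_right h2sq (by positivity : (0:ℝ) ≤ 1 + s)]
  rw [abs_mul, abs_of_pos (Real.exp_pos (-s)), abs_div, abs_two]
  have step1 : Real.exp (-s) * (|γ ^ p - (γ - s) ^ p - |t - γ| ^ p + |γ - s - t| ^ p| / 2)
      ≤ Real.exp (-s) * (3 * ((1 + s) * (1 + s + t) ^ 2)) := by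
    apply mul_le_mul_of_nonneg_left _ (Real.exp_pos (-s)).le
    linarith
  have step2 : Real.exp (-s) * (3 * ((1 + s) * (1 + s + t) ^ 2))
      ≤ Real.exp (-s) * (192 * (1 + t) ^ 2 * Real.exp (3 * (4⁻¹ * s))) :=
    mul_le_mul_of_nonneg_left hpoly (Real.exp_pos (-s)).le
  have step3 : Real.exp (-s) * (192 * (1 + t) ^ 2 * Real.exp (3 * (4⁻¹ * s)))
      = 192 * (1 + t) ^ 2 * Real.exp (-4⁻¹ * s) := by
    rw [show (192:ℝ) * (1 + t) ^ 2 * Real.exp (3 * (4⁻¹ * s))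
        = 192 * (1 + t) ^ 2 * Real.exp (3 * (4⁻¹ * s)) from rfl]
    rw [mul_comm (Real.exp (-s)), mul_assoc, ← Real.exp_add]
    congr 2
    ring
  linarith [step1, step2, step3.le, step3.ge]

private lemma cont_ts {p γ : ℝ} (hp0 : 0 ≤ p) : Continuous (fun q : ℝ × ℝ =>
    Real.exp (-q.2) * ((γ ^ p - (γ - q.2) ^ p - |q.1 - γ| ^ p + |γ - q.2 - q.1| ^ p) / 2)) := by
  have h := Real.continuous_rpow_const hp0
  have c1 : Continuous fun q : ℝ × ℝ => (γ - q.2) ^ p :=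
    h.comp (continuous_const.sub continuous_snd)
  have c2 : Continuous fun q : ℝ × ℝ => |q.1 - γ| ^ p :=
    h.comp (continuous_fst.sub continuous_const).abs
  have c3 : Continuous fun q : ℝ × ℝ => |γ - q.2 - q.1| ^ p :=
    h.comp ((continuous_const.sub continuous_snd).sub continuous_fst).abs
  exact (Real.continuous_exp.comp continuous_snd.neg).mul
    ((((continuous_const.sub c1).sub c2).add c3).div_const 2)

private lemma cont_s {p γ t : ℝ} (hp0 : 0 ≤ p) : Continuous (fun s : ℝ =>
    Real.exp (-s) * ((γ ^ p - (γ - s) ^ p - |t - γ| ^ p + |γ - s - t| ^ p) / 2)) := by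
  have h := Real.continuous_rpow_const hp0
  have c1 : Continuous fun s : ℝ => (γ - s) ^ p := h.comp (continuous_const.sub continuous_id)
  have c3 : Continuous fun s : ℝ => |γ - s - t| ^ p :=
    h.comp ((continuous_const.sub continuous_id).sub continuous_const).abs
  exact (Real.continuous_exp.comp continuous_neg).mul
    ((((continuous_const.sub c1).sub continuous_const).add c3).div_const 2)

private lemma inner_tendsto {p t : ℝ} (hp0 : 0 < p) (hp2 : p < 2) (ht : 0 < t) :
    Tendsto (fun γ : ℝ => ∫ s in (0:ℝ)..γ,
      Real.exp (-s) * ((γ ^ p - (γ - s) ^ p - |t - γ| ^ p + |γ - s - t| ^ p) / 2))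
      atTop (nhds 0) := by
  have hdct := MeasureTheory.tendsto_integral_filter_of_dominated_convergence
    (μ := volume.restrict (Ioi (0:ℝ))) (l := atTop) (f := fun _ : ℝ => (0:ℝ))
    (F := fun (γ : ℝ) (s : ℝ) => (Ioc (0:ℝ) γ).indicator
      (fun s => Real.exp (-s) * ((γ ^ p - (γ - s) ^ p - |t - γ| ^ p + |γ - s - t| ^ p) / 2)) s)
    (bound := fun s => 192 * (1 + t) ^ 2 * Real.exp (-4⁻¹ * s))
    (by
      filter_upwards with γ
      exact ((cont_s (γ := γ) (t := t) hp0.le).aestronglyMeasurable).indicator measurableSet_Ioc)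
    (by
      filter_upwards [eventually_ge_atTop (0:ℝ)] with γ hγ
      refine (ae_restrict_mem measurableSet_Ioi).mono fun s hs => ?_
      by_cases hmem : s ∈ Ioc (0:ℝ) γ
      · rw [Set.indicator_of_mem hmem, Real.norm_eq_abs]
        exact f_bound hp0 hp2 hs hmem.2 ht
      · rw [Set.indicator_of_notMem hmem, norm_zero]
        positivity)
    (by
      have h := exp_neg_integrableOn_Ioi 0 (by norm_num : (0:ℝ) < 4⁻¹)
      exact h.const_mul _)
    (by
      refine (ae_restrict_mem measurableSet_Ioi).mono fun s hs => ?_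
      have hs' : (0:ℝ) < s := hs
      have hD := (lemmaP hp0 hp2 hs' ht).const_mul (Real.exp (-s) / 2)
      rw [mul_zero] at hD
      apply hD.congr'
      filter_upwards [eventually_ge_atTop s] with γ hγ
      rw [Set.indicator_of_mem (Set.mem_Ioc.2 ⟨hs', hγ⟩)]
      ring)
  simp only [MeasureTheory.integral_zero] at hdct
  apply hdct.congr'
  filter_upwards [eventually_ge_atTop (0:ℝ)] with γ hγ
  rw [MeasureTheory.integral_indicator measurableSet_Ioc,
    MeasureTheory.Measure.restrict_restrict measurableSet_Ioc,
    Set.inter_eq_self_of_subset_left Ioc_subset_Ioi_self,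
    intervalIntegral.integral_of_le hγ]

private lemma inner_bound {p γ t : ℝ} (hp0 : 0 < p) (hp2 : p < 2) (hγ : 0 ≤ γ) (ht : 0 < t) :
    |∫ s in (0:ℝ)..γ,
        Real.exp (-s) * ((γ ^ p - (γ - s) ^ p - |t - γ| ^ p + |γ - s - t| ^ p) / 2)|
      ≤ 192 * (1 + t) ^ 2 * ∫ s in Ioi (0:ℝ), Real.exp (-4⁻¹ * s) := by
  rw [intervalIntegral.integral_of_le hγ]
  have hfc : Continuous (fun s : ℝ =>
      Real.exp (-s) * ((γ ^ p - (γ - s) ^ p - |t - γ| ^ p + |γ - s - t| ^ p) / 2)) :=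
    cont_s hp0.le
  have hbc : Continuous (fun s : ℝ => 192 * (1 + t) ^ 2 * Real.exp (-4⁻¹ * s)) := by
    exact continuous_const.mul (Real.continuous_exp.comp (continuous_const.mul continuous_id))
  have hbInt : IntegrableOn (fun s : ℝ => 192 * (1 + t) ^ 2 * Real.exp (-4⁻¹ * s)) (Ioi 0) :=
    (exp_neg_integrableOn_Ioi 0 (by norm_num : (0:ℝ) < 4⁻¹)).const_mul _
  calc |∫ s in Ioc (0:ℝ) γ, Real.exp (-s) *
          ((γ ^ p - (γ - s) ^ p - |t - γ| ^ p + |γ - s - t| ^ p) / 2)|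
      ≤ ∫ s in Ioc (0:ℝ) γ, |Real.exp (-s) *
          ((γ ^ p - (γ - s) ^ p - |t - γ| ^ p + |γ - s - t| ^ p) / 2)| := by
        have h := MeasureTheory.norm_integral_le_integral_norm
          (μ := volume.restrict (Ioc (0:ℝ) γ)) (fun s => Real.exp (-s) *
            ((γ ^ p - (γ - s) ^ p - |t - γ| ^ p + |γ - s - t| ^ p) / 2))
        simp only [Real.norm_eq_abs] at h
        exact h
    _ ≤ ∫ s in Ioc (0:ℝ) γ, 192 * (1 + t) ^ 2 * Real.exp (-4⁻¹ * s) := by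
        apply MeasureTheory.setIntegral_mono_on
        · exact hfc.abs.integrableOn_Ioc
        · exact hbc.integrableOn_Ioc
        · exact measurableSet_Ioc
        · intro s hs
          exact f_bound hp0 hp2 hs.1 hs.2 ht
    _ ≤ ∫ s in Ioi (0:ℝ), 192 * (1 + t) ^ 2 * Real.exp (-4⁻¹ * s) := by
        apply MeasureTheory.setIntegral_mono_set hbInt
        · filter_upwards with s
          positivity
        · exact (Ioc_subset_Ioi_self).eventuallyLE
    _ = 192 * (1 + t) ^ 2 * ∫ s in Ioi (0:ℝ), Real.exp (-4⁻¹ * s) := by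
        exact MeasureTheory.integral_const_mul _ _

/-- For `H ∈ (0,1)`,
`∫₀^∞ e^{−t} ∫₀^γ e^{−s} (1/2)[γ^{2H} − (γ−s)^{2H} − |t−γ|^{2H} + |γ−s−t|^{2H}] ds dt → 0`
as `γ → ∞` (i.e. `E[(∫₀^∞ e^{−t} B^H_t dt)(∫₀^γ e^{−s}(B^H_γ − B^H_{γ−s}) ds)] → 0`). -/
theorem stmt13 (H : ℝ) (hH : H ∈ Set.Ioo (0:ℝ) 1) :
    Tendsto
      (fun γ : ℝ =>
        ∫ t in Set.Ioi (0:ℝ), Real.exp (-t) *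
          ∫ s in (0:ℝ)..γ, Real.exp (-s) *
            ((γ ^ (2 * H) - (γ - s) ^ (2 * H) - |t - γ| ^ (2 * H) + |γ - s - t| ^ (2 * H)) / 2))
      atTop (nhds 0) := by
  obtain ⟨hH0, hH1⟩ := hH
  set p := 2 * H with hp
  have hp0 : 0 < p := by positivity
  have hp2 : p < 2 := by rw [hp]; linarith
  set A : ℝ := ∫ s in Ioi (0:ℝ), Real.exp (-4⁻¹ * s) with hA
  have hA0 : 0 ≤ A := MeasureTheory.integral_nonneg fun s => (Real.exp_pos _).le
  have hdct := MeasureTheory.tendsto_integral_filter_of_dominated_convergence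
    (μ := volume.restrict (Ioi (0:ℝ))) (l := atTop) (f := fun _ : ℝ => (0:ℝ))
    (F := fun (γ : ℝ) (t : ℝ) => Real.exp (-t) *
      ∫ s in (0:ℝ)..γ, Real.exp (-s) *
        ((γ ^ p - (γ - s) ^ p - |t - γ| ^ p + |γ - s - t| ^ p) / 2))
    (bound := fun t => 3072 * A * Real.exp (-2⁻¹ * t))
    (by
      filter_upwards [eventually_ge_atTop (0:ℝ)] with γ hγ
      have hSM : StronglyMeasurable (fun t : ℝ => ∫ s in Ioc (0:ℝ) γ, Real.exp (-s) *
          ((γ ^ p - (γ - s) ^ p - |t - γ| ^ p + |γ - s - t| ^ p) / 2)) :=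
        (cont_ts (γ := γ) hp0.le).stronglyMeasurable.integral_prod_right'
      have hSM2 : StronglyMeasurable (fun t : ℝ => Real.exp (-t) *
          ∫ s in Ioc (0:ℝ) γ, Real.exp (-s) *
            ((γ ^ p - (γ - s) ^ p - |t - γ| ^ p + |γ - s - t| ^ p) / 2)) :=
        (Real.continuous_exp.comp continuous_neg).stronglyMeasurable.mul hSM
      refine hSM2.aestronglyMeasurable.congr (Filter.Eventually.of_forall fun t => ?_)
      simp only [intervalIntegral.integral_of_le hγ]
    )
    (by
      filter_upwards [eventually_ge_atTop (0:ℝ)] with γ hγ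
      refine (ae_restrict_mem measurableSet_Ioi).mono fun t ht => ?_
      have ht' : (0:ℝ) < t := ht
      have hb := inner_bound (γ := γ) hp0 hp2 hγ ht'
      have e2 : Real.exp (2⁻¹ * t) = Real.exp (4⁻¹ * t) ^ (2:ℕ) := by
        rw [← Real.exp_nat_mul]; congr 1; push_cast; ring
      have e1 : (1 + t) ^ 2 ≤ 16 * Real.exp (2⁻¹ * t) := by
        have h4 := one_add_le_exp4 ht'.le
        rw [e2]
        nlinarith [Real.exp_pos (4⁻¹ * t)]
      have e3 : Real.exp (-t) * Real.exp (2⁻¹ * t) = Real.exp (-2⁻¹ * t) := by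
        rw [← Real.exp_add]; congr 1; ring
      rw [Real.norm_eq_abs, abs_mul, abs_of_pos (Real.exp_pos (-t))]
      calc Real.exp (-t) * |∫ s in (0:ℝ)..γ, Real.exp (-s) *
              ((γ ^ p - (γ - s) ^ p - |t - γ| ^ p + |γ - s - t| ^ p) / 2)|
          ≤ Real.exp (-t) * (192 * (1 + t) ^ 2 * A) :=
            mul_le_mul_of_nonneg_left hb (Real.exp_pos (-t)).le
        _ ≤ 3072 * A * Real.exp (-2⁻¹ * t) := by
            have h5 : Real.exp (-t) * ((1 + t) ^ 2) ≤ 16 * Real.exp (-2⁻¹ * t) := by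
              have h6 := mul_le_mul_of_nonneg_left e1 (Real.exp_pos (-t)).le
              calc Real.exp (-t) * (1 + t) ^ 2
                  ≤ Real.exp (-t) * (16 * Real.exp (2⁻¹ * t)) := h6
                _ = 16 * (Real.exp (-t) * Real.exp (2⁻¹ * t)) := by ring
                _ = 16 * Real.exp (-2⁻¹ * t) := by rw [e3]
            calc Real.exp (-t) * (192 * (1 + t) ^ 2 * A)
                = 192 * A * (Real.exp (-t) * (1 + t) ^ 2) := by ring
              _ ≤ 192 * A * (16 * Real.exp (-2⁻¹ * t)) := by
                  exact mul_le_mul_of_nonneg_left h5 (by positivity)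
              _ = 3072 * A * Real.exp (-2⁻¹ * t) := by ring
    )
    (by
      have h := exp_neg_integrableOn_Ioi 0 (by norm_num : (0:ℝ) < 2⁻¹)
      exact h.const_mul _)
    (by
      refine (ae_restrict_mem measurableSet_Ioi).mono fun t ht => ?_
      have ht' : (0:ℝ) < t := ht
      have h := (inner_tendsto hp0 hp2 ht').const_mul (Real.exp (-t))
      rwa [mul_zero] at h)
  simp only [MeasureTheory.integral_zero] at hdct
  exact hdct
end

section
/- For every H ∈ (0, 1/2), ∫₀^∞ ψ_H(t) dt = 0, where ψ_H(t) = Γ(2H+1) e^{−t} + 2H [ e^{t} ∫_t^∞ e^{−s} s^{2H−1} ds − e^{−t} ∫₀^t e^{s} s^{2H−1} ds ]; that is, I_{1,H} = 0 for all 0 < H < 1/2. -/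
open MeasureTheory Real

/-- `ψ_H(t) = Γ(2H+1) e^{−t} + 2H [e^t ∫_t^∞ e^{−s} s^{2H−1} ds − e^{−t} ∫₀^t e^s s^{2H−1} ds]`. -/
noncomputable def psiH (H t : ℝ) : ℝ :=
  Real.Gamma (2 * H + 1) * Real.exp (-t) +
    2 * H * (Real.exp t * (∫ s in Set.Ioi t, Real.exp (-s) * s ^ (2 * H - 1)) -
      Real.exp (-t) * ∫ s in (0:ℝ)..t, Real.exp s * s ^ (2 * H - 1))

open Set Filter Topology

namespace Stmt15

variable {H : ℝ}

/-- Tangent line inequality for concave-type rpow with exponent in (-1, 0]. -/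
lemma tangent {p a b : ℝ} (hp0 : -1 < p) (hp1 : p ≤ 0) (ha : 0 < a) (hab : a ≤ b) :
    a ^ p - b ^ p ≤ (-p) * a ^ (p - 1) * (b - a) := by
  have hb : 0 < b := lt_of_lt_of_le ha hab
  set q : ℝ := -p with hq
  have hq0 : 0 ≤ q := by simp [hq]; linarith
  have hq1 : q ≤ 1 := by simp [hq]; linarith
  have hba1 : 1 ≤ b / a := (one_le_div ha).2 hab
  have hba0 : 0 < b / a := div_pos hb ha
  -- Bernoulli
  have key : (b / a) ^ q ≤ 1 + q * (b / a - 1) := by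
    have := rpow_one_add_le_one_add_mul_self (s := b / a - 1) (by linarith) hq0 hq1
    simpa using this
  have hy1 : 1 ≤ (b / a) ^ q := by
    calc (1:ℝ) = 1 ^ q := (one_rpow q).symm
    _ ≤ (b / a) ^ q := rpow_le_rpow zero_le_one hba1 hq0
  have hy0 : 0 < (b / a) ^ q := lt_of_lt_of_le one_pos hy1
  -- 1 - y⁻¹ ≤ y - 1 for y ≥ 1
  have hinv : 1 - ((b / a) ^ q)⁻¹ ≤ (b / a) ^ q - 1 := by
    have h1 : (b / a) ^ q * ((b / a) ^ q)⁻¹ = 1 := mul_inv_cancel₀ hy0.ne'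
    nlinarith [sq_nonneg ((b / a) ^ q - 1), hy0.le]
  have hbap : b ^ p = a ^ p * (b / a) ^ p := by
    rw [div_rpow hb.le ha.le, mul_div_assoc']
    field_simp [(rpow_pos_of_pos ha p).ne']
  have hbapq : (b / a) ^ p = ((b / a) ^ q)⁻¹ := by
    rw [hq, ← rpow_neg hba0.le, neg_neg]
  have hap : 0 < a ^ p := rpow_pos_of_pos ha p
  have step : a ^ p - b ^ p ≤ a ^ p * (q * (b / a - 1)) := by
    rw [hbap, hbapq]
    have : 1 - ((b / a) ^ q)⁻¹ ≤ q * (b / a - 1) := hinv.trans (by linarith)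
    calc a ^ p - a ^ p * ((b / a) ^ q)⁻¹ = a ^ p * (1 - ((b / a) ^ q)⁻¹) := by ring
    _ ≤ a ^ p * (q * (b / a - 1)) := by
        exact mul_le_mul_of_nonneg_left this hap.le
  have hsplit : a ^ p * (q * (b / a - 1)) = q * a ^ (p - 1) * (b - a) := by
    have : a ^ (p - 1) = a ^ p / a := by
      rw [rpow_sub ha, rpow_one]
    rw [this]
    field_simp
  have fin : a ^ p - b ^ p ≤ q * a ^ (p - 1) * (b - a) := step.trans_eq hsplit
  rw [hq] at fin
  exact fin

noncomputable def P1 (H t : ℝ) : ℝ := ∫ s in (0:ℝ)..t, Real.exp (-s) * s ^ (2*H - 1)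
noncomputable def P2 (H t : ℝ) : ℝ := ∫ s in (0:ℝ)..t, Real.exp s * s ^ (2*H - 1)
noncomputable def GG (H t : ℝ) : ℝ :=
  -(Real.Gamma (2*H + 1) * Real.exp (-t)) +
    2*H*(Real.exp t * (Real.Gamma (2*H) - P1 H t) + Real.exp (-t) * P2 H t)

lemma phi1_int (hH0 : 0 < H) :
    IntegrableOn (fun s : ℝ => Real.exp (-s) * s ^ (2*H - 1)) (Ioi 0) := by
  have := Real.GammaIntegral_convergent (s := 2*H) (by linarith)
  simpa using this

lemma phi1_cont (hH0 : 0 < H) :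
    ContinuousOn (fun s : ℝ => Real.exp (-s) * s ^ (2*H - 1)) (Ioi 0) := by
  intro x hx
  exact ((Real.continuous_exp.comp continuous_neg).continuousAt.mul
    (Real.continuousAt_rpow_const x _ (Or.inl (ne_of_gt hx)))).continuousWithinAt

lemma phi2_cont (hH0 : 0 < H) :
    ContinuousOn (fun s : ℝ => Real.exp s * s ^ (2*H - 1)) (Ioi 0) := by
  intro x hx
  exact (Real.continuous_exp.continuousAt.mul
    (Real.continuousAt_rpow_const x _ (Or.inl (ne_of_gt hx)))).continuousWithinAt

lemma phi1_ii (hH0 : 0 < H) {b : ℝ} (hb : 0 ≤ b) :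
    IntervalIntegrable (fun s : ℝ => Real.exp (-s) * s ^ (2*H - 1)) volume 0 b := by
  rw [intervalIntegrable_iff_integrableOn_Ioc_of_le hb]
  exact (phi1_int hH0).mono_set Ioc_subset_Ioi_self

lemma phi2_ii (hH0 : 0 < H) {b : ℝ} (hb : 0 ≤ b) :
    IntervalIntegrable (fun s : ℝ => Real.exp s * s ^ (2*H - 1)) volume 0 b := by
  rw [intervalIntegrable_iff_integrableOn_Ioc_of_le hb]
  have hrpow : IntegrableOn (fun s : ℝ => s ^ (2*H - 1)) (Ioc 0 b) := by
    rw [← intervalIntegrable_iff_integrableOn_Ioc_of_le hb]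
    exact intervalIntegral.intervalIntegrable_rpow' (by linarith)
  refine Integrable.mono' (hrpow.const_mul (Real.exp b)) ?_ ?_
  · refine (ContinuousOn.aestronglyMeasurable ?_ measurableSet_Ioc)
    exact (phi2_cont hH0).mono (fun x hx => hx.1)
  · filter_upwards [ae_restrict_mem measurableSet_Ioc] with s hs
    have h1 : (0:ℝ) < s := hs.1
    have h2 : s ≤ b := hs.2
    rw [Real.norm_eq_abs, abs_of_nonneg (by positivity)]
    have : Real.exp s ≤ Real.exp b := Real.exp_le_exp.2 h2
    have hpw : (0:ℝ) ≤ s ^ (2*H - 1) := (Real.rpow_pos_of_pos h1 _).le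
    nlinarith [Real.exp_pos s]

lemma A_eq (hH0 : 0 < H) {t : ℝ} (ht : 0 ≤ t) :
    (∫ s in Set.Ioi t, Real.exp (-s) * s ^ (2*H - 1)) = Real.Gamma (2*H) - P1 H t := by
  have hsplit : (∫ s in Set.Ioi (0:ℝ), Real.exp (-s) * s ^ (2*H - 1)) =
      (∫ s in Set.Ioc 0 t, Real.exp (-s) * s ^ (2*H - 1)) +
      (∫ s in Set.Ioi t, Real.exp (-s) * s ^ (2*H - 1)) := by
    rw [← setIntegral_union (Ioc_disjoint_Ioi le_rfl) measurableSet_Ioi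
      ((phi1_int hH0).mono_set Ioc_subset_Ioi_self)
      ((phi1_int hH0).mono_set (Ioi_subset_Ioi ht)), Ioc_union_Ioi_eq_Ioi ht]
  have hGamma : Real.Gamma (2*H) = ∫ s in Set.Ioi (0:ℝ), Real.exp (-s) * s ^ (2*H - 1) := by
    have := Real.Gamma_eq_integral (s := 2*H) (by linarith)
    simpa using this
  have hP1 : P1 H t = ∫ s in Set.Ioc 0 t, Real.exp (-s) * s ^ (2*H - 1) := by
    rw [P1, intervalIntegral.integral_of_le ht]
  rw [hGamma, hsplit, hP1]; ring

lemma P1_hasDeriv (hH0 : 0 < H) {t : ℝ} (ht : 0 < t) :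
    HasDerivAt (P1 H) (Real.exp (-t) * t ^ (2*H - 1)) t := by
  refine intervalIntegral.integral_hasDerivAt_right (phi1_ii hH0 ht.le) ?_ ?_
  · exact (phi1_cont hH0).stronglyMeasurableAtFilter isOpen_Ioi _ ht
  · exact ((phi1_cont hH0) t ht).continuousAt (Ioi_mem_nhds ht)

lemma P2_hasDeriv (hH0 : 0 < H) {t : ℝ} (ht : 0 < t) :
    HasDerivAt (P2 H) (Real.exp t * t ^ (2*H - 1)) t := by
  refine intervalIntegral.integral_hasDerivAt_right (phi2_ii hH0 ht.le) ?_ ?_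
  · exact (phi2_cont hH0).stronglyMeasurableAtFilter isOpen_Ioi _ ht
  · exact ((phi2_cont hH0) t ht).continuousAt (Ioi_mem_nhds ht)

lemma exp_neg_hasDeriv (t : ℝ) :
    HasDerivAt (fun u : ℝ => Real.exp (-u)) (-Real.exp (-t)) t := by
  exact ((Real.hasDerivAt_exp (-t)).comp t (hasDerivAt_neg t)).congr_deriv (by simp)

lemma GG_hasDeriv (hH0 : 0 < H) {t : ℝ} (ht : 0 < t) :
    HasDerivAt (GG H) (psiH H t) t := by
  have hexp : HasDerivAt Real.exp (Real.exp t) t := Real.hasDerivAt_exp t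
  have d1 : HasDerivAt (fun u : ℝ => Real.exp u * (Real.Gamma (2*H) - P1 H u))
      (Real.exp t * (Real.Gamma (2*H) - P1 H t) +
        Real.exp t * (0 - Real.exp (-t) * t ^ (2*H - 1))) t :=
    hexp.mul ((hasDerivAt_const t _).sub (P1_hasDeriv hH0 ht))
  have d2 : HasDerivAt (fun u : ℝ => Real.exp (-u) * P2 H u)
      ((-Real.exp (-t)) * P2 H t + Real.exp (-t) * (Real.exp t * t ^ (2*H - 1))) t :=
    (exp_neg_hasDeriv t).mul (P2_hasDeriv hH0 ht)
  have key := (((exp_neg_hasDeriv t).const_mul (Real.Gamma (2*H+1))).neg).add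
    ((d1.add d2).const_mul (2*H))
  have hfun : HasDerivAt (GG H)
      (-(Real.Gamma (2*H+1) * -Real.exp (-t)) +
        2*H*((Real.exp t * (Real.Gamma (2*H) - P1 H t) +
          Real.exp t * (0 - Real.exp (-t) * t ^ (2*H - 1))) +
          ((-Real.exp (-t)) * P2 H t + Real.exp (-t) * (Real.exp t * t ^ (2*H - 1))))) t := key
  convert hfun using 1
  rw [psiH, A_eq hH0 ht.le]
  have he : Real.exp t * Real.exp (-t) = 1 := by
    rw [← Real.exp_add]; simp
  have h2 : P2 H t = ∫ s in (0:ℝ)..t, Real.exp s * s ^ (2*H - 1) := rfl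
  rw [← h2]
  ring

lemma GG_zero (hH0 : 0 < H) : GG H 0 = 0 := by
  have h1 : P1 H 0 = 0 := intervalIntegral.integral_same
  have h2 : P2 H 0 = 0 := intervalIntegral.integral_same
  have h3 : Real.Gamma (2*H + 1) = 2*H * Real.Gamma (2*H) :=
    Real.Gamma_add_one (by positivity)
  rw [GG, h1, h2, h3]
  simp

lemma GG_contWithinAt (hH0 : 0 < H) : ContinuousWithinAt (GG H) (Ici 0) 0 := by
  have hmem : Icc (0:ℝ) 1 ∈ 𝓝[Ici (0:ℝ)] (0:ℝ) := by
    rw [← Set.Ici_inter_Iic]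
    exact Filter.inter_mem self_mem_nhdsWithin
      (mem_nhdsWithin_of_mem_nhds (Iic_mem_nhds one_pos))
  have h0mem : (0:ℝ) ∈ Set.uIcc (0:ℝ) 1 := by
    rw [Set.uIcc_of_le zero_le_one]; exact ⟨le_refl _, zero_le_one⟩
  have hP1 : ContinuousWithinAt (P1 H) (Ici 0) 0 := by
    have := intervalIntegral.continuousOn_primitive_interval'
      (phi1_ii hH0 zero_le_one) h0mem
    exact ((this 0 h0mem).mono_of_mem_nhdsWithin (by rwa [Set.uIcc_of_le zero_le_one]))
  have hP2 : ContinuousWithinAt (P2 H) (Ici 0) 0 := by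
    have := intervalIntegral.continuousOn_primitive_interval'
      (phi2_ii hH0 zero_le_one) h0mem
    exact ((this 0 h0mem).mono_of_mem_nhdsWithin (by rwa [Set.uIcc_of_le zero_le_one]))
  have hexp : Continuous (fun t : ℝ => Real.exp (-t)) :=
    Real.continuous_exp.comp continuous_neg
  exact ((hexp.continuousWithinAt.const_mul _).neg).add
    (((Real.continuous_exp.continuousWithinAt.mul
      (continuousWithinAt_const.sub hP1)).add
      (hexp.continuousWithinAt.mul hP2)).const_mul _)

lemma expneg_intOn (t : ℝ) : IntegrableOn (fun s : ℝ => Real.exp (-s)) (Ioi t) := by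
  have := exp_neg_integrableOn_Ioi t (b := 1) one_pos
  simpa using this

lemma ENS_deriv (t s : ℝ) :
    HasDerivAt (fun s : ℝ => -(Real.exp (-s) * (s - t + 1))) (Real.exp (-s) * (s - t)) s := by
  have h := ((exp_neg_hasDeriv s).mul (((hasDerivAt_id s).sub_const t).add_const 1)).neg
  exact h.congr_deriv (by simp only [id_eq]; ring)

lemma ENS_tendsto (t : ℝ) :
    Tendsto (fun s : ℝ => -(Real.exp (-s) * (s - t + 1))) atTop (𝓝 0) := by
  have h1 : Tendsto (fun s : ℝ => s ^ 1 * Real.exp (-s)) atTop (𝓝 0) :=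
    tendsto_pow_mul_exp_neg_atTop_nhds_zero 1
  have h2 : Tendsto (fun s : ℝ => (1 - t) * Real.exp (-s)) atTop (𝓝 ((1-t) * 0)) :=
    (tendsto_exp_neg_atTop_nhds_zero).const_mul _
  have h3 := ((h1.add h2).neg)
  have : -((0:ℝ) + (1-t) * 0) = 0 := by ring
  rw [this] at h3
  refine h3.congr (fun s => ?_)
  ring

lemma exp_mul_sub_intOn (t : ℝ) :
    IntegrableOn (fun s : ℝ => Real.exp (-s) * (s - t)) (Ioi t) :=
  integrableOn_Ioi_deriv_of_nonneg (ENS_deriv t t).continuousAt.continuousWithinAt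
    (fun s _ => ENS_deriv t s)
    (fun s hs => mul_nonneg (Real.exp_pos _).le (by simpa using (le_of_lt hs)))
    (ENS_tendsto t)

lemma exp_mul_sub_integral (t : ℝ) :
    (∫ s in Ioi t, Real.exp (-s) * (s - t)) = Real.exp (-t) := by
  have := integral_Ioi_of_hasDerivAt_of_nonneg
    (ENS_deriv t t).continuousAt.continuousWithinAt (fun s _ => ENS_deriv t s)
    (fun s hs => mul_nonneg (Real.exp_pos _).le (by simpa using (le_of_lt hs)))
    (ENS_tendsto t)
  rw [this]; ring_nf

lemma f_bounds (hH0 : 0 < H) (hH1 : H < 1/2) {t : ℝ} (ht : 0 < t) :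
    0 ≤ t ^ (2*H - 1) - Real.exp t * ∫ s in Set.Ioi t, Real.exp (-s) * s ^ (2*H - 1) ∧
    t ^ (2*H - 1) - Real.exp t * (∫ s in Set.Ioi t, Real.exp (-s) * s ^ (2*H - 1)) ≤
      (1 - 2*H) * t ^ (2*H - 2) := by
  have he : Real.exp t * Real.exp (-t) = 1 := by rw [← Real.exp_add]; simp
  have hint1 : IntegrableOn (fun s : ℝ => Real.exp (-s) * t ^ (2*H - 1)) (Ioi t) :=
    (expneg_intOn t).mul_const _
  have hint2 : IntegrableOn (fun s : ℝ => Real.exp (-s) * s ^ (2*H - 1)) (Ioi t) :=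
    (phi1_int hH0).mono_set (Ioi_subset_Ioi ht.le)
  have hconst : (∫ s in Ioi t, Real.exp (-s) * t ^ (2*H - 1)) = Real.exp (-t) * t ^ (2*H-1) := by
    rw [integral_mul_const, integral_exp_neg_Ioi]
  have hdiff : t ^ (2*H - 1) - Real.exp t * (∫ s in Set.Ioi t, Real.exp (-s) * s ^ (2*H - 1)) =
      Real.exp t * ∫ s in Ioi t,
        (Real.exp (-s) * t ^ (2*H - 1) - Real.exp (-s) * s ^ (2*H - 1)) := by
    rw [integral_sub hint1 hint2, hconst, mul_sub, ← mul_assoc, he, one_mul]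
  constructor
  · rw [hdiff]
    refine mul_nonneg (Real.exp_pos t).le (setIntegral_nonneg measurableSet_Ioi fun s hs => ?_)
    have hs' : t ≤ s := le_of_lt hs
    have : s ^ (2*H - 1) ≤ t ^ (2*H - 1) :=
      Real.rpow_le_rpow_of_nonpos ht hs' (by linarith)
    nlinarith [Real.exp_pos (-s)]
  · rw [hdiff]
    have hmono : (∫ s in Ioi t,
        (Real.exp (-s) * t ^ (2*H - 1) - Real.exp (-s) * s ^ (2*H - 1))) ≤
        ∫ s in Ioi t, ((1 - 2*H) * t ^ (2*H - 2)) * (Real.exp (-s) * (s - t)) := by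
      refine setIntegral_mono_on (hint1.sub hint2)
        ((exp_mul_sub_intOn t).const_mul _) measurableSet_Ioi (fun s hs => ?_)
      have hs' : t ≤ s := le_of_lt hs
      have htan := tangent (p := 2*H-1) (by linarith) (by linarith) ht hs'
      have e1 : -(2*H-1) = 1 - 2*H := by ring
      have e2 : (2*H-1) - 1 = 2*H - 2 := by ring
      rw [e1, e2] at htan
      have hexps : (0:ℝ) ≤ Real.exp (-s) := (Real.exp_pos _).le
      calc Real.exp (-s) * t ^ (2*H - 1) - Real.exp (-s) * s ^ (2*H - 1)
          = Real.exp (-s) * (t ^ (2*H - 1) - s ^ (2*H - 1)) := by ring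
        _ ≤ Real.exp (-s) * ((1 - 2*H) * t ^ (2*H - 2) * (s - t)) :=
            mul_le_mul_of_nonneg_left htan hexps
        _ = ((1 - 2*H) * t ^ (2*H - 2)) * (Real.exp (-s) * (s - t)) := by ring
    have hval : (∫ s in Ioi t, ((1 - 2*H) * t ^ (2*H - 2)) * (Real.exp (-s) * (s - t))) =
        ((1 - 2*H) * t ^ (2*H - 2)) * Real.exp (-t) := by
      rw [integral_const_mul, exp_mul_sub_integral]
    calc Real.exp t * (∫ s in Ioi t,
          (Real.exp (-s) * t ^ (2*H - 1) - Real.exp (-s) * s ^ (2*H - 1)))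
        ≤ Real.exp t * (((1 - 2*H) * t ^ (2*H - 2)) * Real.exp (-t)) := by
          refine mul_le_mul_of_nonneg_left ?_ (Real.exp_pos t).le
          rw [← hval]; exact hmono
      _ = (1 - 2*H) * t ^ (2*H - 2) := by
          linear_combination ((1 - 2*H) * t ^ (2*H - 2)) * he

lemma f_nonneg (hH0 : 0 < H) {t : ℝ} (ht : 0 < t) :
    0 ≤ Real.exp t * ∫ s in Set.Ioi t, Real.exp (-s) * s ^ (2*H - 1) := by
  refine mul_nonneg (Real.exp_pos t).le (setIntegral_nonneg measurableSet_Ioi fun s hs => ?_)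
  have : (0:ℝ) < s := lt_trans ht hs
  positivity

lemma f_tendsto (hH0 : 0 < H) (hH1 : H < 1/2) :
    Tendsto (fun t : ℝ => Real.exp t * ∫ s in Set.Ioi t, Real.exp (-s) * s ^ (2*H - 1))
      atTop (𝓝 0) := by
  have hg : Tendsto (fun t : ℝ => t ^ (2*H - 1)) atTop (𝓝 0) := by
    have := tendsto_rpow_neg_atTop (y := 1 - 2*H) (by linarith)
    refine this.congr (fun t => ?_)
    norm_num
  refine squeeze_zero' ?_ ?_ hg
  · filter_upwards [Ioi_mem_atTop (0:ℝ)] with t ht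
    exact f_nonneg hH0 ht
  · filter_upwards [Ioi_mem_atTop (0:ℝ)] with t ht
    linarith [(f_bounds hH0 hH1 ht).1]

lemma exp_shift_fun (t : ℝ) : (fun s : ℝ => Real.exp (s - t) * s ^ (2*H - 1)) =
    (fun s : ℝ => Real.exp (-t) * (Real.exp s * s ^ (2*H - 1))) := by
  funext s
  rw [sub_eq_add_neg, add_comm, Real.exp_add]
  ring

/-- substitution: `e^{-t} ∫₀^t e^s s^p ds = ∫₀^t e^{-u} (t-u)^p du`. -/
lemma g_eq (t : ℝ) :
    Real.exp (-t) * (∫ s in (0:ℝ)..t, Real.exp s * s ^ (2*H - 1)) =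
      ∫ u in (0:ℝ)..t, Real.exp (-u) * (t - u) ^ (2*H - 1) := by
  have h1 : Real.exp (-t) * (∫ s in (0:ℝ)..t, Real.exp s * s ^ (2*H - 1)) =
      ∫ s in (0:ℝ)..t, Real.exp (s - t) * s ^ (2*H - 1) := by
    rw [exp_shift_fun, intervalIntegral.integral_const_mul]
  rw [h1]
  have h2 := intervalIntegral.integral_comp_sub_left
    (f := fun s : ℝ => Real.exp (s - t) * s ^ (2*H - 1)) (a := 0) (b := t) t
  simp only [sub_self, sub_zero] at h2
  rw [← h2]
  refine intervalIntegral.integral_congr (fun u hu => ?_)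
  rw [show t - u - t = -u from by ring]

lemma J_ii (hH0 : 0 < H) {t : ℝ} (ht : 0 ≤ t) :
    IntervalIntegrable (fun u : ℝ => Real.exp (-u) * (t - u) ^ (2*H - 1)) volume 0 t := by
  have base : IntervalIntegrable (fun s : ℝ => Real.exp (s - t) * s ^ (2*H - 1)) volume 0 t := by
    rw [exp_shift_fun]
    exact (phi2_ii hH0 ht).const_mul _
  have h2 := base.comp_sub_left t
  simp only [sub_self, sub_zero] at h2
  have h3 : (fun x : ℝ => Real.exp (t - x - t) * (t - x) ^ (2*H - 1)) =
      (fun u : ℝ => Real.exp (-u) * (t - u) ^ (2*H - 1)) := by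
    funext x; rw [show t - x - t = -x from by ring]
  rw [h3] at h2
  exact h2.symm

lemma ue_integral_le {x : ℝ} (hx : 0 ≤ x) : (∫ u in (0:ℝ)..x, Real.exp (-u) * u) ≤ 1 := by
  have hFTC := intervalIntegral.integral_eq_sub_of_hasDerivAt
    (f := fun s : ℝ => -(Real.exp (-s) * (s - 0 + 1)))
    (fun u _ => ENS_deriv 0 u)
    (Continuous.intervalIntegrable (by continuity) 0 x)
  have h0 : (∫ u in (0:ℝ)..x, Real.exp (-u) * (u - 0)) = ∫ u in (0:ℝ)..x, Real.exp (-u) * u := by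
    refine intervalIntegral.integral_congr (fun u hu => ?_); simp
  rw [h0] at hFTC
  rw [hFTC]
  have h1 : (0:ℝ) ≤ Real.exp (-x) * (x - 0 + 1) :=
    mul_nonneg (Real.exp_pos _).le (by linarith)
  simp only [neg_zero, Real.exp_zero, sub_zero, zero_sub, zero_add, one_mul]
  nlinarith

lemma exp_neg_interval (x : ℝ) : (∫ u in (0:ℝ)..x, Real.exp (-u)) = 1 - Real.exp (-x) := by
  have hFTC := intervalIntegral.integral_eq_sub_of_hasDerivAt
    (f := fun s : ℝ => -Real.exp (-s))
    (fun u _ => by have h := (exp_neg_hasDeriv u).neg; simp only [neg_neg] at h; exact h)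
    (Continuous.intervalIntegrable (by continuity) 0 x)
  rw [hFTC]; simp; ring

lemma rpow_tail_integral (hH0 : 0 < H) {t : ℝ} (ht : 0 < t) :
    (∫ u in (t/2)..t, (t - u) ^ (2*H - 1)) = (t/2) ^ (2*H) / (2*H) := by
  have h2 := intervalIntegral.integral_comp_sub_left
    (f := fun s : ℝ => s ^ (2*H - 1)) (a := t/2) (b := t) t
  simp only [sub_self] at h2
  rw [h2]
  rw [integral_rpow (Or.inl (by linarith))]
  rw [Real.zero_rpow (by linarith : (0:ℝ) < 2*H - 1 + 1).ne']
  rw [show 2*H - 1 + 1 = 2*H from by ring, show t - t/2 = t/2 from by ring]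
  ring

/-- Key bounds for `D t = J t - (1-e^{-t}) t^p`. -/
lemma g_bounds (hH0 : 0 < H) (hH1 : H < 1/2) {t : ℝ} (ht : 0 < t) :
    0 ≤ (∫ u in (0:ℝ)..t, Real.exp (-u) * (t - u) ^ (2*H - 1)) -
        (1 - Real.exp (-t)) * t ^ (2*H - 1) ∧
    (∫ u in (0:ℝ)..t, Real.exp (-u) * (t - u) ^ (2*H - 1)) -
        (1 - Real.exp (-t)) * t ^ (2*H - 1) ≤
      (1 - 2*H) * (t/2) ^ (2*H - 2) + Real.exp (-(t/2)) * ((t/2) ^ (2*H) / (2*H)) := by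
  have hintJ := J_ii hH0 ht.le
  have hintC : IntervalIntegrable (fun u : ℝ => Real.exp (-u) * t ^ (2*H - 1)) volume 0 t :=
    Continuous.intervalIntegrable (by continuity) 0 t
  have hconst : (1 - Real.exp (-t)) * t ^ (2*H - 1) =
      ∫ u in (0:ℝ)..t, Real.exp (-u) * t ^ (2*H - 1) := by
    rw [intervalIntegral.integral_mul_const, exp_neg_interval]
  have hD : (∫ u in (0:ℝ)..t, Real.exp (-u) * (t - u) ^ (2*H - 1)) -
      (1 - Real.exp (-t)) * t ^ (2*H - 1) =
      ∫ u in (0:ℝ)..t, (Real.exp (-u) * (t - u) ^ (2*H - 1) -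
        Real.exp (-u) * t ^ (2*H - 1)) := by
    rw [hconst, ← intervalIntegral.integral_sub hintJ hintC]
  have hptwise : ∀ u ∈ Ioo (0:ℝ) t,
      0 ≤ Real.exp (-u) * (t - u) ^ (2*H - 1) - Real.exp (-u) * t ^ (2*H - 1) := by
    intro u hu
    have h1 : (0:ℝ) < t - u := by linarith [hu.2]
    have h2 : t ^ (2*H - 1) ≤ (t - u) ^ (2*H - 1) :=
      Real.rpow_le_rpow_of_nonpos h1 (by linarith [hu.1]) (by linarith)
    nlinarith [Real.exp_pos (-u)]
  constructor
  · rw [hD, intervalIntegral.integral_of_le ht.le, MeasureTheory.integral_Ioc_eq_integral_Ioo]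
    exact setIntegral_nonneg measurableSet_Ioo hptwise
  · rw [hD]
    have hadj : (∫ u in (0:ℝ)..t, (Real.exp (-u) * (t - u) ^ (2*H - 1) -
        Real.exp (-u) * t ^ (2*H - 1))) =
        (∫ u in (0:ℝ)..(t/2), (Real.exp (-u) * (t - u) ^ (2*H - 1) -
          Real.exp (-u) * t ^ (2*H - 1))) +
        (∫ u in (t/2)..t, (Real.exp (-u) * (t - u) ^ (2*H - 1) -
          Real.exp (-u) * t ^ (2*H - 1))) := by
    -- adjacent intervals
      refine (intervalIntegral.integral_add_adjacent_intervals ?_ ?_).symm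
      · exact (hintJ.sub hintC).mono_set
          (by rw [Set.uIcc_of_le (by linarith : (0:ℝ) ≤ t/2), Set.uIcc_of_le ht.le]
              exact Icc_subset_Icc le_rfl (by linarith))
      · exact (hintJ.sub hintC).mono_set
          (by rw [Set.uIcc_of_le (by linarith : t/2 ≤ t), Set.uIcc_of_le ht.le]
              exact Icc_subset_Icc (by linarith) le_rfl)
    rw [hadj]
    have hpiece1 : (∫ u in (0:ℝ)..(t/2), (Real.exp (-u) * (t - u) ^ (2*H - 1) -
        Real.exp (-u) * t ^ (2*H - 1))) ≤ (1 - 2*H) * (t/2) ^ (2*H - 2) := by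
      have hmono : (∫ u in (0:ℝ)..(t/2), (Real.exp (-u) * (t - u) ^ (2*H - 1) -
          Real.exp (-u) * t ^ (2*H - 1))) ≤
          ∫ u in (0:ℝ)..(t/2), ((1 - 2*H) * (t/2) ^ (2*H - 2)) * (Real.exp (-u) * u) := by
        refine intervalIntegral.integral_mono_on (by linarith)
          ((hintJ.sub hintC).mono_set
            (by rw [Set.uIcc_of_le (by linarith : (0:ℝ) ≤ t/2), Set.uIcc_of_le ht.le]
                exact Icc_subset_Icc le_rfl (by linarith)))
          (Continuous.intervalIntegrable (by continuity) 0 (t/2)) (fun u hu => ?_)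
        have hu0 : 0 ≤ u := hu.1
        have hut : u ≤ t/2 := hu.2
        have h1 : (0:ℝ) < t - u := by linarith
        have htan := tangent (p := 2*H - 1) (by linarith) (by linarith) h1 (by linarith : t - u ≤ t)
        have e1 : -(2*H - 1) = 1 - 2*H := by ring
        have e2 : (2*H - 1) - 1 = 2*H - 2 := by ring
        have e3 : t - (t - u) = u := by ring
        rw [e1, e2, e3] at htan
        -- (t-u)^(2H-2) ≤ (t/2)^(2H-2)
        have h4 : (t - u) ^ (2*H - 2) ≤ (t/2) ^ (2*H - 2) :=
          Real.rpow_le_rpow_of_nonpos (by linarith) (by linarith) (by linarith)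
        have hexpu : (0:ℝ) ≤ Real.exp (-u) := (Real.exp_pos _).le
        have h5 : (t - u) ^ (2*H - 1) - t ^ (2*H - 1) ≤ (1 - 2*H) * (t/2) ^ (2*H - 2) * u := by
          calc (t - u) ^ (2*H - 1) - t ^ (2*H - 1) ≤ (1 - 2*H) * (t - u) ^ (2*H - 2) * u := htan
            _ ≤ (1 - 2*H) * (t/2) ^ (2*H - 2) * u := by
                have := mul_le_mul_of_nonneg_right
                  (mul_le_mul_of_nonneg_left h4 (by linarith : (0:ℝ) ≤ 1 - 2*H)) hu0
                linarith
        calc Real.exp (-u) * (t - u) ^ (2*H - 1) - Real.exp (-u) * t ^ (2*H - 1)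
            = Real.exp (-u) * ((t - u) ^ (2*H - 1) - t ^ (2*H - 1)) := by ring
          _ ≤ Real.exp (-u) * ((1 - 2*H) * (t/2) ^ (2*H - 2) * u) :=
              mul_le_mul_of_nonneg_left h5 hexpu
          _ = ((1 - 2*H) * (t/2) ^ (2*H - 2)) * (Real.exp (-u) * u) := by ring
      refine hmono.trans ?_
      rw [intervalIntegral.integral_const_mul]
      have hue := ue_integral_le (by linarith : (0:ℝ) ≤ t/2)
      have hc : (0:ℝ) ≤ (1 - 2*H) * (t/2) ^ (2*H - 2) := by
        have : (0:ℝ) ≤ (t/2) ^ (2*H - 2) := Real.rpow_nonneg (by linarith) _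
        nlinarith
      nlinarith
    have hpiece2 : (∫ u in (t/2)..t, (Real.exp (-u) * (t - u) ^ (2*H - 1) -
        Real.exp (-u) * t ^ (2*H - 1))) ≤
        Real.exp (-(t/2)) * ((t/2) ^ (2*H) / (2*H)) := by
      have hii2 : IntervalIntegrable (fun u : ℝ => Real.exp (-(t/2)) * (t - u) ^ (2*H - 1))
          volume (t/2) t := by
        have := (J_ii (t := t) hH0 ht.le)
        have base : IntervalIntegrable (fun u : ℝ => (t - u) ^ (2*H - 1)) volume (t/2) t := by
          have h2 := (intervalIntegral.intervalIntegrable_rpow'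
            (a := 0) (b := t/2) (r := 2*H - 1) (by linarith)).comp_sub_left t
          simp only [sub_self, sub_zero] at h2
          have h3 : t - t/2 = t/2 := by ring
          rw [h3] at h2
          exact h2.symm
        exact base.const_mul _
      have hmono : (∫ u in (t/2)..t, (Real.exp (-u) * (t - u) ^ (2*H - 1) -
          Real.exp (-u) * t ^ (2*H - 1))) ≤
          ∫ u in (t/2)..t, Real.exp (-(t/2)) * (t - u) ^ (2*H - 1) := by
        refine intervalIntegral.integral_mono_on (by linarith)
          ((hintJ.sub hintC).mono_set
            (by rw [Set.uIcc_of_le (by linarith : t/2 ≤ t), Set.uIcc_of_le ht.le]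
                exact Icc_subset_Icc (by linarith) le_rfl))
          hii2 (fun u hu => ?_)
        have h1 : 0 ≤ t - u := by linarith [hu.2]
        have h2 : (0:ℝ) ≤ (t - u) ^ (2*H - 1) := Real.rpow_nonneg h1 _
        have h3 : (0:ℝ) ≤ t ^ (2*H - 1) := Real.rpow_nonneg ht.le _
        have h4 : Real.exp (-u) ≤ Real.exp (-(t/2)) := Real.exp_le_exp.2 (by linarith [hu.1])
        have h5 : (0:ℝ) ≤ Real.exp (-u) := (Real.exp_pos _).le
        nlinarith
      refine hmono.trans ?_
      rw [intervalIntegral.integral_const_mul, rpow_tail_integral hH0 ht]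
    linarith
lemma aux_rpow_le (hH0 : 0 < H) (hH1 : H < 1/2) {x : ℝ} (hx : 0 ≤ x) :
    x ^ (2*H) ≤ 1 + x := by
  rcases le_or_gt x 1 with h | h
  · have := Real.rpow_le_one hx h (by linarith : (0:ℝ) ≤ 2*H)
    linarith
  · have h1 : x ^ (2*H) ≤ x ^ (1:ℝ) :=
      Real.rpow_le_rpow_of_exponent_le h.le (by linarith)
    rw [Real.rpow_one] at h1
    linarith

lemma aux_mul_exp (x : ℝ) (hx : 0 ≤ x) :
    x * Real.exp (-x) ≤ 2 * Real.exp (-(x/2)) := by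
  have h1 : x/2 ≤ Real.exp (x/2) := by
    have := Real.add_one_le_exp (x/2)
    linarith
  have h2 : x * Real.exp (-x) ≤ 2 * Real.exp (x/2) * Real.exp (-x) := by
    have := mul_le_mul_of_nonneg_right (by linarith : x ≤ 2 * Real.exp (x/2))
      (Real.exp_pos (-x)).le
    linarith
  have h3 : Real.exp (x/2) * Real.exp (-x) = Real.exp (-(x/2)) := by
    rw [← Real.exp_add]; congr 1; ring
  calc x * Real.exp (-x) ≤ 2 * Real.exp (x/2) * Real.exp (-x) := h2
    _ = 2 * Real.exp (-(x/2)) := by rw [mul_assoc, h3]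

lemma half_rpow {t : ℝ} (ht : 0 ≤ t) (q : ℝ) :
    (t/2) ^ q = t ^ q * (2:ℝ) ^ (-q) := by
  rw [div_eq_mul_inv, Real.mul_rpow ht (by norm_num : (0:ℝ) ≤ 2⁻¹),
    Real.inv_rpow (by norm_num : (0:ℝ) ≤ 2), ← Real.rpow_neg (by norm_num : (0:ℝ) ≤ 2)]

lemma psiH_bound (hH0 : 0 < H) (hH1 : H < 1/2) {t : ℝ} (ht : 1 < t) :
    ‖psiH H t‖ ≤ (2*H*Real.Gamma (2*H) + 2*H) * Real.exp (-t)
      + (2*H*(1-2*H)*(1 + (2:ℝ)^(2-2*H))) * t^(2*H-2)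
      + Real.exp (-(t/2)) + 2*Real.exp (-(t/4)) := by
  have ht0 : (0:ℝ) < t := by linarith
  have hfb := f_bounds hH0 hH1 ht0
  have hgb := g_bounds hH0 hH1 ht0
  have hgeq := g_eq (H := H) t
  have hGamma : Real.Gamma (2*H + 1) = 2*H * Real.Gamma (2*H) :=
    Real.Gamma_add_one (by positivity)
  have hGpos : 0 < Real.Gamma (2*H) := Real.Gamma_pos_of_pos (by linarith)
  set F := Real.exp t * ∫ s in Set.Ioi t, Real.exp (-s) * s ^ (2*H - 1) with hF
  set J := ∫ u in (0:ℝ)..t, Real.exp (-u) * (t - u) ^ (2*H - 1) with hJ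
  have hpsi : psiH H t = 2*H*Real.Gamma (2*H) * Real.exp (-t) + 2*H*(F - J) := by
    rw [psiH, hGamma, ← hgeq]
  set X := t ^ (2*H - 1) - F with hX
  set Y := J - (1 - Real.exp (-t)) * t ^ (2*H - 1) with hY
  have hpsi2 : psiH H t = 2*H*Real.Gamma (2*H) * Real.exp (-t)
      + 2*H*(Real.exp (-t) * t ^ (2*H - 1) - X - Y) := by
    rw [hpsi, hX, hY]; ring
  clear_value F J X Y
  have hX0 : 0 ≤ X := hfb.1
  have hX1 : X ≤ (1 - 2*H) * t ^ (2*H - 2) := hfb.2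
  have hY0 : 0 ≤ Y := hgb.1
  have hY1 : Y ≤ (1 - 2*H) * (t/2) ^ (2*H - 2) + Real.exp (-(t/2)) * ((t/2) ^ (2*H) / (2*H)) :=
    hgb.2
  -- bound the individual pieces
  have hexpt : (0:ℝ) < Real.exp (-t) := Real.exp_pos _
  have htp : t ^ (2*H - 1) ≤ 1 := Real.rpow_le_one_of_one_le_of_nonpos ht.le (by linarith)
  have htpn : 0 ≤ t ^ (2*H - 1) := Real.rpow_nonneg ht0.le _
  have hhalf : (t/2) ^ (2*H-2) = t^(2*H-2) * (2:ℝ)^(2-2*H) := by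
    rw [half_rpow ht0.le, show -(2*H-2) = 2-2*H from by ring]
  have hC4 : Real.exp (-(t/2)) * ((t/2) ^ (2*H) / (2*H)) * (2*H) =
      Real.exp (-(t/2)) * (t/2) ^ (2*H) := by
    field_simp
  have hC4b : Real.exp (-(t/2)) * (t/2) ^ (2*H) ≤
      Real.exp (-(t/2)) + 2*Real.exp (-(t/4)) := by
    have h1 : (t/2) ^ (2*H) ≤ 1 + t/2 := aux_rpow_le hH0 hH1 (by linarith)
    have h2 : Real.exp (-(t/2)) * (t/2) ^ (2*H) ≤ Real.exp (-(t/2)) * (1 + t/2) :=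
      mul_le_mul_of_nonneg_left h1 (Real.exp_pos _).le
    have h3 : (t/2) * Real.exp (-(t/2)) ≤ 2 * Real.exp (-(t/4)) := by
      have := aux_mul_exp (t/2) (by linarith)
      rw [show t/2/2 = t/4 from by ring] at this
      exact this
    nlinarith [Real.exp_pos (-(t/2))]
  have htpow2 : 0 ≤ t^(2*H-2) := Real.rpow_nonneg ht0.le _
  have h2H : (0:ℝ) < 2*H := by linarith
  have h12H : (0:ℝ) ≤ 1 - 2*H := by linarith
  have hXb : 2*H*X ≤ 2*H*(1-2*H) * t^(2*H-2) := by
    have h1 := mul_le_mul_of_nonneg_left hX1 h2H.le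
    linarith
  have hYb : 2*H*Y ≤ 2*H*(1-2*H)*(t/2)^(2*H-2) + Real.exp (-(t/2)) * (t/2)^(2*H) := by
    have h1 := mul_le_mul_of_nonneg_left hY1 h2H.le
    have h2 : 2*H * ((1-2*H)*(t/2)^(2*H-2) + Real.exp (-(t/2)) * ((t/2)^(2*H)/(2*H))) =
        2*H*(1-2*H)*(t/2)^(2*H-2) + Real.exp (-(t/2)) * (t/2)^(2*H) := by
      field_simp
    linarith
  have hYb2 : 2*H*Y ≤ 2*H*(1-2*H)*(t^(2*H-2) * (2:ℝ)^(2-2*H))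
      + (Real.exp (-(t/2)) + 2*Real.exp (-(t/4))) := by
    rw [hhalf] at hYb
    linarith [hC4b]
  have hterm : 2*H*(Real.exp (-t) * t ^ (2*H - 1)) ≤ 2*H*Real.exp (-t) := by
    have h1 : Real.exp (-t) * t ^ (2*H - 1) ≤ Real.exp (-t) * 1 :=
      mul_le_mul_of_nonneg_left htp hexpt.le
    have := mul_le_mul_of_nonneg_left h1 h2H.le
    linarith
  have h2pow : (0:ℝ) ≤ (2:ℝ)^(2-2*H) := Real.rpow_nonneg (by norm_num) _
  have hrpos : 0 ≤ (2*H*(1-2*H)*(1 + (2:ℝ)^(2-2*H))) * t^(2*H-2) :=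
    mul_nonneg (mul_nonneg (mul_nonneg h2H.le h12H) (by linarith)) htpow2
  have hXpos : 0 ≤ 2*H*X := mul_nonneg h2H.le hX0
  have hYpos : 0 ≤ 2*H*Y := mul_nonneg h2H.le hY0
  have hG0 : 0 ≤ 2*H*Real.Gamma (2*H)*Real.exp (-t) :=
    mul_nonneg (mul_nonneg h2H.le hGpos.le) hexpt.le
  have hmix : 0 ≤ 2*H*(Real.exp (-t) * t ^ (2*H-1)) :=
    mul_nonneg h2H.le (mul_nonneg hexpt.le htpn)
  have he2 : 0 ≤ 2*H*Real.exp (-t) := mul_nonneg h2H.le hexpt.le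
  rw [Real.norm_eq_abs, abs_le]
  constructor
  · rw [hpsi2]
    have hsum : 2*H*X + 2*H*Y ≤
        2*H*(1-2*H)*(1 + (2:ℝ)^(2-2*H))*t^(2*H-2)
        + (Real.exp (-(t/2)) + 2*Real.exp (-(t/4))) := by
      have expand : 2*H*(1-2*H)*(1 + (2:ℝ)^(2-2*H))*t^(2*H-2) =
          2*H*(1-2*H)*t^(2*H-2) + 2*H*(1-2*H)*(t^(2*H-2) * (2:ℝ)^(2-2*H)) := by ring
      rw [expand]
      linarith [hXb, hYb2]
    linarith [hsum, hG0, hmix, he2]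
  · rw [hpsi2]
    linarith [hterm, hXpos, hYpos, hrpos, hG0, he2,
      Real.exp_pos (-(t/2)), Real.exp_pos (-(t/4))]

lemma g_tendsto (hH0 : 0 < H) (hH1 : H < 1/2) :
    Tendsto (fun t : ℝ => Real.exp (-t) * P2 H t) atTop (𝓝 0) := by
  have hdiv : Tendsto (fun t : ℝ => t/2) atTop atTop :=
    tendsto_id.atTop_div_const two_pos
  have u1 : Tendsto (fun t : ℝ => (t/2) ^ (2*H - 2)) atTop (𝓝 0) := by
    have h := (tendsto_rpow_neg_atTop (y := 2 - 2*H) (by linarith)).comp hdiv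
    refine h.congr (fun t => ?_)
    show (t/2) ^ (-(2 - 2*H)) = (t/2) ^ (2*H - 2)
    rw [show -(2 - 2*H) = 2*H - 2 from by ring]
  have u2 : Tendsto (fun t : ℝ => Real.exp (-(t/2)) * ((t/2) ^ (2*H) / (2*H)))
      atTop (𝓝 0) := by
    have h := ((tendsto_rpow_mul_exp_neg_mul_atTop_nhds_zero (2*H) 1 one_pos).comp
      hdiv).div_const (2*H)
    rw [zero_div] at h
    refine h.congr (fun t => ?_)
    show (t/2) ^ (2*H) * Real.exp (-1 * (t/2)) / (2*H) = _
    rw [show (-1 : ℝ) * (t/2) = -(t/2) from by ring]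
    ring
  have u3 : Tendsto (fun t : ℝ => t ^ (2*H - 1)) atTop (𝓝 0) := by
    have := tendsto_rpow_neg_atTop (y := 1 - 2*H) (by linarith)
    refine this.congr (fun t => ?_)
    rw [show -(1 - 2*H) = 2*H - 1 from by ring]
  have hU : Tendsto (fun t : ℝ => (1 - 2*H) * (t/2) ^ (2*H - 2)
      + Real.exp (-(t/2)) * ((t/2) ^ (2*H) / (2*H)) + t ^ (2*H - 1)) atTop (𝓝 0) := by
    have := ((u1.const_mul (1 - 2*H)).add u2).add u3
    simpa using this
  refine squeeze_zero' ?_ ?_ hU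
  · filter_upwards [Ioi_mem_atTop (0:ℝ)] with t ht
    have h1 := (g_bounds hH0 hH1 ht).1
    have h2 : Real.exp (-t) ≤ 1 := by
      rw [show (1:ℝ) = Real.exp 0 from (Real.exp_zero).symm]
      exact Real.exp_le_exp.2 (by linarith [mem_Ioi.1 ht])
    have h3 : 0 ≤ t ^ (2*H - 1) := Real.rpow_nonneg (le_of_lt ht) _
    have h4 : 0 ≤ (1 - Real.exp (-t)) * t ^ (2*H - 1) :=
      mul_nonneg (by linarith) h3
    show 0 ≤ Real.exp (-t) * P2 H t
    rw [P2, g_eq]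
    linarith
  · filter_upwards [Ioi_mem_atTop (0:ℝ)] with t ht
    have h1 := (g_bounds hH0 hH1 ht).2
    have h3 : 0 ≤ t ^ (2*H - 1) := Real.rpow_nonneg (le_of_lt ht) _
    have h5 : (1 - Real.exp (-t)) * t ^ (2*H - 1) ≤ t ^ (2*H - 1) := by
      nlinarith [Real.exp_pos (-t)]
    show Real.exp (-t) * P2 H t ≤ _
    rw [P2, g_eq]
    linarith

lemma GG_tendsto (hH0 : 0 < H) (hH1 : H < 1/2) : Tendsto (GG H) atTop (𝓝 0) := by
  have TA : Tendsto (fun t : ℝ => Real.exp t * (Real.Gamma (2*H) - P1 H t)) atTop (𝓝 0) := by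
    refine Tendsto.congr' ?_ (f_tendsto hH0 hH1)
    filter_upwards [Ioi_mem_atTop (0:ℝ)] with t ht
    rw [A_eq hH0 (le_of_lt ht)]
  have TB := g_tendsto hH0 hH1
  have Tsum := ((tendsto_exp_neg_atTop_nhds_zero.const_mul
    (Real.Gamma (2*H + 1))).neg).add ((TA.add TB).const_mul (2*H))
  have : Tendsto (fun t : ℝ => -(Real.Gamma (2*H + 1) * Real.exp (-t)) +
      2*H*(Real.exp t * (Real.Gamma (2*H) - P1 H t) + Real.exp (-t) * P2 H t))
      atTop (𝓝 0) := by simpa using Tsum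
  exact this

lemma P1_contOn (hH0 : 0 < H) : ContinuousOn (P1 H) (Ici 0) := by
  intro x hx
  rcases eq_or_lt_of_le (mem_Ici.1 hx) with h | h
  · subst h
    have h0mem : (0:ℝ) ∈ Set.uIcc (0:ℝ) 1 := by
      rw [Set.uIcc_of_le zero_le_one]; exact ⟨le_refl _, zero_le_one⟩
    have hc := intervalIntegral.continuousOn_primitive_interval'
      (phi1_ii hH0 zero_le_one) h0mem
    refine (hc 0 h0mem).mono_of_mem_nhdsWithin ?_
    rw [Set.uIcc_of_le zero_le_one, ← Set.Ici_inter_Iic]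
    exact Filter.inter_mem self_mem_nhdsWithin
      (mem_nhdsWithin_of_mem_nhds (Iic_mem_nhds one_pos))
  · exact (P1_hasDeriv hH0 h).continuousAt.continuousWithinAt

lemma P2_contOn (hH0 : 0 < H) : ContinuousOn (P2 H) (Ici 0) := by
  intro x hx
  rcases eq_or_lt_of_le (mem_Ici.1 hx) with h | h
  · subst h
    have h0mem : (0:ℝ) ∈ Set.uIcc (0:ℝ) 1 := by
      rw [Set.uIcc_of_le zero_le_one]; exact ⟨le_refl _, zero_le_one⟩
    have hc := intervalIntegral.continuousOn_primitive_interval'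
      (phi2_ii hH0 zero_le_one) h0mem
    refine (hc 0 h0mem).mono_of_mem_nhdsWithin ?_
    rw [Set.uIcc_of_le zero_le_one, ← Set.Ici_inter_Iic]
    exact Filter.inter_mem self_mem_nhdsWithin
      (mem_nhdsWithin_of_mem_nhds (Iic_mem_nhds one_pos))
  · exact (P2_hasDeriv hH0 h).continuousAt.continuousWithinAt

lemma psiH_contOn (hH0 : 0 < H) : ContinuousOn (psiH H) (Ici 0) := by
  have hPSI2 : ContinuousOn (fun t : ℝ => Real.Gamma (2*H + 1) * Real.exp (-t) +
      2*H*(Real.exp t * (Real.Gamma (2*H) - P1 H t) - Real.exp (-t) * P2 H t)) (Ici 0) := by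
    have hexp : Continuous (fun t : ℝ => Real.exp (-t)) :=
      Real.continuous_exp.comp continuous_neg
    exact (continuousOn_const.mul hexp.continuousOn).add
      (continuousOn_const.mul
        ((Real.continuous_exp.continuousOn.mul
          (continuousOn_const.sub (P1_contOn hH0))).sub
          (hexp.continuousOn.mul (P2_contOn hH0))))
  refine hPSI2.congr (fun t ht => ?_)
  rw [psiH, A_eq hH0 (mem_Ici.1 ht)]
  rfl

lemma psiH_integrableOn (hH0 : 0 < H) (hH1 : H < 1/2) :
    IntegrableOn (psiH H) (Ioi 0) := by
  have h1 : IntegrableOn (psiH H) (Ioc 0 1) := by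
    have := ContinuousOn.integrableOn_Icc (μ := volume)
      ((psiH_contOn hH0).mono (Icc_subset_Ici_self : Icc (0:ℝ) 1 ⊆ Ici 0))
    exact this.mono_set Ioc_subset_Icc_self
  have h2 : IntegrableOn (psiH H) (Ioi 1) := by
    have b1 : IntegrableOn (fun t : ℝ =>
        (2*H*Real.Gamma (2*H) + 2*H) * Real.exp (-t)) (Ioi 1) :=
      (expneg_intOn 1).const_mul _
    have b2 : IntegrableOn (fun t : ℝ =>
        (2*H*(1-2*H)*(1 + (2:ℝ)^(2-2*H))) * t^(2*H-2)) (Ioi 1) :=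
      (integrableOn_Ioi_rpow_of_lt (by linarith) one_pos).const_mul _
    have b3 : IntegrableOn (fun t : ℝ => Real.exp (-(t/2))) (Ioi 1) := by
      have := exp_neg_integrableOn_Ioi 1 (by norm_num : (0:ℝ) < 2⁻¹)
      exact this.congr (ae_of_all _ (fun x =>
        show Real.exp (-2⁻¹ * x) = Real.exp (-(x/2)) by
          rw [show (-2⁻¹ : ℝ) * x = -(x/2) from by ring]))
    have b4 : IntegrableOn (fun t : ℝ => 2 * Real.exp (-(t/4))) (Ioi 1) := by
      have h := exp_neg_integrableOn_Ioi 1 (by norm_num : (0:ℝ) < 4⁻¹)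
      have h2 : IntegrableOn (fun t : ℝ => Real.exp (-(t/4))) (Ioi 1) :=
        h.congr (ae_of_all _ (fun x =>
          show Real.exp (-4⁻¹ * x) = Real.exp (-(x/4)) by
            rw [show (-4⁻¹ : ℝ) * x = -(x/4) from by ring]))
      exact h2.const_mul 2
    have bndInt : IntegrableOn (fun t : ℝ =>
        (2*H*Real.Gamma (2*H) + 2*H) * Real.exp (-t)
        + (2*H*(1-2*H)*(1 + (2:ℝ)^(2-2*H))) * t^(2*H-2)
        + Real.exp (-(t/2)) + 2*Real.exp (-(t/4))) (Ioi 1) :=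
      ((b1.add b2).add b3).add b4
    refine Integrable.mono' bndInt ?_ ?_
    · refine ((psiH_contOn hH0).mono (fun x hx => ?_)).aestronglyMeasurable measurableSet_Ioi
      exact le_of_lt (lt_trans one_pos (mem_Ioi.1 hx))
    · filter_upwards [ae_restrict_mem measurableSet_Ioi] with t ht
      exact psiH_bound hH0 hH1 ht
  have hset : Ioi (0:ℝ) = Ioc 0 1 ∪ Ioi 1 := (Ioc_union_Ioi_eq_Ioi zero_le_one).symm
  rw [hset]
  exact h1.union h2


end Stmt15

/-- For every `H ∈ (0, 1/2)`, `∫₀^∞ ψ_H(t) dt = 0`; that is, `I_{1,H} = 0`. -/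
theorem stmt15 (H : ℝ) (hH : H ∈ Set.Ioo (0:ℝ) (1/2)) :
    (∫ t in Set.Ioi (0:ℝ), psiH H t) = 0 := by
  obtain ⟨hH0, hH1⟩ := hH
  have key := integral_Ioi_of_hasDerivAt_of_tendsto (f := Stmt15.GG H) (f' := psiH H)
    (Stmt15.GG_contWithinAt hH0) (fun x hx => Stmt15.GG_hasDeriv hH0 hx)
    (Stmt15.psiH_integrableOn hH0 hH1) (Stmt15.GG_tendsto hH0 hH1)
  rw [key, Stmt15.GG_zero hH0, sub_zero]
end
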